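/- arXiv:1205.6558 — 4 statements merged into one kernel-verified Lean document; each statement's English description precedes it below -/
import Mathlib

section
/- Let G_0, G_1, G_2 be directed graphs (finite vertex sets, countable edge sets) with V_0 ∩ V_1 ∩ V_2 = ∅. Then the reduction operation is associative: G_0 ∷ (G_1 ∷ G_2) = (G_0 ∷ G_1) ∷ G_2, where both are equal to the graph on V_0 Δ V_1 Δ V_2 whose edges are the 3-alternating paths between G_0, G_1, G_2 with endpoints in V_0 Δ V_1 Δ V_2. -/
/-- A directed graph with a finite set of vertex locations. -/
structure DGraph (V : Type) where
  verts : Finset V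
  E : Type
  src : E → V
  tgt : E → V
  src_mem : ∀ e, src e ∈ verts
  tgt_mem : ∀ e, tgt e ∈ verts

namespace DGraph

variable {V : Type} [DecidableEq V]

def psrc (G H : DGraph V) : G.E ⊕ H.E → V := Sum.elim G.src H.src
def ptgt (G H : DGraph V) : G.E ⊕ H.E → V := Sum.elim G.tgt H.tgt

/-- An alternating path in the plugging `G □ H`: a nonempty composable sequence of
colored edges whose consecutive edges have distinct colors. -/
structure AltPath (G H : DGraph V) where
  edges : List (G.E ⊕ H.E)
  ne : edges ≠ []
  chain : edges.Chain' (fun e f => ptgt G H e = psrc G H f ∧ e.isLeft ≠ f.isLeft)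

def AltPath.src {G H : DGraph V} (p : AltPath G H) : V := psrc G H (p.edges.head p.ne)
def AltPath.tgt {G H : DGraph V} (p : AltPath G H) : V := ptgt G H (p.edges.getLast p.ne)

/-- The reduction `G ∷ H`: vertices the symmetric difference, edges the alternating
paths beginning and ending in the symmetric difference. -/
def reduct (G H : DGraph V) : DGraph V where
  verts := symmDiff G.verts H.verts
  E := {p : AltPath G H //
        p.src ∈ symmDiff G.verts H.verts ∧ p.tgt ∈ symmDiff G.verts H.verts}
  src := fun p => p.1.src
  tgt := fun p => p.1.tgt
  src_mem := fun p => p.2.1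
  tgt_mem := fun p => p.2.2

variable (G₀ G₁ G₂ : DGraph V)

/-- source map of the 3-colored union `G₀ □ G₁ □ G₂` -/
def tsrc : G₀.E ⊕ G₁.E ⊕ G₂.E → V := Sum.elim G₀.src (Sum.elim G₁.src G₂.src)

/-- target map of the 3-colored union `G₀ □ G₁ □ G₂` -/
def ttgt : G₀.E ⊕ G₁.E ⊕ G₂.E → V := Sum.elim G₀.tgt (Sum.elim G₁.tgt G₂.tgt)

/-- coloring of the edges of `G₀ □ G₁ □ G₂` -/
def tcol : G₀.E ⊕ G₁.E ⊕ G₂.E → Fin 3 :=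
  Sum.elim (fun _ => 0) (Sum.elim (fun _ => 1) (fun _ => 2))

/-- A 3-alternating path between `G₀`, `G₁`, `G₂`: consecutive edges have distinct
colors. -/
structure TriPath where
  edges : List (G₀.E ⊕ G₁.E ⊕ G₂.E)
  ne : edges ≠ []
  chain : edges.Chain' (fun e f =>
    ttgt G₀ G₁ G₂ e = tsrc G₀ G₁ G₂ f ∧ tcol G₀ G₁ G₂ e ≠ tcol G₀ G₁ G₂ f)

def TriPath.src (p : TriPath G₀ G₁ G₂) : V := tsrc G₀ G₁ G₂ (p.edges.head p.ne)
def TriPath.tgt (p : TriPath G₀ G₁ G₂) : V := ttgt G₀ G₁ G₂ (p.edges.getLast p.ne)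

/-- The simultaneous reduction of `G₀`, `G₁`, `G₂`: the graph on `V₀ Δ V₁ Δ V₂` whose
edges are the 3-alternating paths with endpoints in `V₀ Δ V₁ Δ V₂`. -/
def triReduct : DGraph V where
  verts := symmDiff (symmDiff G₀.verts G₁.verts) G₂.verts
  E := {p : TriPath G₀ G₁ G₂ //
        p.src ∈ symmDiff (symmDiff G₀.verts G₁.verts) G₂.verts ∧
        p.tgt ∈ symmDiff (symmDiff G₀.verts G₁.verts) G₂.verts}
  src := fun p => p.1.src
  tgt := fun p => p.1.tgt
  src_mem := fun p => p.2.1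
  tgt_mem := fun p => p.2.2

/-- Identity of located graphs: same vertex sets and an endpoint-preserving bijection
of the edges. -/
def IsIso (G H : DGraph V) : Prop :=
  G.verts = H.verts ∧ ∃ e : G.E ≃ H.E,
    (∀ x, H.src (e x) = G.src x) ∧ (∀ x, H.tgt (e x) = G.tgt x)

end DGraph

namespace DGraph

variable {V : Type} [DecidableEq V]

theorem AltPath.ext' {G H : DGraph V} {p q : AltPath G H} (he : p.edges = q.edges) : p = q := by
  cases p; cases q; cases he; rfl

theorem TriPath.ext' {G₀ G₁ G₂ : DGraph V} {p q : TriPath G₀ G₁ G₂} (he : p.edges = q.edges) :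
    p = q := by
  cases p; cases q; cases he; rfl

theorem IsIso.symm' {G H : DGraph V} (h : IsIso G H) : IsIso H G := by
  obtain ⟨hv, e, hs, ht⟩ := h
  exact ⟨hv.symm, e.symm, fun x => by rw [← hs (e.symm x), e.apply_symm_apply],
    fun x => by rw [← ht (e.symm x), e.apply_symm_apply]⟩

theorem IsIso.trans' {G H K : DGraph V} (h1 : IsIso G H) (h2 : IsIso H K) : IsIso G K := by
  obtain ⟨hv, e, hs, ht⟩ := h1
  obtain ⟨hv', e', hs', ht'⟩ := h2
  exact ⟨hv.trans hv', e.trans e', fun x => by simp only [Equiv.trans_apply, hs', hs],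
    fun x => by simp only [Equiv.trans_apply, ht', ht]⟩

theorem psrc_swap {G H : DGraph V} (x : G.E ⊕ H.E) : psrc H G x.swap = psrc G H x := by
  cases x <;> rfl

theorem ptgt_swap {G H : DGraph V} (x : G.E ⊕ H.E) : ptgt H G x.swap = ptgt G H x := by
  cases x <;> rfl

def AltPath.swap {G H : DGraph V} (p : AltPath G H) : AltPath H G where
  edges := p.edges.map Sum.swap
  ne := by simp [p.ne]
  chain := by
    rw [List.Chain', List.isChain_map]
    refine p.chain.imp ?_
    rintro a b ⟨h1, h2⟩
    refine ⟨by rw [ptgt_swap, psrc_swap]; exact h1, ?_⟩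
    cases a <;> cases b <;> simp_all

theorem AltPath.swap_src {G H : DGraph V} (p : AltPath G H) : p.swap.src = p.src := by
  show psrc H G ((p.edges.map Sum.swap).head _) = _
  exact (congrArg (psrc H G) (List.head_map _)).trans (psrc_swap _)

theorem AltPath.swap_tgt {G H : DGraph V} (p : AltPath G H) : p.swap.tgt = p.tgt := by
  show ptgt H G ((p.edges.map Sum.swap).getLast _) = _
  exact (congrArg (ptgt H G) (List.getLast_map _)).trans (ptgt_swap _)

theorem AltPath.swap_swap {G H : DGraph V} (p : AltPath G H) : p.swap.swap = p := by
  refine AltPath.ext' ?_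
  show (p.edges.map Sum.swap).map Sum.swap = p.edges
  rw [List.map_map]
  simp [Function.comp_def]

theorem reduct_comm (G H : DGraph V) : IsIso (reduct G H) (reduct H G) := by
  refine ⟨symmDiff_comm _ _, ?_⟩
  have hmem : ∀ v : V, v ∈ symmDiff G.verts H.verts ↔ v ∈ symmDiff H.verts G.verts := by
    intro v; rw [symmDiff_comm]
  refine ⟨{
    toFun := fun p => ⟨p.1.swap, by rw [AltPath.swap_src]; exact (hmem _).mp p.2.1,
      by rw [AltPath.swap_tgt]; exact (hmem _).mp p.2.2⟩
    invFun := fun p => ⟨p.1.swap, by rw [AltPath.swap_src]; exact (hmem _).mpr p.2.1,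
      by rw [AltPath.swap_tgt]; exact (hmem _).mpr p.2.2⟩
    left_inv := fun p => Subtype.ext (AltPath.swap_swap p.1)
    right_inv := fun p => Subtype.ext (AltPath.swap_swap p.1) }, ?_, ?_⟩
  · intro x; exact AltPath.swap_src x.1
  · intro x; exact AltPath.swap_tgt x.1

theorem reduct_congr_right {G H H' : DGraph V} (hi : IsIso H H') :
    IsIso (reduct G H) (reduct G H') := by
  obtain ⟨hv, ε, hs, ht⟩ := hi
  have hs' : ∀ y, H.src (ε.symm y) = H'.src y := fun y => by
    rw [← hs (ε.symm y), Equiv.apply_symm_apply]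
  have ht' : ∀ y, H.tgt (ε.symm y) = H'.tgt y := fun y => by
    rw [← ht (ε.symm y), Equiv.apply_symm_apply]
  have psφ : ∀ x : G.E ⊕ H.E, psrc G H' (Sum.map id ε x) = psrc G H x := by
    rintro (e | e) <;> simp [psrc, hs]
  have ptφ : ∀ x : G.E ⊕ H.E, ptgt G H' (Sum.map id ε x) = ptgt G H x := by
    rintro (e | e) <;> simp [ptgt, ht]
  have psφ' : ∀ x : G.E ⊕ H'.E, psrc G H (Sum.map id ε.symm x) = psrc G H' x := by
    rintro (e | e) <;> simp [psrc, hs']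
  have ptφ' : ∀ x : G.E ⊕ H'.E, ptgt G H (Sum.map id ε.symm x) = ptgt G H' x := by
    rintro (e | e) <;> simp [ptgt, ht']
  let f : AltPath G H → AltPath G H' := fun p =>
    ⟨p.edges.map (Sum.map id ε), by simp [p.ne], by
      rw [List.Chain', List.isChain_map]
      refine p.chain.imp ?_
      rintro a b ⟨h1, h2⟩
      exact ⟨by rw [ptφ, psφ]; exact h1, by cases a <;> cases b <;> simp_all⟩⟩
  let g : AltPath G H' → AltPath G H := fun p =>
    ⟨p.edges.map (Sum.map id ε.symm), by simp [p.ne], by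
      rw [List.Chain', List.isChain_map]
      refine p.chain.imp ?_
      rintro a b ⟨h1, h2⟩
      exact ⟨by rw [ptφ', psφ']; exact h1, by cases a <;> cases b <;> simp_all⟩⟩
  have fsrc : ∀ p, (f p).src = p.src := by
    intro p
    show psrc G H' ((p.edges.map (Sum.map id ε)).head _) = _
    rw [List.head_map, psφ]; rfl
  have ftgt : ∀ p, (f p).tgt = p.tgt := by
    intro p
    show ptgt G H' ((p.edges.map (Sum.map id ε)).getLast _) = _
    rw [List.getLast_map, ptφ]; rfl
  have gsrc : ∀ p, (g p).src = p.src := by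
    intro p
    show psrc G H ((p.edges.map (Sum.map id ε.symm)).head _) = _
    rw [List.head_map, psφ']; rfl
  have gtgt : ∀ p, (g p).tgt = p.tgt := by
    intro p
    show ptgt G H ((p.edges.map (Sum.map id ε.symm)).getLast _) = _
    rw [List.getLast_map, ptφ']; rfl
  have hgf : ∀ p, g (f p) = p := by
    intro p
    refine AltPath.ext' ?_
    show (p.edges.map (Sum.map id ε)).map (Sum.map id ε.symm) = p.edges
    rw [List.map_map]
    have : (Sum.map id ε.symm ∘ Sum.map id ε : G.E ⊕ H.E → G.E ⊕ H.E) = id := by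
      funext x; cases x <;> simp
    rw [this, List.map_id]
  have hfg : ∀ p, f (g p) = p := by
    intro p
    refine AltPath.ext' ?_
    show (p.edges.map (Sum.map id ε.symm)).map (Sum.map id ε) = p.edges
    rw [List.map_map]
    have : (Sum.map id ε ∘ Sum.map id ε.symm : G.E ⊕ H'.E → G.E ⊕ H'.E) = id := by
      funext x; cases x <;> simp
    rw [this, List.map_id]
  have hmem : ∀ v : V, v ∈ symmDiff G.verts H.verts ↔ v ∈ symmDiff G.verts H'.verts := by
    intro v; rw [hv]
  refine ⟨by show symmDiff _ _ = symmDiff _ _; rw [hv], ?_⟩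
  refine ⟨{
    toFun := fun p => ⟨f p.1, by rw [fsrc]; exact (hmem _).mp p.2.1,
      by rw [ftgt]; exact (hmem _).mp p.2.2⟩
    invFun := fun p => ⟨g p.1, by rw [gsrc]; exact (hmem _).mpr p.2.1,
      by rw [gtgt]; exact (hmem _).mpr p.2.2⟩
    left_inv := fun p => Subtype.ext (hgf p.1)
    right_inv := fun p => Subtype.ext (hfg p.1) }, ?_, ?_⟩
  · intro x; exact fsrc x.1
  · intro x; exact ftgt x.1

end DGraph
namespace DGraph

variable {V : Type} [DecidableEq V]

def triPerm (G₀ G₁ G₂ : DGraph V) : (G₂.E ⊕ G₁.E ⊕ G₀.E) → (G₀.E ⊕ G₁.E ⊕ G₂.E)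
  | .inl e => .inr (.inr e)
  | .inr (.inl e) => .inr (.inl e)
  | .inr (.inr e) => .inl e

theorem triPerm_invol (G₀ G₁ G₂ : DGraph V) (x) :
    triPerm G₂ G₁ G₀ (triPerm G₀ G₁ G₂ x) = x := by
  rcases x with e | e | e <;> rfl

theorem tsrc_triPerm (G₀ G₁ G₂ : DGraph V) (x) :
    tsrc G₀ G₁ G₂ (triPerm G₀ G₁ G₂ x) = tsrc G₂ G₁ G₀ x := by
  rcases x with e | e | e <;> rfl

theorem ttgt_triPerm (G₀ G₁ G₂ : DGraph V) (x) :
    ttgt G₀ G₁ G₂ (triPerm G₀ G₁ G₂ x) = ttgt G₂ G₁ G₀ x := by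
  rcases x with e | e | e <;> rfl

theorem tcol_triPerm (G₀ G₁ G₂ : DGraph V) (x y)
    (h : tcol G₂ G₁ G₀ x ≠ tcol G₂ G₁ G₀ y) :
    tcol G₀ G₁ G₂ (triPerm G₀ G₁ G₂ x) ≠ tcol G₀ G₁ G₂ (triPerm G₀ G₁ G₂ y) := by
  rcases x with e | e | e <;> rcases y with f | f | f <;>
    simp [tcol, triPerm] at h ⊢ <;> decide

def TriPath.perm {G₀ G₁ G₂ : DGraph V} (p : TriPath G₂ G₁ G₀) : TriPath G₀ G₁ G₂ where
  edges := p.edges.map (triPerm G₀ G₁ G₂)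
  ne := by simp [p.ne]
  chain := by
    rw [List.Chain', List.isChain_map]
    refine p.chain.imp ?_
    rintro a b ⟨h1, h2⟩
    exact ⟨by rw [ttgt_triPerm, tsrc_triPerm]; exact h1, tcol_triPerm _ _ _ _ _ h2⟩

theorem TriPath.perm_src {G₀ G₁ G₂ : DGraph V} (p : TriPath G₂ G₁ G₀) :
    p.perm.src = p.src := by
  show tsrc G₀ G₁ G₂ ((p.edges.map _).head _) = _
  exact (congrArg (tsrc G₀ G₁ G₂) (List.head_map _)).trans (tsrc_triPerm G₀ G₁ G₂ _)

theorem TriPath.perm_tgt {G₀ G₁ G₂ : DGraph V} (p : TriPath G₂ G₁ G₀) :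
    p.perm.tgt = p.tgt := by
  show ttgt G₀ G₁ G₂ ((p.edges.map _).getLast _) = _
  exact (congrArg (ttgt G₀ G₁ G₂) (List.getLast_map _)).trans (ttgt_triPerm G₀ G₁ G₂ _)

theorem TriPath.perm_perm {G₀ G₁ G₂ : DGraph V} (p : TriPath G₂ G₁ G₀) :
    p.perm.perm = p := by
  refine TriPath.ext' ?_
  show (p.edges.map _).map _ = p.edges
  rw [List.map_map]
  have : (triPerm G₂ G₁ G₀ ∘ triPerm G₀ G₁ G₂) = id := by
    funext x; exact triPerm_invol G₀ G₁ G₂ x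
  rw [this, List.map_id]

theorem triVerts_eq (G₀ G₁ G₂ : DGraph V) :
    symmDiff (symmDiff G₂.verts G₁.verts) G₀.verts =
      symmDiff (symmDiff G₀.verts G₁.verts) G₂.verts := by
  rw [symmDiff_comm _ G₀.verts, symmDiff_comm G₂.verts G₁.verts, ← symmDiff_assoc]

theorem triReduct_perm (G₀ G₁ G₂ : DGraph V) :
    IsIso (triReduct G₂ G₁ G₀) (triReduct G₀ G₁ G₂) := by
  refine ⟨triVerts_eq G₀ G₁ G₂, ?_⟩
  have hmem : ∀ v : V, v ∈ symmDiff (symmDiff G₂.verts G₁.verts) G₀.verts ↔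
      v ∈ symmDiff (symmDiff G₀.verts G₁.verts) G₂.verts := by
    intro v; rw [triVerts_eq]
  refine ⟨{
    toFun := fun p => ⟨p.1.perm, by rw [TriPath.perm_src]; exact (hmem _).mp p.2.1,
      by rw [TriPath.perm_tgt]; exact (hmem _).mp p.2.2⟩
    invFun := fun p => ⟨p.1.perm, by rw [TriPath.perm_src]; exact (hmem _).mpr p.2.1,
      by rw [TriPath.perm_tgt]; exact (hmem _).mpr p.2.2⟩
    left_inv := fun p => Subtype.ext (TriPath.perm_perm p.1)
    right_inv := fun p => Subtype.ext (TriPath.perm_perm p.1) }, ?_, ?_⟩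
  · intro x; exact TriPath.perm_src x.1
  · intro x; exact TriPath.perm_tgt x.1

end DGraph
namespace DGraph

variable {V : Type} [DecidableEq V]

section Assoc

variable (G₀ G₁ G₂ : DGraph V)

def emap : G₀.E ⊕ (reduct G₁ G₂).E → List (G₀.E ⊕ (G₁.E ⊕ G₂.E))
  | .inl e => [.inl e]
  | .inr p => p.1.edges.map .inr

def fl : List (G₀.E ⊕ (reduct G₁ G₂).E) → List (G₀.E ⊕ (G₁.E ⊕ G₂.E))
  | [] => []
  | x :: L => emap G₀ G₁ G₂ x ++ fl L

variable {G₀ G₁ G₂}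

theorem emap_ne (x) : emap G₀ G₁ G₂ x ≠ [] := by
  cases x with
  | inl e => simp [emap]
  | inr p => simp [emap, p.1.ne]

theorem fl_ne {L : List (G₀.E ⊕ (reduct G₁ G₂).E)} (hL : L ≠ []) : fl G₀ G₁ G₂ L ≠ [] := by
  cases L with
  | nil => exact absurd rfl hL
  | cons x L =>
    show emap G₀ G₁ G₂ x ++ fl G₀ G₁ G₂ L ≠ []
    intro hc
    rw [List.append_eq_nil_iff] at hc
    exact emap_ne x hc.1

theorem fl_head {L : List (G₀.E ⊕ (reduct G₁ G₂).E)} (hL : L ≠ []) :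
    (fl G₀ G₁ G₂ L).head (fl_ne hL) = (emap G₀ G₁ G₂ (L.head hL)).head (emap_ne _) := by
  cases L with
  | nil => exact absurd rfl hL
  | cons x L => exact List.head_append_of_ne_nil (emap_ne x)

theorem fl_getLast {L : List (G₀.E ⊕ (reduct G₁ G₂).E)} (hL : L ≠ []) :
    (fl G₀ G₁ G₂ L).getLast (fl_ne hL) = (emap G₀ G₁ G₂ (L.getLast hL)).getLast (emap_ne _) := by
  induction L with
  | nil => exact absurd rfl hL
  | cons x L ih =>
    cases L with
    | nil =>
      show (emap G₀ G₁ G₂ x ++ fl G₀ G₁ G₂ []).getLast _ = _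
      simp only [fl, List.append_nil]
      rfl
    | cons y L' =>
      have h2 : fl G₀ G₁ G₂ (y :: L') ≠ [] := fl_ne (by simp)
      show (emap G₀ G₁ G₂ x ++ fl G₀ G₁ G₂ (y :: L')).getLast _ = _
      refine (List.getLast_append_of_ne_nil _ h2).trans ?_
      rw [ih (by simp)]
      exact rfl

theorem col_emap {x : G₀.E ⊕ (reduct G₁ G₂).E} {y} (hy : y ∈ emap G₀ G₁ G₂ x) :
    (tcol G₀ G₁ G₂ y = 0 ↔ x.isLeft = true) := by
  cases x with
  | inl e =>
    simp only [emap, List.mem_singleton] at hy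
    subst hy
    simp [tcol]
  | inr p =>
    simp only [emap, List.mem_map] at hy
    obtain ⟨k, -, rfl⟩ := hy
    cases k <;> simp [tcol] <;> decide

theorem tsrc_head_emap (x : G₀.E ⊕ (reduct G₁ G₂).E) :
    tsrc G₀ G₁ G₂ ((emap G₀ G₁ G₂ x).head (emap_ne x)) = psrc G₀ (reduct G₁ G₂) x := by
  cases x with
  | inl e => rfl
  | inr p =>
    show tsrc G₀ G₁ G₂ ((p.1.edges.map Sum.inr).head _) = _
    refine (congrArg (tsrc G₀ G₁ G₂) (List.head_map _)).trans ?_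
    rfl

theorem ttgt_getLast_emap (x : G₀.E ⊕ (reduct G₁ G₂).E) :
    ttgt G₀ G₁ G₂ ((emap G₀ G₁ G₂ x).getLast (emap_ne x)) = ptgt G₀ (reduct G₁ G₂) x := by
  cases x with
  | inl e => rfl
  | inr p =>
    show ttgt G₀ G₁ G₂ ((p.1.edges.map Sum.inr).getLast _) = _
    refine (congrArg (ttgt G₀ G₁ G₂) (List.getLast_map _)).trans ?_
    rfl

theorem chain_emap (x : G₀.E ⊕ (reduct G₁ G₂).E) :
    (emap G₀ G₁ G₂ x).Chain' (fun e f =>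
      ttgt G₀ G₁ G₂ e = tsrc G₀ G₁ G₂ f ∧ tcol G₀ G₁ G₂ e ≠ tcol G₀ G₁ G₂ f) := by
  cases x with
  | inl e => simp [emap, List.Chain']
  | inr p =>
    show (p.1.edges.map Sum.inr).Chain' _
    rw [List.Chain', List.isChain_map]
    refine p.1.chain.imp ?_
    rintro (a | a) (b | b) ⟨h1, h2⟩
    · exact absurd rfl h2
    · refine ⟨h1, ?_⟩; show (1 : Fin 3) ≠ 2; decide
    · refine ⟨h1, ?_⟩; show (2 : Fin 3) ≠ 1; decide
    · exact absurd rfl h2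

theorem emap_junction {x y : G₀.E ⊕ (reduct G₁ G₂).E}
    (hxy : ptgt G₀ (reduct G₁ G₂) x = psrc G₀ (reduct G₁ G₂) y ∧ x.isLeft ≠ y.isLeft) :
    ttgt G₀ G₁ G₂ ((emap G₀ G₁ G₂ x).getLast (emap_ne x)) =
        tsrc G₀ G₁ G₂ ((emap G₀ G₁ G₂ y).head (emap_ne y)) ∧
      tcol G₀ G₁ G₂ ((emap G₀ G₁ G₂ x).getLast (emap_ne x)) ≠
        tcol G₀ G₁ G₂ ((emap G₀ G₁ G₂ y).head (emap_ne y)) := by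
  refine ⟨by rw [ttgt_getLast_emap, tsrc_head_emap]; exact hxy.1, ?_⟩
  intro hc
  have h1 := col_emap (x := x) (List.getLast_mem (emap_ne x))
  have h2 := col_emap (x := y) (List.head_mem (emap_ne y))
  rw [hc] at h1
  have h3 : (x.isLeft = true) ↔ (y.isLeft = true) := h1.symm.trans h2
  cases hx : x.isLeft <;> cases hy : y.isLeft <;> simp_all

theorem fl_chain {L : List (G₀.E ⊕ (reduct G₁ G₂).E)}
    (hc : L.Chain' (fun e f =>
      ptgt G₀ (reduct G₁ G₂) e = psrc G₀ (reduct G₁ G₂) f ∧ e.isLeft ≠ f.isLeft)) :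
    (fl G₀ G₁ G₂ L).Chain' (fun e f =>
      ttgt G₀ G₁ G₂ e = tsrc G₀ G₁ G₂ f ∧ tcol G₀ G₁ G₂ e ≠ tcol G₀ G₁ G₂ f) := by
  induction L with
  | nil => simp [fl, List.Chain']
  | cons x L ih =>
    show (emap G₀ G₁ G₂ x ++ fl G₀ G₁ G₂ L).Chain' _
    rw [List.Chain', List.isChain_append]
    refine ⟨chain_emap x, ih hc.tail, ?_⟩
    intro a ha b hb
    cases L with
    | nil => simp [fl] at hb
    | cons y L' =>
      rw [List.getLast?_eq_getLast (emap_ne x), Option.mem_some_iff] at ha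
      rw [List.head?_eq_head (fl_ne (by simp : (y :: L') ≠ [])), Option.mem_some_iff] at hb
      subst ha; subst hb
      rw [fl_head (by simp : (y :: L') ≠ [])]
      exact emap_junction (List.isChain_cons_cons.mp hc).1

end Assoc

end DGraph
namespace DGraph

variable {V : Type} [DecidableEq V]

section Assoc2

variable {G₀ G₁ G₂ : DGraph V}

def fwdPath (P : AltPath G₀ (reduct G₁ G₂)) : TriPath G₀ G₁ G₂ :=
  ⟨fl G₀ G₁ G₂ P.edges, fl_ne P.ne, fl_chain P.chain⟩

theorem fwdPath_src (P : AltPath G₀ (reduct G₁ G₂)) : (fwdPath P).src = P.src := by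
  show tsrc G₀ G₁ G₂ ((fl G₀ G₁ G₂ P.edges).head _) = _
  rw [fl_head P.ne, tsrc_head_emap]
  rfl

theorem fwdPath_tgt (P : AltPath G₀ (reduct G₁ G₂)) : (fwdPath P).tgt = P.tgt := by
  show ttgt G₀ G₁ G₂ ((fl G₀ G₁ G₂ P.edges).getLast _) = _
  rw [fl_getLast P.ne, ttgt_getLast_emap]
  rfl

theorem mem_sd12 (h : G₀.verts ∩ G₁.verts ∩ G₂.verts = ∅) {v : V}
    (h0 : v ∈ G₀.verts) (h12 : v ∈ G₁.verts ∨ v ∈ G₂.verts) :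
    v ∈ symmDiff G₁.verts G₂.verts := by
  have key : ¬(v ∈ G₁.verts ∧ v ∈ G₂.verts) := by
    rintro ⟨h1, h2⟩
    have hm : v ∈ G₀.verts ∩ G₁.verts ∩ G₂.verts := by
      simp [Finset.mem_inter, h0, h1, h2]
    rw [h] at hm
    exact absurd hm (Finset.notMem_empty v)
  rw [Finset.mem_symmDiff]
  tauto

theorem mem_sd12_of_sd3 (h : G₀.verts ∩ G₁.verts ∩ G₂.verts = ∅) {v : V}
    (hv : v ∈ symmDiff (symmDiff G₀.verts G₁.verts) G₂.verts)
    (h12 : v ∈ G₁.verts ∨ v ∈ G₂.verts) : v ∈ symmDiff G₁.verts G₂.verts := by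
  have key : ¬(v ∈ G₀.verts ∧ v ∈ G₁.verts ∧ v ∈ G₂.verts) := by
    rintro ⟨h0, h1, h2⟩
    have hm : v ∈ G₀.verts ∩ G₁.verts ∩ G₂.verts := by
      simp [Finset.mem_inter, h0, h1, h2]
    rw [h] at hm
    exact absurd hm (Finset.notMem_empty v)
  simp only [Finset.mem_symmDiff] at hv ⊢
  tauto

theorem psrcK_mem (k : G₁.E ⊕ G₂.E) :
    psrc G₁ G₂ k ∈ G₁.verts ∨ psrc G₁ G₂ k ∈ G₂.verts := by
  cases k with
  | inl e => exact Or.inl (G₁.src_mem e)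
  | inr e => exact Or.inr (G₂.src_mem e)

theorem ptgtK_mem (k : G₁.E ⊕ G₂.E) :
    ptgt G₁ G₂ k ∈ G₁.verts ∨ ptgt G₁ G₂ k ∈ G₂.verts := by
  cases k with
  | inl e => exact Or.inl (G₁.tgt_mem e)
  | inr e => exact Or.inr (G₂.tgt_mem e)

theorem unmap_inr {α β : Type*} :
    ∀ (m : List (α ⊕ β)), (∀ x ∈ m, x.isRight) → (m.filterMap Sum.getRight?).map Sum.inr = m := by
  intro m
  induction m with
  | nil => intro; rfl
  | cons x m ih =>
    intro hall
    cases x with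
    | inl a => simpa using hall (Sum.inl a) (by simp)
    | inr b =>
      rw [List.filterMap_cons]
      simp only [Sum.getRight?]
      rw [List.map_cons]
      rw [ih (fun x hx => hall x (by simp [hx]))]

end Assoc2

end DGraph
namespace DGraph

variable {V : Type} [DecidableEq V]

section Assoc3

variable {G₀ G₁ G₂ : DGraph V}

theorem head_congr' {α : Type*} {l l' : List α} (e : l = l') (h : l ≠ []) :
    l.head h = l'.head (e ▸ h) := by subst e; rfl

theorem getLast_congr' {α : Type*} {l l' : List α} (e : l = l') (h : l ≠ []) :
    l.getLast h = l'.getLast (e ▸ h) := by subst e; rfl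

theorem build (h : G₀.verts ∩ G₁.verts ∩ G₂.verts = ∅) :
    ∀ (n : ℕ) (l : List (G₀.E ⊕ (G₁.E ⊕ G₂.E))), l.length ≤ n → ∀ (hne : l ≠ []),
    l.Chain' (fun e f => ttgt G₀ G₁ G₂ e = tsrc G₀ G₁ G₂ f ∧
      tcol G₀ G₁ G₂ e ≠ tcol G₀ G₁ G₂ f) →
    (∀ k, l.head hne = Sum.inr k → psrc G₁ G₂ k ∈ symmDiff G₁.verts G₂.verts) →
    (∀ k, l.getLast hne = Sum.inr k → ptgt G₁ G₂ k ∈ symmDiff G₁.verts G₂.verts) →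
    ∃ (L : List (G₀.E ⊕ (reduct G₁ G₂).E)),
      L ≠ [] ∧
      L.Chain' (fun e f => ptgt G₀ (reduct G₁ G₂) e = psrc G₀ (reduct G₁ G₂) f ∧
        e.isLeft ≠ f.isLeft) ∧
      fl G₀ G₁ G₂ L = l := by
  intro n
  induction n with
  | zero =>
    intro l hl hne _ _ _
    exact absurd (List.eq_nil_of_length_eq_zero (Nat.le_zero.mp hl)) hne
  | succ n ih =>
    intro l hlen hne hch hhd hlst
    cases l with
    | nil => exact absurd rfl hne
    | cons x rest =>
      cases x with
      | inl e =>
        -- case A : leading G₀ edge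
        cases rest with
        | nil =>
          refine ⟨[Sum.inl e], by simp, List.isChain_singleton _, rfl⟩
        | cons y rest' =>
          have hrel := (List.isChain_cons_cons.mp hch).1
          have hch' := (List.isChain_cons_cons.mp hch).2
          obtain ⟨k, rfl⟩ : ∃ k, y = Sum.inr k := by
            cases y with
            | inl e' => exact absurd rfl hrel.2
            | inr k => exact ⟨k, rfl⟩
          have hhd' : ∀ k', (Sum.inr k :: rest').head (by simp) = Sum.inr k' →
              psrc G₁ G₂ k' ∈ symmDiff G₁.verts G₂.verts := by
            intro k' hk'
            obtain rfl : k = k' := Sum.inr.inj hk'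
            refine mem_sd12 h ?_ (psrcK_mem k)
            rw [show psrc G₁ G₂ k = G₀.tgt e from hrel.1.symm]
            exact G₀.tgt_mem e
          have hlst' : ∀ k', (Sum.inr k :: rest').getLast (by simp) = Sum.inr k' →
              ptgt G₁ G₂ k' ∈ symmDiff G₁.verts G₂.verts := by
            intro k' hk'
            refine hlst k' ?_
            rw [List.getLast_cons (by simp)]
            exact hk'
          obtain ⟨L, hL, hLc, hLfl⟩ := ih (Sum.inr k :: rest')
            (by simpa using Nat.le_of_succ_le_succ hlen) (by simp) hch' hhd' hlst'
          refine ⟨Sum.inl e :: L, by simp, ?_, ?_⟩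
          · cases L with
            | nil => exact absurd rfl hL
            | cons z L'' =>
              have hz : (emap G₀ G₁ G₂ z).head (emap_ne z) = Sum.inr k := by
                have h1 : (fl G₀ G₁ G₂ (z :: L'')).head? = some (Sum.inr k) := by
                  rw [hLfl]; rfl
                rw [List.head?_eq_head (fl_ne (by simp : (z :: L'') ≠ [])),
                  fl_head (by simp : (z :: L'') ≠ [])] at h1
                exact Option.some.inj h1
              obtain ⟨p, rfl⟩ : ∃ p, z = Sum.inr p := by
                cases z with
                | inl e' => simp [emap] at hz
                | inr p => exact ⟨p, rfl⟩
              refine List.isChain_cons_cons.mpr ⟨⟨?_, by simp⟩, hLc⟩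
              have hk : p.1.edges.head p.1.ne = k := by
                have h2 : (emap G₀ G₁ G₂ (Sum.inr p)).head (emap_ne _) =
                    Sum.inr (p.1.edges.head p.1.ne) := by
                  show ((p.1.edges.map Sum.inr).head _) = _
                  exact List.head_map _
                rw [h2] at hz
                exact Sum.inr.inj hz
              show G₀.tgt e = psrc G₁ G₂ (p.1.edges.head p.1.ne)
              rw [hk]
              exact hrel.1
          · show emap G₀ G₁ G₂ (Sum.inl e) ++ fl G₀ G₁ G₂ L = _
            rw [hLfl]
            rfl
      | inr k =>
        -- case B : leading G₁/G₂ edge; peel the maximal run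
        set l : List (G₀.E ⊕ (G₁.E ⊕ G₂.E)) := Sum.inr k :: rest with hldef
        have hrun : l.takeWhile Sum.isRight = Sum.inr k :: rest.takeWhile Sum.isRight :=
          List.takeWhile_cons_of_pos rfl
        set run := l.takeWhile Sum.isRight with hrundef
        set l₂ := l.dropWhile Sum.isRight with hl₂def
        have hsplit : run ++ l₂ = l := List.takeWhile_append_dropWhile
        have hrun_ne : run ≠ [] := by rw [hrun]; simp
        set run' := run.filterMap Sum.getRight? with hrun'def
        have hrm : run'.map Sum.inr = run :=
          unmap_inr _ (fun x hx => List.mem_takeWhile_imp hx)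
        have hrun'_ne : run' ≠ [] := by
          intro hc
          rw [hc] at hrm
          exact hrun_ne hrm.symm
        have hchrun : run.Chain' (fun e f => ttgt G₀ G₁ G₂ e = tsrc G₀ G₁ G₂ f ∧
            tcol G₀ G₁ G₂ e ≠ tcol G₀ G₁ G₂ f) :=
          hch.prefix (List.takeWhile_prefix _)
        have hchain' : run'.Chain' (fun a b => ptgt G₁ G₂ a = psrc G₁ G₂ b ∧
            a.isLeft ≠ b.isLeft) := by
          have h1 : (run'.map Sum.inr).Chain' (fun e f => ttgt G₀ G₁ G₂ e = tsrc G₀ G₁ G₂ f ∧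
              tcol G₀ G₁ G₂ e ≠ tcol G₀ G₁ G₂ f) := by rw [hrm]; exact hchrun
          rw [List.Chain', List.isChain_map] at h1
          refine h1.imp ?_
          rintro (a | a) (b | b) ⟨h1', h2'⟩
          · exact absurd rfl h2'
          · exact ⟨h1', by simp⟩
          · exact ⟨h1', by simp⟩
          · exact absurd rfl h2'
        have hk : run'.head hrun'_ne = k := by
          have h2 : run.head hrun_ne = Sum.inr k := head_congr' hrun hrun_ne
          have h3' : run.head hrun_ne = Sum.inr (run'.head hrun'_ne) :=
            (head_congr' hrm.symm hrun_ne).trans (List.head_map _)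
          exact Sum.inr.inj (h3'.symm.trans h2)
        have hlastrun : run.getLast hrun_ne = Sum.inr (run'.getLast hrun'_ne) :=
          (getLast_congr' hrm.symm hrun_ne).trans (List.getLast_map _)
        set p : AltPath G₁ G₂ := ⟨run', hrun'_ne, hchain'⟩ with hpdef
        have hsrc_mem : p.src ∈ symmDiff G₁.verts G₂.verts := by
          show psrc G₁ G₂ (run'.head hrun'_ne) ∈ _
          rw [hk]
          exact hhd k rfl
        by_cases hl₂e : l₂ = []
        · -- the whole list is one run
          have hrl : run = l := by rw [← hsplit, hl₂e, List.append_nil]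
          have hlast : l.getLast hne = Sum.inr (run'.getLast hrun'_ne) :=
            (getLast_congr' hrl.symm hne).trans hlastrun
          have htgt_mem : p.tgt ∈ symmDiff G₁.verts G₂.verts := hlst _ hlast
          refine ⟨[Sum.inr ⟨p, hsrc_mem, htgt_mem⟩], by simp, List.isChain_singleton _, ?_⟩
          show run'.map Sum.inr ++ [] = l
          rw [List.append_nil, hrm, hrl]
        · -- a G₀ edge follows the run
          have hhead₂ : (l₂.head hl₂e).isRight = false :=
            List.head_dropWhile_not Sum.isRight hl₂e
          obtain ⟨e, he⟩ : ∃ e, l₂.head hl₂e = Sum.inl e := by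
            cases hh : l₂.head hl₂e with
            | inl e => exact ⟨e, rfl⟩
            | inr k' => rw [hh] at hhead₂; simp at hhead₂
          have hch2 := List.isChain_append.mp (by rw [hsplit]; exact hch)
          have hjun := hch2.2.2 (run.getLast hrun_ne)
            (by rw [List.getLast?_eq_getLast hrun_ne]; rfl)
            (l₂.head hl₂e)
            (by rw [List.head?_eq_head hl₂e]; rfl)
          have htgtval : ptgt G₁ G₂ (run'.getLast hrun'_ne) = G₀.src e := by
            have h4 := hjun.1
            rw [hlastrun, he] at h4
            exact h4
          have htgt_mem : p.tgt ∈ symmDiff G₁.verts G₂.verts := by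
            refine mem_sd12 h ?_ (ptgtK_mem _)
            show ptgt G₁ G₂ (run'.getLast hrun'_ne) ∈ G₀.verts
            rw [htgtval]
            exact G₀.src_mem e
          have hlen₂ : l₂.length ≤ n := by
            have h5 := congrArg List.length hsplit
            rw [List.length_append] at h5
            have h6 : 1 ≤ run.length := List.length_pos_iff.mpr hrun_ne
            have h7 : l.length ≤ n + 1 := hlen
            omega
          have hhd₂ : ∀ k', l₂.head hl₂e = Sum.inr k' →
              psrc G₁ G₂ k' ∈ symmDiff G₁.verts G₂.verts := by
            intro k' hk'
            rw [he] at hk'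
            exact absurd hk' (by simp)
          have hlst₂ : ∀ k', l₂.getLast hl₂e = Sum.inr k' →
              ptgt G₁ G₂ k' ∈ symmDiff G₁.verts G₂.verts := by
            have hgl : l.getLast hne = l₂.getLast hl₂e := by
              have h9 : (run ++ l₂).getLast (fun hc => hl₂e (List.append_eq_nil_iff.mp hc).2) =
                  l₂.getLast hl₂e := by
                exact List.getLast_append_of_ne_nil _ hl₂e
              exact (getLast_congr' hsplit.symm hne).trans h9
            intro k' hk'
            exact hlst k' (hgl.trans hk')
          obtain ⟨L', hL', hLc', hLfl'⟩ := ih l₂ hlen₂ hl₂e hch2.2.1 hhd₂ hlst₂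
          refine ⟨Sum.inr ⟨p, hsrc_mem, htgt_mem⟩ :: L', by simp, ?_, ?_⟩
          · cases L' with
            | nil => exact absurd rfl hL'
            | cons z L'' =>
              have hz : (emap G₀ G₁ G₂ z).head (emap_ne z) = Sum.inl e := by
                have h1 : (fl G₀ G₁ G₂ (z :: L'')).head? = some (Sum.inl e) := by
                  rw [hLfl', List.head?_eq_head hl₂e, he]
                rw [List.head?_eq_head (fl_ne (by simp : (z :: L'') ≠ [])),
                  fl_head (by simp : (z :: L'') ≠ [])] at h1
                exact Option.some.inj h1
              obtain ⟨e', rfl⟩ : ∃ e', z = Sum.inl e' := by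
                cases z with
                | inl e' => exact ⟨e', rfl⟩
                | inr p' =>
                  have h2 : (emap G₀ G₁ G₂ (Sum.inr p')).head (emap_ne _) =
                      Sum.inr (p'.1.edges.head p'.1.ne) := by
                    show ((p'.1.edges.map Sum.inr).head _) = _
                    exact List.head_map _
                  rw [h2] at hz
                  exact absurd hz (by simp)
              have hee : e' = e := by
                simpa [emap] using hz
              refine List.isChain_cons_cons.mpr ⟨⟨?_, by exact Bool.false_ne_true⟩, hLc'⟩
              show ptgt G₁ G₂ (run'.getLast hrun'_ne) = G₀.src e'
              rw [hee]
              exact htgtval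
          · show run'.map Sum.inr ++ fl G₀ G₁ G₂ L' = l
            rw [hLfl', hrm, hsplit]

end Assoc3

end DGraph
namespace DGraph

variable {V : Type} [DecidableEq V]

section Assoc4

variable {G₀ G₁ G₂ : DGraph V}

theorem unmap_pair {α β : Type*} :
    ∀ (a : List β) (b : List β) (s t : List (α ⊕ β)),
      a.map Sum.inr ++ s = b.map Sum.inr ++ t →
      (∀ x, s.head? ≠ some (Sum.inr x)) → (∀ x, t.head? ≠ some (Sum.inr x)) →
      a = b ∧ s = t := by
  intro a
  induction a with
  | nil =>
    intro b s t heq hs ht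
    cases b with
    | nil => exact ⟨rfl, by simpa using heq⟩
    | cons y b' =>
      exfalso
      apply hs y
      rw [show s = Sum.inr y :: (b'.map Sum.inr ++ t) by simpa using heq]
      rfl
  | cons x a' ih =>
    intro b s t heq hs ht
    cases b with
    | nil =>
      exfalso
      apply ht x
      rw [show t = Sum.inr x :: (a'.map Sum.inr ++ s) by simpa using heq.symm]
      rfl
    | cons y b' =>
      simp only [List.map_cons, List.cons_append, List.cons.injEq, Sum.inr.injEq] at heq
      obtain ⟨rfl, heq'⟩ := heq
      obtain ⟨h1, h2⟩ := ih b' s t heq' hs ht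
      exact ⟨by rw [h1], h2⟩

theorem fl_head_not_inr {pp : (reduct G₁ G₂).E} {t : List (G₀.E ⊕ (reduct G₁ G₂).E)}
    (hc : (Sum.inr pp :: t).Chain' (fun e f =>
      ptgt G₀ (reduct G₁ G₂) e = psrc G₀ (reduct G₁ G₂) f ∧ e.isLeft ≠ f.isLeft)) :
    ∀ x, (fl G₀ G₁ G₂ t).head? ≠ some (Sum.inr x) := by
  cases t with
  | nil => simp [fl]
  | cons z t' =>
    have hrel := (List.isChain_cons_cons.mp hc).1
    obtain ⟨e, rfl⟩ : ∃ e, z = Sum.inl e := by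
      cases z with
      | inl e => exact ⟨e, rfl⟩
      | inr p' => exact absurd rfl hrel.2
    intro x hx
    rw [show fl G₀ G₁ G₂ (Sum.inl e :: t') = Sum.inl e :: fl G₀ G₁ G₂ t' from rfl] at hx
    simp at hx

theorem fl_inj :
    ∀ (L₁ L₂ : List (G₀.E ⊕ (reduct G₁ G₂).E)),
      L₁.Chain' (fun e f => ptgt G₀ (reduct G₁ G₂) e = psrc G₀ (reduct G₁ G₂) f ∧
        e.isLeft ≠ f.isLeft) →
      L₂.Chain' (fun e f => ptgt G₀ (reduct G₁ G₂) e = psrc G₀ (reduct G₁ G₂) f ∧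
        e.isLeft ≠ f.isLeft) →
      fl G₀ G₁ G₂ L₁ = fl G₀ G₁ G₂ L₂ → L₁ = L₂ := by
  intro L₁
  induction L₁ with
  | nil =>
    intro L₂ _ _ heq
    cases L₂ with
    | nil => rfl
    | cons y s =>
      exfalso
      have : emap G₀ G₁ G₂ y ++ fl G₀ G₁ G₂ s = [] := heq.symm
      rw [List.append_eq_nil_iff] at this
      exact emap_ne y this.1
  | cons x t ih =>
    intro L₂ hc1 hc2 heq
    cases L₂ with
    | nil =>
      exfalso
      have : emap G₀ G₁ G₂ x ++ fl G₀ G₁ G₂ t = [] := heq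
      rw [List.append_eq_nil_iff] at this
      exact emap_ne x this.1
    | cons y s =>
      have heq' : emap G₀ G₁ G₂ x ++ fl G₀ G₁ G₂ t =
          emap G₀ G₁ G₂ y ++ fl G₀ G₁ G₂ s := heq
      cases x with
      | inl e =>
        cases y with
        | inl e' =>
          simp only [emap, List.singleton_append, List.cons.injEq, Sum.inl.injEq] at heq'
          obtain ⟨rfl, heq''⟩ := heq'
          rw [ih s hc1.tail hc2.tail heq'']
        | inr p =>
          exfalso
          obtain ⟨k, ks, hpe⟩ : ∃ k ks, p.1.edges = k :: ks := by
            cases hpe : p.1.edges with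
            | nil => exact absurd hpe p.1.ne
            | cons k ks => exact ⟨k, ks, rfl⟩
          rw [show emap G₀ G₁ G₂ (Sum.inr p) = p.1.edges.map Sum.inr from rfl, hpe] at heq'
          simp [emap] at heq'
      | inr p =>
        cases y with
        | inl e' =>
          exfalso
          obtain ⟨k, ks, hpe⟩ : ∃ k ks, p.1.edges = k :: ks := by
            cases hpe : p.1.edges with
            | nil => exact absurd hpe p.1.ne
            | cons k ks => exact ⟨k, ks, rfl⟩
          rw [show emap G₀ G₁ G₂ (Sum.inr p) = p.1.edges.map Sum.inr from rfl, hpe] at heq'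
          simp [emap] at heq'
        | inr p' =>
          have hmain := unmap_pair p.1.edges p'.1.edges (fl G₀ G₁ G₂ t) (fl G₀ G₁ G₂ s)
            heq' (fl_head_not_inr hc1) (fl_head_not_inr hc2)
          obtain ⟨h1, h2⟩ := hmain
          obtain rfl : p = p' := Subtype.ext (AltPath.ext' h1)
          rw [ih s hc1.tail hc2.tail h2]

theorem main_iso (h : G₀.verts ∩ G₁.verts ∩ G₂.verts = ∅) :
    IsIso (reduct G₀ (reduct G₁ G₂)) (triReduct G₀ G₁ G₂) := by
  have hsd : symmDiff G₀.verts (symmDiff G₁.verts G₂.verts) =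
      symmDiff (symmDiff G₀.verts G₁.verts) G₂.verts := (symmDiff_assoc _ _ _).symm
  refine ⟨hsd, ?_⟩
  have hmem : ∀ v : V, v ∈ symmDiff G₀.verts (symmDiff G₁.verts G₂.verts) ↔
      v ∈ symmDiff (symmDiff G₀.verts G₁.verts) G₂.verts := fun v => by rw [hsd]
  let F : (reduct G₀ (reduct G₁ G₂)).E → (triReduct G₀ G₁ G₂).E := fun P =>
    ⟨fwdPath P.1, by rw [fwdPath_src]; exact (hmem _).mp P.2.1,
      by rw [fwdPath_tgt]; exact (hmem _).mp P.2.2⟩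
  have hFbij : Function.Bijective F := by
    constructor
    · intro P Q hPQ
      have h1 : fwdPath P.1 = fwdPath Q.1 := congrArg Subtype.val hPQ
      have h2 : fl G₀ G₁ G₂ P.1.edges = fl G₀ G₁ G₂ Q.1.edges := congrArg TriPath.edges h1
      exact Subtype.ext (AltPath.ext' (fl_inj _ _ P.1.chain Q.1.chain h2))
    · rintro ⟨q, hq1, hq2⟩
      have hhd : ∀ k, q.edges.head q.ne = Sum.inr k →
          psrc G₁ G₂ k ∈ symmDiff G₁.verts G₂.verts := by
        intro k hk
        have hv : q.src = psrc G₁ G₂ k := by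
          show tsrc G₀ G₁ G₂ (q.edges.head q.ne) = _
          rw [hk]
          rfl
        exact mem_sd12_of_sd3 h (hv ▸ hq1) (psrcK_mem k)
      have hlst : ∀ k, q.edges.getLast q.ne = Sum.inr k →
          ptgt G₁ G₂ k ∈ symmDiff G₁.verts G₂.verts := by
        intro k hk
        have hv : q.tgt = ptgt G₁ G₂ k := by
          show ttgt G₀ G₁ G₂ (q.edges.getLast q.ne) = _
          rw [hk]
          rfl
        exact mem_sd12_of_sd3 h (hv ▸ hq2) (ptgtK_mem k)
      obtain ⟨L, hL, hLc, hLfl⟩ := build h q.edges.length q.edges le_rfl q.ne q.chain hhd hlst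
      have hPsrc : (⟨L, hL, hLc⟩ : AltPath G₀ (reduct G₁ G₂)).src = q.src := by
        show psrc G₀ (reduct G₁ G₂) (L.head hL) = tsrc G₀ G₁ G₂ (q.edges.head q.ne)
        rw [← tsrc_head_emap, ← fl_head hL]
        exact (congrArg (tsrc G₀ G₁ G₂) ((head_congr' hLfl (fl_ne hL))))
      have hPtgt : (⟨L, hL, hLc⟩ : AltPath G₀ (reduct G₁ G₂)).tgt = q.tgt := by
        show ptgt G₀ (reduct G₁ G₂) (L.getLast hL) = ttgt G₀ G₁ G₂ (q.edges.getLast q.ne)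
        rw [← ttgt_getLast_emap, ← fl_getLast hL]
        exact (congrArg (ttgt G₀ G₁ G₂) ((getLast_congr' hLfl (fl_ne hL))))
      refine ⟨⟨⟨L, hL, hLc⟩, by rw [hPsrc]; exact (hmem _).mpr hq1,
        by rw [hPtgt]; exact (hmem _).mpr hq2⟩, ?_⟩
      exact Subtype.ext (TriPath.ext' hLfl)
  refine ⟨Equiv.ofBijective F hFbij, ?_, ?_⟩
  · intro x
    show (fwdPath x.1).src = x.1.src
    exact fwdPath_src x.1
  · intro x
    show (fwdPath x.1).tgt = x.1.tgt
    exact fwdPath_tgt x.1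

end Assoc4

end DGraph
namespace DGraph

variable {V : Type} [DecidableEq V]

theorem inter_perm (G₀ G₁ G₂ : DGraph V) (h : G₀.verts ∩ G₁.verts ∩ G₂.verts = ∅) :
    G₂.verts ∩ G₁.verts ∩ G₀.verts = ∅ := by
  rw [Finset.eq_empty_iff_forall_notMem] at h ⊢
  intro v hv
  refine h v ?_
  simp only [Finset.mem_inter] at hv ⊢
  tauto

theorem assoc_part2 (G₀ G₁ G₂ : DGraph V) (h : G₀.verts ∩ G₁.verts ∩ G₂.verts = ∅) :
    IsIso (reduct (reduct G₀ G₁) G₂) (triReduct G₀ G₁ G₂) := by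
  have h' := inter_perm G₀ G₁ G₂ h
  refine ((reduct_comm (reduct G₀ G₁) G₂).trans' ?_)
  refine (reduct_congr_right (reduct_comm G₀ G₁)).trans' ?_
  exact (main_iso h').trans' (triReduct_perm G₀ G₁ G₂)

end DGraph



open DGraph

/-- Associativity of the reduction: if `V₀ ∩ V₁ ∩ V₂ = ∅` then
`G₀ ∷ (G₁ ∷ G₂) = (G₀ ∷ G₁) ∷ G₂`, both being equal to the graph on `V₀ Δ V₁ Δ V₂`
whose edges are the 3-alternating paths between `G₀, G₁, G₂` with endpoints in
`V₀ Δ V₁ Δ V₂`. -/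
theorem stmt2 {V : Type} [DecidableEq V] (G₀ G₁ G₂ : DGraph V)
    [Countable G₀.E] [Countable G₁.E] [Countable G₂.E]
    (h : G₀.verts ∩ G₁.verts ∩ G₂.verts = ∅) :
    IsIso (reduct G₀ (reduct G₁ G₂)) (reduct (reduct G₀ G₁) G₂) ∧
    IsIso (reduct G₀ (reduct G₁ G₂)) (triReduct G₀ G₁ G₂) ∧
    IsIso (reduct (reduct G₀ G₁) G₂) (triReduct G₀ G₁ G₂) := by
  refine ⟨?_, main_iso h, assoc_part2 G₀ G₁ G₂ h⟩
  exact (main_iso h).trans' (assoc_part2 G₀ G₁ G₂ h).symm'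
end

section
/- Let F, G, H be directed graphs with V_G ∩ V_H = ∅ and V_G ∪ V_H ⊆ V_F. Then the number of alternating 1-circuits between F and G∪H equals the number of alternating 1-circuits between F and G plus the number of alternating 1-circuits between F∷G and H: ♯C(F, G∪H) = ♯C(F,G) + ♯C(F∷G, H). -/
open scoped ENNReal

/-- A directed weighted graph with a definite (finite) set of vertex locations. -/
structure EGraph (V : Type) where
  verts : Finset V
  E : Type
  src : E → V
  tgt : E → V
  w : E → ℝ≥0∞
  src_mem : ∀ e, src e ∈ verts
  tgt_mem : ∀ e, tgt e ∈ verts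

namespace EGraph

variable {V : Type} [DecidableEq V]

/-- source of an edge of the plugging `G □ H` -/
def psrc (G H : EGraph V) : G.E ⊕ H.E → V := Sum.elim G.src H.src

/-- target of an edge of the plugging `G □ H` -/
def ptgt (G H : EGraph V) : G.E ⊕ H.E → V := Sum.elim G.tgt H.tgt

/-- weight of an edge of the plugging `G □ H` -/
def pw (G H : EGraph V) : G.E ⊕ H.E → ℝ≥0∞ := Sum.elim G.w H.w

/-- An alternating path in the plugging `G □ H`: a nonempty composable sequence of
colored edges whose consecutive edges have distinct colors. -/
structure AltPath (G H : EGraph V) where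
  edges : List (G.E ⊕ H.E)
  ne : edges ≠ []
  chain : edges.Chain' (fun e f => ptgt G H e = psrc G H f ∧ e.isLeft ≠ f.isLeft)

variable {G H : EGraph V}

def AltPath.src (p : AltPath G H) : V := psrc G H (p.edges.head p.ne)
def AltPath.tgt (p : AltPath G H) : V := ptgt G H (p.edges.getLast p.ne)

noncomputable def AltPath.weight (p : AltPath G H) : ℝ≥0∞ :=
  (p.edges.map (pw G H)).prod

/-- An alternating cycle: the target of the last edge is the source of the first one,
and moreover the colors of the last and first edges differ. -/
def AltPath.IsCycle (p : AltPath G H) : Prop :=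
  p.tgt = p.src ∧ (p.edges.getLast p.ne).isLeft ≠ (p.edges.head p.ne).isLeft

/-- A list is primitive (a `1`-cycle) when it is not a proper power of a shorter list. -/
def PrimitiveList {α : Type*} (l : List α) : Prop :=
  ∀ (k : ℕ) (r : List α), l = (List.replicate k r).flatten → k = 1

def AltPath.IsOneCycle (p : AltPath G H) : Prop := p.IsCycle ∧ PrimitiveList p.edges

/-- Equivalence of alternating 1-cycles up to cyclic permutation. -/
def cycSetoid (G H : EGraph V) : Setoid {p : AltPath G H // p.IsOneCycle} where
  r p q := ∃ k, q.1.edges = p.1.edges.rotate k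
  iseqv := by
    constructor
    · exact fun p => ⟨0, (p.1.edges.rotate_zero).symm⟩
    · rintro p q ⟨k, hk⟩
      refine ⟨p.1.edges.length * (k + 1) - k, ?_⟩
      rw [hk, List.rotate_rotate]
      rcases Nat.eq_zero_or_pos p.1.edges.length with h0 | hpos
      · rw [List.length_eq_zero_iff] at h0
        simp [h0]
      · have hkle : k ≤ p.1.edges.length * (k + 1) := by nlinarith
        rw [Nat.add_sub_cancel' hkle, List.rotate_length_mul]
    · rintro p q r ⟨k, hk⟩ ⟨m, hm⟩
      exact ⟨k + m, by rw [hm, hk, List.rotate_rotate]⟩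

/-- The set of alternating 1-circuits between `G` and `H`: alternating 1-cycles up to
cyclic permutation. -/
def Circ (G H : EGraph V) := Quotient (cycSetoid G H)

/-- The weight of a circuit. -/
noncomputable def cweight {G H : EGraph V} : Circ G H → ℝ≥0∞ :=
  Quotient.lift (fun p => p.1.weight)
    (by
      rintro p q ⟨k, hk⟩
      show p.1.weight = q.1.weight
      unfold AltPath.weight
      rw [hk]
      exact (((p.1.edges.map (pw G H)).rotate_perm k).prod_eq).symm.trans (by rw [List.map_rotate]))

/-- `-log(1-x)`, valued in `[0,∞]`, with the convention `log 0 = -∞`. -/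
noncomputable def mval (x : ℝ≥0∞) : ℝ≥0∞ :=
  if 1 ≤ x then ⊤ else ENNReal.ofReal (-Real.log (1 - x.toReal))

/-- The measurement `⟪G,H⟫ = Σ_{π ∈ C(G,H)} -log(1-ω(π))`. -/
noncomputable def meas (G H : EGraph V) : ℝ≥0∞ := ∑' c : Circ G H, mval (cweight c)

/-- The extended measurement value `Σ_{k ≥ 1} x^k / k`. -/
noncomputable def mvalExt (x : ℝ≥0∞) : ℝ≥0∞ := ∑' k : ℕ, x ^ (k + 1) / (k + 1)

/-- The measurement extended to arbitrary weights. -/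
noncomputable def measExt (G H : EGraph V) : ℝ≥0∞ := ∑' c : Circ G H, mvalExt (cweight c)

/-- The union of two graphs: union of the vertices, disjoint union of the edges. -/
def union (G H : EGraph V) : EGraph V where
  verts := G.verts ∪ H.verts
  E := G.E ⊕ H.E
  src := psrc G H
  tgt := ptgt G H
  w := pw G H
  src_mem := by
    rintro (e | e)
    · exact Finset.mem_union_left _ (G.src_mem e)
    · exact Finset.mem_union_right _ (H.src_mem e)
  tgt_mem := by
    rintro (e | e)
    · exact Finset.mem_union_left _ (G.tgt_mem e)
    · exact Finset.mem_union_right _ (H.tgt_mem e)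

/-- The reduction `G ∷ H`: vertices the symmetric difference, edges the alternating
paths with endpoints in the symmetric difference, weighted multiplicatively. -/
noncomputable def reduct (G H : EGraph V) : EGraph V where
  verts := symmDiff G.verts H.verts
  E := {p : AltPath G H //
        p.src ∈ symmDiff G.verts H.verts ∧ p.tgt ∈ symmDiff G.verts H.verts}
  src := fun p => p.1.src
  tgt := fun p => p.1.tgt
  w := fun p => p.1.weight
  src_mem := fun p => p.2.1
  tgt_mem := fun p => p.2.2

/-- The collapsed (simple) graph `Ĝ`, with weights the sums of the weights of parallel
edges. -/
noncomputable def adj (G : EGraph V) (v u : V) : ℝ≥0∞ :=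
  ∑' e : {e : G.E // G.src e = v ∧ G.tgt e = u}, G.w e.1

noncomputable def collapse (G : EGraph V) : EGraph V where
  verts := G.verts
  E := {p : V × V // ∃ e : G.E, G.src e = p.1 ∧ G.tgt e = p.2}
  src := fun p => p.1.1
  tgt := fun p => p.1.2
  w := fun p => adj G p.1.1 p.1.2
  src_mem := fun p => by obtain ⟨e, he, _⟩ := p.2; show p.1.1 ∈ G.verts; rw [← he]; exact G.src_mem e
  tgt_mem := fun p => by obtain ⟨e, _, he⟩ := p.2; show p.1.2 ∈ G.verts; rw [← he]; exact G.tgt_mem e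

end EGraph

namespace List

variable {α β : Type*} {R : α → α → Prop}

theorem Chain'.imp {S : α → α → Prop} (H : ∀ a b, R a b → S a b) {l : List α}
    (p : Chain' R l) : Chain' S l := IsChain.imp (fun a b h => H a b h) p

theorem Chain'.drop {l : List α} (h : Chain' R l) (n : ℕ) : Chain' R (l.drop n) :=
  IsChain.drop h n

theorem Chain'.take {l : List α} (h : Chain' R l) (n : ℕ) : Chain' R (l.take n) :=
  IsChain.take h n

theorem Chain'.prefix {l l₁ : List α} (h : Chain' R l) (h' : l₁ <+: l) : Chain' R l₁ :=
  IsChain.prefix h h'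

theorem Chain'.suffix {l l₁ : List α} (h : Chain' R l) (h' : l₁ <:+ l) : Chain' R l₁ :=
  IsChain.suffix h h'

@[simp] theorem chain'_nil : Chain' R [] := IsChain.nil

theorem chain'_singleton (a : α) : Chain' R [a] := IsChain.singleton a

theorem chain'_append {l₁ l₂ : List α} : Chain' R (l₁ ++ l₂) ↔
    Chain' R l₁ ∧ Chain' R l₂ ∧ ∀ x ∈ l₁.getLast?, ∀ y ∈ l₂.head?, R x y := isChain_append

theorem chain'_map (f : β → α) {l : List β} :
    Chain' R (map f l) ↔ Chain' (fun a b : β => R (f a) (f b)) l := isChain_map f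

theorem chain'_cons {x y : α} {l : List α} : Chain' R (x :: y :: l) ↔ R x y ∧ Chain' R (y :: l) :=
  isChain_cons_cons

theorem chain'_cons' {x : α} {l : List α} :
    Chain' R (x :: l) ↔ (∀ y ∈ head? l, R x y) ∧ Chain' R l := isChain_cons

theorem chain'_flatten {L : List (List α)} (hL : [] ∉ L) : Chain' R L.flatten ↔
    (∀ l ∈ L, Chain' R l) ∧
      L.Chain' (fun l₁ l₂ => ∀ᵉ (x ∈ l₁.getLast?) (y ∈ l₂.head?), R x y) := isChain_flatten hL

theorem chain'_iff_get {l : List α} : Chain' R l ↔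
    ∀ (i : ℕ) (h : i < l.length - 1), R (l.get ⟨i, by omega⟩) (l.get ⟨i + 1, by omega⟩) := by
  rw [show Chain' R l ↔ IsChain R l from Iff.rfl, isChain_iff_getElem]
  constructor
  · intro h i hi
    simpa using h i (by omega)
  · intro h i hi
    simpa using h i (by omega)

end List

namespace CycAux

open List

theorem swap_pow {α : Type*} (n : ℕ) (a b : List α) :
    (List.replicate n (a ++ b)).flatten ++ a = a ++ (List.replicate n (b ++ a)).flatten := by
  induction n with
  | zero => simp
  | succ n ih =>
      rw [List.replicate_succ, List.flatten_cons, List.append_assoc, List.append_assoc, ih,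
        List.replicate_succ, List.flatten_cons]
      simp [List.append_assoc]

theorem exrot1 {α : Type*} (n : ℕ) (r : List α) :
    ∃ r' : List α, ((List.replicate n r).flatten).rotate 1 = (List.replicate n r').flatten := by
  rcases n with _ | m
  · exact ⟨r, by simp⟩
  rcases r with _ | ⟨a, rt⟩
  · exact ⟨[], by simp⟩
  refine ⟨rt ++ [a], ?_⟩
  have hx : (List.replicate (m+1) (a :: rt)).flatten
      = a :: (rt ++ (List.replicate m (a :: rt)).flatten) := by
    rw [List.replicate_succ, List.flatten_cons]; rfl
  have hsw := swap_pow (m+1) [a] rt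
  simp only [List.singleton_append] at hsw
  have h1 : (List.replicate (m+1) (a :: rt)).flatten ++ [a]
      = a :: (List.replicate (m+1) (rt ++ [a])).flatten := hsw
  rw [hx] at h1
  have h2 : (rt ++ (List.replicate m (a :: rt)).flatten) ++ [a]
      = (List.replicate (m+1) (rt ++ [a])).flatten := by
    simp only [List.cons_append] at h1
    exact List.cons_injective.eq_iff.mp h1
  rw [hx, List.rotate_cons_succ, List.rotate_zero, h2]

theorem exrot {α : Type*} (k n : ℕ) (r : List α) :
    ∃ r' : List α, ((List.replicate n r).flatten).rotate k = (List.replicate n r').flatten := by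
  induction k with
  | zero => exact ⟨r, by simp⟩
  | succ k ih =>
      obtain ⟨r1, h1⟩ := ih
      obtain ⟨r2, h2⟩ := exrot1 n r1
      exact ⟨r2, by rw [← List.rotate_rotate, h1, h2]⟩

theorem pow_flatMap {α β : Type*} (g : α → List β) (n : ℕ) (q : List α) :
    ((List.replicate n q).flatten).flatMap g = (List.replicate n (q.flatMap g)).flatten := by
  induction n with
  | zero => simp
  | succ n ih => simp [List.replicate_succ, ih]

theorem pow_map {α β : Type*} (f : α → β) (n : ℕ) (q : List α) :
    ((List.replicate n q).flatten).map f = (List.replicate n (q.map f)).flatten := by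
  simp [List.map_flatten, List.map_replicate]

theorem prim_ne_nil {α : Type*} {l : List α} (hp : EGraph.PrimitiveList l) : l ≠ [] := by
  intro h
  exact absurd (hp 0 [] (by simp [h])) (by norm_num)

theorem prim_rotate {α : Type*} {l : List α} (hp : EGraph.PrimitiveList l) (k : ℕ) :
    EGraph.PrimitiveList (l.rotate k) := by
  intro n r hr
  have hl0 : l ≠ [] := prim_ne_nil hp
  have hlen : 0 < l.length := List.length_pos_iff.2 hl0
  have hself : l = (l.rotate k).rotate (l.length - k % l.length) := by
    rw [List.rotate_rotate]
    have hmod : k + (l.length - k % l.length) = l.length * (k / l.length + 1) := by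
      have h2 : k % l.length < l.length := Nat.mod_lt _ hlen
      have h3 := Nat.div_add_mod k l.length
      have h4 : l.length * (k / l.length + 1) = l.length * (k / l.length) + l.length :=
        Nat.mul_succ _ _
      omega
    rw [hmod, List.rotate_length_mul]
  obtain ⟨r', hr'⟩ := exrot (l.length - k % l.length) n r
  exact hp n r' (by rw [hself, hr, hr'])

theorem prim_map {α β : Type*} {f : α → β} (hf : Function.Injective f) {l : List α}
    (hp : EGraph.PrimitiveList l) : EGraph.PrimitiveList (l.map f) := by
  intro n r hr
  rcases n with _ | m
  · exfalso
    apply prim_ne_nil hp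
    have h0 : l.map f = [] := by simpa using hr
    simpa using h0
  · have hpre : r = (l.map f).take r.length := by
      conv_lhs => rw [← List.take_left (l₁ := r) (l₂ := (List.replicate m r).flatten)]
      rw [← List.flatten_cons, ← List.replicate_succ, ← hr]
    apply hp (m+1) (l.take r.length)
    apply List.map_injective_iff.2 hf
    rw [hr, pow_map, List.map_take, ← hpre]

theorem prim_of_map {α β : Type*} (f : α → β) {l : List α}
    (hp : EGraph.PrimitiveList (l.map f)) : EGraph.PrimitiveList l :=
  fun n r hr => hp n (r.map f) (by rw [hr, pow_map])

theorem prim_of_flatMap {α β : Type*} (g : α → List β) {l : List α}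
    (hp : EGraph.PrimitiveList (l.flatMap g)) : EGraph.PrimitiveList l :=
  fun n r hr => hp n (r.flatMap g) (by rw [hr, pow_flatMap])

theorem head?_rotate {α : Type*} {l : List α} {k : ℕ} (hk : k < l.length) :
    (l.rotate k).head? = some (l[k]) := by
  rw [List.rotate_eq_drop_append_take hk.le, List.head?_append,
    List.head?_eq_head (by rw [← List.length_pos_iff, List.length_drop]; omega : List.drop k l ≠ []),
    List.head_drop]
  rfl

theorem getLast?_take' {α : Type*} {l : List α} {k : ℕ} (hk0 : 0 < k) (hk : k ≤ l.length) :
    (l.take k).getLast? = some (l[k-1]'(by omega)) := by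
  have hne : l.take k ≠ [] := by
    rw [← List.length_pos_iff, List.length_take]; omega
  rw [List.getLast?_eq_getLast hne, List.getLast_eq_getElem hne]
  congr 1
  · rw [List.getElem_take]
    congr 1
    rw [List.length_take]
    omega

theorem getLast?_rotate {α : Type*} {l : List α} {k : ℕ} (hk0 : 0 < k) (hk : k ≤ l.length) :
    (l.rotate k).getLast? = some (l[k-1]'(by omega)) := by
  rcases eq_or_lt_of_le hk with h | h
  · subst h
    rw [List.rotate_length, List.getLast?_eq_getLast (by rw [← List.length_pos_iff]; omega),
      List.getLast_eq_getElem]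
  · rw [List.rotate_eq_drop_append_take hk, List.getLast?_append, getLast?_take' hk0 hk]
    rfl

/-- rotation preserves cyclic chains -/
theorem cyc_rotate {α : Type*} {R : α → α → Prop} {l : List α} (hc : List.Chain' R l)
    (hw : ∀ x ∈ l.getLast?, ∀ y ∈ l.head?, R x y) (k : ℕ) :
    List.Chain' R (l.rotate k) ∧
      ∀ x ∈ (l.rotate k).getLast?, ∀ y ∈ (l.rotate k).head?, R x y := by
  rcases eq_or_ne l [] with rfl | hl
  · simp
  have hlen : 0 < l.length := List.length_pos_iff.2 hl
  rw [← List.rotate_mod]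
  set k' := k % l.length with hk'
  have hk'lt : k' < l.length := Nat.mod_lt _ hlen
  rcases Nat.eq_zero_or_pos k' with hk0 | hk0
  · rw [hk0, List.rotate_zero]
    exact ⟨hc, hw⟩
  constructor
  · rw [List.rotate_eq_drop_append_take hk'lt.le, List.chain'_append]
    refine ⟨hc.drop _, hc.take _, ?_⟩
    intro x hx y hy
    rw [List.getLast?_drop, if_neg (by omega)] at hx
    rw [List.head?_take, if_neg (by omega)] at hy
    exact hw x hx y hy
  · intro x hx y hy
    rw [getLast?_rotate hk0 hk'lt.le] at hx
    rw [head?_rotate hk'lt] at hy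
    simp only [Option.mem_def, Option.some_inj] at hx hy
    subst hx; subst hy
    have := List.chain'_iff_get.1 hc (k'-1) (by omega)
    simpa [List.get_eq_getElem, Nat.sub_add_cancel hk0] using this

end CycAux

namespace EGraph

open List CycAux

set_option linter.unusedSectionVars false

variable {V : Type} [DecidableEq V] {F G H : EGraph V}

/-- The chain relation of the plugging. -/
def rel (G H : EGraph V) (e f : G.E ⊕ H.E) : Prop :=
  ptgt G H e = psrc G H f ∧ e.isLeft ≠ f.isLeft

theorem altPath_ext {p q : AltPath G H} (h : p.edges = q.edges) : p = q := by
  cases p; cases q; cases h; rfl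

theorem isCycle_iff (p : AltPath G H) :
    p.IsCycle ↔ ∀ x ∈ p.edges.getLast?, ∀ y ∈ p.edges.head?, rel G H x y := by
  rw [List.getLast?_eq_getLast p.ne, List.head?_eq_head p.ne]
  constructor
  · rintro ⟨h1, h2⟩ x hx y hy
    simp only [Option.mem_def, Option.some_inj] at hx hy
    subst hx; subst hy
    exact ⟨h1, h2⟩
  · intro h
    exact ⟨(h _ rfl _ rfl).1, (h _ rfl _ rfl).2⟩

/-- build a one-cycle -/
def mkCyc (l : List (G.E ⊕ H.E)) (hne : l ≠ []) (hch : l.Chain' (rel G H))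
    (hw : ∀ x ∈ l.getLast?, ∀ y ∈ l.head?, rel G H x y) (hp : PrimitiveList l) :
    {p : AltPath G H // p.IsOneCycle} :=
  ⟨⟨l, hne, hch⟩, ⟨(isCycle_iff ⟨l, hne, hch⟩).2 hw, hp⟩⟩

theorem rotate_surj {α : Type*} (l : List α) (m : ℕ) : ∃ m', (l.rotate m).rotate m' = l := by
  refine ⟨l.length * (m + 1) - m, ?_⟩
  rw [List.rotate_rotate]
  rcases Nat.eq_zero_or_pos l.length with h0 | hpos
  · rw [List.length_eq_zero_iff] at h0; simp [h0]
  · have hle : m ≤ l.length * (m + 1) := by nlinarith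
    rw [Nat.add_sub_cancel' hle, List.rotate_length_mul]

/-! ### the embedding of `F □ G` into `F □ (G ∪ H)` -/

def emb3 (F G H : EGraph V) (e : F.E ⊕ G.E) : F.E ⊕ (union G H).E := Sum.map id Sum.inl e

def HHe (F G : EGraph V) {H : EGraph V} (h : H.E) : F.E ⊕ (union G H).E :=
  Sum.inr (Sum.inr h)

def isHb : F.E ⊕ (union G H).E → Bool
  | .inr (.inr _) => true
  | _ => false

theorem emb3_inl (a : F.E) : emb3 F G H (Sum.inl a) = Sum.inl a := rfl

theorem emb3_inr (g : G.E) : emb3 F G H (Sum.inr g) = Sum.inr (Sum.inl g) := rfl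

theorem emb3_inj : Function.Injective (emb3 F G H) := by
  rintro (a | a) (b | b) h <;>
    simp only [emb3_inl, emb3_inr] at h
  · rw [Sum.inl.inj h]
  · exact absurd h (by simp)
  · exact absurd h (by simp)
  · rw [Sum.inl.inj (Sum.inr.inj h)]

theorem psrc_emb3 (e : F.E ⊕ G.E) : psrc F (union G H) (emb3 F G H e) = psrc F G e := by
  cases e <;> rfl

theorem ptgt_emb3 (e : F.E ⊕ G.E) : ptgt F (union G H) (emb3 F G H e) = ptgt F G e := by
  cases e <;> rfl

theorem isLeft_emb3 (e : F.E ⊕ G.E) : (emb3 F G H e).isLeft = e.isLeft := by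
  cases e <;> rfl

theorem rel_emb3 {a b : F.E ⊕ G.E} :
    rel F (union G H) (emb3 F G H a) (emb3 F G H b) ↔ rel F G a b := by
  unfold rel
  rw [psrc_emb3, ptgt_emb3, isLeft_emb3, isLeft_emb3]

theorem isH_emb3 (e : F.E ⊕ G.E) : isHb (emb3 F G H e) = false := by
  rcases e with e | e <;> rfl

theorem isH_HHe (h : H.E) : isHb (HHe F G h) = true := rfl

theorem emb3_ne_HHe (e : F.E ⊕ G.E) (h : H.E) : emb3 F G H e ≠ HHe F G h := by
  rcases e with e | e <;> simp [emb3_inl, emb3_inr, HHe] <;> intro h' <;> cases h'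

theorem isH_false_iff {x : F.E ⊕ (union G H).E} :
    isHb x = false ↔ ∃ e : F.E ⊕ G.E, x = emb3 F G H e := by
  rcases x with f | (g | h)
  · constructor
    · intro _; exact ⟨Sum.inl f, rfl⟩
    · intro _; rfl
  · constructor
    · intro _; exact ⟨Sum.inr g, rfl⟩
    · intro _; rfl
  · constructor
    · intro h0; cases h0
    · rintro ⟨e, he⟩; exact absurd he.symm (emb3_ne_HHe e h)

theorem isH_true_iff {x : F.E ⊕ (union G H).E} :
    isHb x = true ↔ ∃ h : H.E, x = HHe F G h := by
  rcases x with f | (g | h)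
  · constructor
    · intro h0; cases h0
    · rintro ⟨h, he⟩; cases he
  · constructor
    · intro h0; cases h0
    · rintro ⟨h, he⟩; cases he
  · constructor
    · intro _; exact ⟨h, rfl⟩
    · intro _; rfl

theorem isHb_false_of_isLeft {x : F.E ⊕ (union G H).E} (h : x.isLeft = true) :
    isHb x = false := by
  rcases x with f | g
  · rfl
  · simp at h

/-! ### endpoints of reduction edges -/

theorem redE_head_isLeft (hGsub : G.verts ⊆ F.verts) (P : (reduct F G).E) :
    (P.1.edges.head P.1.ne).isLeft = true := by
  rcases hE : P.1.edges.head P.1.ne with f | g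
  · rfl
  · exfalso
    have hsrc : P.1.src ∈ symmDiff F.verts G.verts := P.2.1
    have hs : P.1.src = G.src g := by unfold AltPath.src; rw [hE]; rfl
    rw [hs, Finset.mem_symmDiff] at hsrc
    rcases hsrc with ⟨_, hn⟩ | ⟨_, hn⟩
    · exact hn (G.src_mem g)
    · exact hn (hGsub (G.src_mem g))

theorem redE_getLast_isLeft (hGsub : G.verts ⊆ F.verts) (P : (reduct F G).E) :
    (P.1.edges.getLast P.1.ne).isLeft = true := by
  rcases hE : P.1.edges.getLast P.1.ne with f | g
  · rfl
  · exfalso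
    have htgt : P.1.tgt ∈ symmDiff F.verts G.verts := P.2.2
    have hs : P.1.tgt = G.tgt g := by unfold AltPath.tgt; rw [hE]; rfl
    rw [hs, Finset.mem_symmDiff] at htgt
    rcases htgt with ⟨_, hn⟩ | ⟨_, hn⟩
    · exact hn (G.tgt_mem g)
    · exact hn (hGsub (G.tgt_mem g))

/-! ### the expansion of paths in `(F ∷ G) □ H` to paths in `F □ (G ∪ H)` -/

noncomputable def exg : (reduct F G).E ⊕ H.E → List (F.E ⊕ (union G H).E)
  | .inl P => P.1.edges.map (emb3 F G H)
  | .inr h => [HHe F G h]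

noncomputable def expandE (lq : List ((reduct F G).E ⊕ H.E)) :
    List (F.E ⊕ (union G H).E) :=
  lq.flatMap exg

theorem exg_ne (x : (reduct F G).E ⊕ H.E) : exg x ≠ [] := by
  rcases x with P | h
  · simp [exg, P.1.ne]
  · simp [exg]

theorem expandE_nil : expandE (F := F) (G := G) (H := H) [] = [] := rfl

theorem expandE_cons (x : (reduct F G).E ⊕ H.E) (t : List ((reduct F G).E ⊕ H.E)) :
    expandE (x :: t) = exg x ++ expandE t := rfl

theorem expandE_append (a b : List ((reduct F G).E ⊕ H.E)) :
    expandE (a ++ b) = expandE a ++ expandE b :=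
  List.flatMap_append (xs := a) (ys := b) (f := exg)

theorem expandE_ne {lq : List ((reduct F G).E ⊕ H.E)} (h : lq ≠ []) : expandE lq ≠ [] := by
  rcases lq with _ | ⟨x, t⟩
  · exact absurd rfl h
  · rw [expandE_cons]
    simp [exg_ne x]

theorem expandE_eq_nil {lq : List ((reduct F G).E ⊕ H.E)} (h : expandE lq = []) : lq = [] := by
  by_contra hne
  exact expandE_ne hne h

theorem head?_expandE {lq : List ((reduct F G).E ⊕ H.E)} (h : lq ≠ []) :
    (expandE lq).head? = (exg (lq.head h)).head? := by
  rcases lq with _ | ⟨x, t⟩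
  · exact absurd rfl h
  · rw [expandE_cons, List.head?_append, List.head_cons,
      List.head?_eq_head (exg_ne x), Option.or_of_isSome (Option.isSome_some)]

theorem getLast?_expandE {lq : List ((reduct F G).E ⊕ H.E)} (h : lq ≠ []) :
    (expandE lq).getLast? = (exg (lq.getLast h)).getLast? := by
  induction lq with
  | nil => exact absurd rfl h
  | cons x t ih =>
      rcases eq_or_ne t [] with rfl | htne
      · rw [expandE_cons, expandE_nil, List.append_nil, List.getLast_singleton]
      · rw [expandE_cons, List.getLast?_append, ih htne,
          List.getLast?_eq_getLast (exg_ne _), Option.or_of_isSome (Option.isSome_some),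
          ← List.getLast?_eq_getLast (exg_ne _), List.getLast_cons htne]

theorem exg_head_src (x : (reduct F G).E ⊕ H.E) :
    psrc F (union G H) ((exg x).head (exg_ne x)) = psrc (reduct F G) H x := by
  rcases x with P | h
  · show psrc F (union G H) ((P.1.edges.map (emb3 F G H)).head _) = P.1.src
    erw [List.head_map, psrc_emb3]
    rfl
  · rfl

theorem exg_last_tgt (x : (reduct F G).E ⊕ H.E) :
    ptgt F (union G H) ((exg x).getLast (exg_ne x)) = ptgt (reduct F G) H x := by
  rcases x with P | h
  · show ptgt F (union G H) ((P.1.edges.map (emb3 F G H)).getLast _) = P.1.tgt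
    erw [List.getLast_map, ptgt_emb3]
    rfl
  · rfl

theorem exg_head_isLeft (hGsub : G.verts ⊆ F.verts) (x : (reduct F G).E ⊕ H.E) :
    ((exg x).head (exg_ne x)).isLeft = x.isLeft := by
  rcases x with P | h
  · show ((P.1.edges.map (emb3 F G H)).head _).isLeft = true
    erw [List.head_map, isLeft_emb3, redE_head_isLeft hGsub]
  · rfl

theorem exg_last_isLeft (hGsub : G.verts ⊆ F.verts) (x : (reduct F G).E ⊕ H.E) :
    ((exg x).getLast (exg_ne x)).isLeft = x.isLeft := by
  rcases x with P | h
  · show ((P.1.edges.map (emb3 F G H)).getLast _).isLeft = true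
    erw [List.getLast_map, isLeft_emb3, redE_getLast_isLeft hGsub]
  · rfl

theorem exg_chain (x : (reduct F G).E ⊕ H.E) :
    List.Chain' (rel F (union G H)) (exg x) := by
  rcases x with P | h
  · exact (List.chain'_map _).2 (List.Chain'.imp (fun a b hab => rel_emb3.2 hab) P.1.chain)
  · exact List.chain'_singleton _

theorem exg_junction (hGsub : G.verts ⊆ F.verts) {a b : (reduct F G).E ⊕ H.E}
    (hab : rel (reduct F G) H a b) :
    ∀ x ∈ (exg a).getLast?, ∀ y ∈ (exg b).head?, rel F (union G H) x y := by
  intro x hx y hy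
  rw [List.getLast?_eq_getLast (exg_ne a)] at hx
  rw [List.head?_eq_head (exg_ne b)] at hy
  simp only [Option.mem_def, Option.some_inj] at hx hy
  subst hx; subst hy
  constructor
  · rw [exg_last_tgt, exg_head_src]; exact hab.1
  · rw [exg_last_isLeft hGsub, exg_head_isLeft hGsub]; exact hab.2

theorem nil_not_mem_map_exg (lq : List ((reduct F G).E ⊕ H.E)) :
    [] ∉ lq.map exg := by
  intro hmem
  rcases List.mem_map.1 hmem with ⟨x, _, hx⟩
  exact exg_ne x hx

theorem expandE_chain (hGsub : G.verts ⊆ F.verts) {lq : List ((reduct F G).E ⊕ H.E)}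
    (hch : List.Chain' (rel (reduct F G) H) lq) :
    List.Chain' (rel F (union G H)) (expandE lq) := by
  rw [expandE, List.flatMap_def, List.chain'_flatten (nil_not_mem_map_exg lq)]
  constructor
  · intro l hl
    rcases List.mem_map.1 hl with ⟨x, _, rfl⟩
    exact exg_chain x
  · rw [List.chain'_map]
    exact hch.imp fun a b hab => exg_junction hGsub hab

theorem expandE_wrap (hGsub : G.verts ⊆ F.verts) {lq : List ((reduct F G).E ⊕ H.E)}
    (h : lq ≠ [])
    (hw : ∀ x ∈ lq.getLast?, ∀ y ∈ lq.head?, rel (reduct F G) H x y) :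
    ∀ x ∈ (expandE lq).getLast?, ∀ y ∈ (expandE lq).head?, rel F (union G H) x y := by
  intro x hx y hy
  rw [getLast?_expandE h] at hx
  rw [head?_expandE h] at hy
  exact exg_junction hGsub
    (hw _ (by rw [List.getLast?_eq_getLast h]; rfl) _ (by rw [List.head?_eq_head h]; rfl))
    x hx y hy

theorem chain'_and {α : Type*} {R S : α → α → Prop} {l : List α} (hR : List.Chain' R l)
    (hS : List.Chain' S l) : List.Chain' (fun a b => R a b ∧ S a b) l := by
  rw [List.chain'_iff_get] at *
  exact fun i h => ⟨hR i h, hS i h⟩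

theorem expandE_chain_rev {lq : List ((reduct F G).E ⊕ H.E)}
    (halt : List.Chain' (fun a b : (reduct F G).E ⊕ H.E => a.isLeft ≠ b.isLeft) lq)
    (hch : List.Chain' (rel F (union G H)) (expandE lq)) :
    List.Chain' (rel (reduct F G) H) lq := by
  rw [expandE, List.flatMap_def, List.chain'_flatten (nil_not_mem_map_exg lq)] at hch
  have hj := hch.2
  rw [List.chain'_map] at hj
  refine (chain'_and hj halt).imp ?_
  rintro a b ⟨hjab, hcol⟩
  have h1 := hjab _ (by rw [List.getLast?_eq_getLast (exg_ne a)]; rfl)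
    _ (by rw [List.head?_eq_head (exg_ne b)]; rfl)
  constructor
  · rw [← exg_last_tgt a, ← exg_head_src b]
    exact h1.1
  · exact hcol

theorem expandE_wrap_rev {lq : List ((reduct F G).E ⊕ H.E)} (h : lq ≠ [])
    (hcol : (lq.getLast h).isLeft ≠ (lq.head h).isLeft)
    (hw : ∀ x ∈ (expandE lq).getLast?, ∀ y ∈ (expandE lq).head?, rel F (union G H) x y) :
    rel (reduct F G) H (lq.getLast h) (lq.head h) := by
  have h3 := hw _ (by rw [getLast?_expandE h, List.getLast?_eq_getLast (exg_ne _)]; rfl)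
    _ (by rw [head?_expandE h, List.head?_eq_head (exg_ne _)]; rfl)
  exact ⟨by rw [← exg_last_tgt, ← exg_head_src]; exact h3.1, hcol⟩

end EGraph

namespace EGraph

open List CycAux

variable {V : Type} [DecidableEq V] {F G H : EGraph V}

theorem getLast?_append_right' {α : Type*} {a b : List α} (hb : b ≠ []) :
    (a ++ b).getLast? = b.getLast? := by
  obtain ⟨y, hy⟩ : ∃ y, b.getLast? = some y := ⟨_, List.getLast?_eq_getLast hb⟩
  rw [List.getLast?_append, hy]
  rfl

theorem head?_append_left' {α : Type*} {a b : List α} (ha : a ≠ []) :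
    (a ++ b).head? = a.head? := by
  obtain ⟨y, hy⟩ : ∃ y, a.head? = some y := ⟨_, List.head?_eq_head ha⟩
  rw [List.head?_append, hy]
  rfl

noncomputable def pairsFl (lp : List ((reduct F G).E × H.E)) :
    List ((reduct F G).E ⊕ H.E) :=
  lp.flatMap fun ph => [Sum.inl ph.1, Sum.inr ph.2]

theorem pairsFl_nil : pairsFl (F := F) (G := G) (H := H) [] = [] := rfl

theorem pairsFl_cons (x : (reduct F G).E × H.E) (t : List ((reduct F G).E × H.E)) :
    pairsFl (x :: t) = Sum.inl x.1 :: Sum.inr x.2 :: pairsFl t := rfl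

theorem pairsFl_ne {lp : List ((reduct F G).E × H.E)} (h : lp ≠ []) : pairsFl lp ≠ [] := by
  rcases lp with _ | ⟨x, t⟩
  · exact absurd rfl h
  · rw [pairsFl_cons]; simp

theorem head?_pairsFl {lp : List ((reduct F G).E × H.E)} (h : lp ≠ []) :
    (pairsFl lp).head? = some (Sum.inl (lp.head h).1) := by
  rcases lp with _ | ⟨x, t⟩
  · exact absurd rfl h
  · rfl

theorem getLast?_pairsFl {lp : List ((reduct F G).E × H.E)} (h : lp ≠ []) :
    (pairsFl lp).getLast? = some (Sum.inr (lp.getLast h).2) := by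
  induction lp with
  | nil => exact absurd rfl h
  | cons x t ih =>
      rcases eq_or_ne t [] with rfl | htne
      · simp [pairsFl_cons, pairsFl_nil]
      · rw [pairsFl_cons, show (Sum.inl x.1 : (reduct F G).E ⊕ H.E) :: Sum.inr x.2 :: pairsFl t
            = [Sum.inl x.1, Sum.inr x.2] ++ pairsFl t from rfl,
          getLast?_append_right' (pairsFl_ne htne), ih htne, List.getLast_cons htne]

theorem pairsFl_alt (lp : List ((reduct F G).E × H.E)) :
    List.Chain' (fun a b : (reduct F G).E ⊕ H.E => a.isLeft ≠ b.isLeft) (pairsFl lp) := by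
  induction lp with
  | nil => simp [pairsFl_nil]
  | cons x t ih =>
      rw [pairsFl_cons]
      refine List.chain'_cons.2 ⟨by simp, ?_⟩
      refine List.chain'_cons'.2 ⟨?_, ih⟩
      intro y hy
      rcases eq_or_ne t [] with rfl | htne
      · rw [pairsFl_nil] at hy; cases hy
      · rw [head?_pairsFl htne] at hy
        simp only [Option.mem_def, Option.some_inj] at hy
        subst hy
        simp

theorem unmap (s : List (F.E ⊕ (union G H).E)) (hall : ∀ x ∈ s, isHb x = false) :
    ∃ s2 : List (F.E ⊕ G.E), s = s2.map (emb3 F G H) := by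
  induction s with
  | nil => exact ⟨[], rfl⟩
  | cons x t ih =>
      obtain ⟨e, he⟩ := isH_false_iff.1 (hall x (List.mem_cons_self))
      obtain ⟨t2, ht2⟩ := ih fun y hy => hall y (List.mem_cons_of_mem x hy)
      exact ⟨e :: t2, by rw [List.map_cons, ← he, ← ht2]⟩

/-- The decomposition of an anchored alternating path into reduction-edge/H-edge blocks. -/
theorem sc (hHsym : ∀ v ∈ H.verts, v ∈ symmDiff F.verts G.verts) (N : ℕ) :
    ∀ (l : List (F.E ⊕ (union G H).E)) (hne : l ≠ []), l.length ≤ N →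
      List.Chain' (rel F (union G H)) l →
      isHb (l.getLast hne) = true →
      psrc F (union G H) (l.head hne) ∈ H.verts →
      (l.head hne).isLeft = true →
      ∃ lp : List ((reduct F G).E × H.E), lp ≠ [] ∧ expandE (pairsFl lp) = l := by
  induction N with
  | zero =>
      intro l hne hlen
      exact absurd (List.length_eq_zero_iff.1 (Nat.le_zero.1 hlen)) hne
  | succ N ih =>
      intro l hne hlen hch hlast hsrc hleft
      set s := l.takeWhile (fun x => !isHb x) with hsdef
      set rest := l.dropWhile (fun x => !isHb x) with hrestdef
      have hsl : s ++ rest = l := List.takeWhile_append_dropWhile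
      have hrest_ne : rest ≠ [] := by
        intro h0
        have hall : ∀ x ∈ l, isHb x = false := by
          intro x hx
          simpa using List.dropWhile_eq_nil_iff.1 h0 x hx
        have h1 := hall _ (List.getLast_mem hne)
        rw [hlast] at h1
        cases h1
      have hrH : isHb (rest.head hrest_ne) = true := by
        simpa using List.head_dropWhile_not (fun x => !isHb x) (l := l) hrest_ne
      obtain ⟨hh, hth⟩ := isH_true_iff.1 hrH
      have hs_ne : s ≠ [] := by
        intro h0
        have h1 : rest = l := by rw [← hsl, h0, List.nil_append]
        have h2 : l.head? = some (HHe F G hh) := by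
          rw [← h1, List.head?_eq_head hrest_ne, hth]
        rw [List.head?_eq_head hne] at h2
        have h3 : isHb (l.head hne) = true := by
          rw [Option.some_inj.1 h2]; rfl
        rw [isHb_false_of_isLeft hleft] at h3
        cases h3
      have hsH : ∀ x ∈ s, isHb x = false := by
        intro x hx
        simpa using List.mem_takeWhile_imp hx
      obtain ⟨s2, hs2⟩ := unmap s hsH
      have hs2ne : s2 ≠ [] := by
        rintro rfl
        rw [List.map_nil] at hs2
        exact hs_ne hs2
      have hchs : List.Chain' (rel F (union G H)) s := hch.prefix ⟨rest, hsl⟩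
      have hchs2 : List.Chain' (rel F G) s2 := by
        rw [hs2] at hchs
        exact ((List.chain'_map _).1 hchs).imp fun a b hab => rel_emb3.1 hab
      -- identification of head and last of s2
      have hheads2 : emb3 F G H (s2.head hs2ne) = l.head hne := by
        have h1 : (s2.map (emb3 F G H)).head? = l.head? := by
          rw [← hs2, ← hsl, head?_append_left' hs_ne]
        rw [List.head?_map, List.head?_eq_head hs2ne, List.head?_eq_head hne] at h1
        simpa using h1
      have hlasts2 : emb3 F G H (s2.getLast hs2ne) = s.getLast hs_ne := by
        have h1 : (s2.map (emb3 F G H)).getLast? = s.getLast? := by rw [← hs2]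
        rw [List.getLast?_map, List.getLast?_eq_getLast hs2ne,
          List.getLast?_eq_getLast hs_ne] at h1
        simpa using h1
      have hch2 : List.Chain' (rel F (union G H)) (s ++ rest) := by rw [hsl]; exact hch
      have hjun : rel F (union G H) (s.getLast hs_ne) (rest.head hrest_ne) :=
        (List.chain'_append.1 hch2).2.2 _ (by rw [List.getLast?_eq_getLast hs_ne]; rfl)
          _ (by rw [List.head?_eq_head hrest_ne]; rfl)
      set P : AltPath F G := ⟨s2, hs2ne, hchs2⟩ with hP
      have hPsrc : P.src ∈ H.verts := by
        have h1 : P.src = psrc F (union G H) (l.head hne) := by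
          rw [← hheads2, psrc_emb3]
          rfl
        rw [h1]
        exact hsrc
      have hPtgt_val : P.tgt = H.src hh := by
        have h1 := hjun.1
        rw [hth] at h1
        have h2 : P.tgt = ptgt F (union G H) (s.getLast hs_ne) := by
          rw [← hlasts2, ptgt_emb3]
          rfl
        rw [h2, h1]
        rfl
      have hPsrcsym : P.src ∈ symmDiff F.verts G.verts := hHsym _ hPsrc
      have hPtgtsym : P.tgt ∈ symmDiff F.verts G.verts := by
        rw [hPtgt_val]
        exact hHsym _ (H.src_mem hh)
      set PE : (reduct F G).E := ⟨P, hPsrcsym, hPtgtsym⟩ with hPE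
      have hrest_eq : rest = HHe F G hh :: rest.tail := by
        rw [← hth]
        exact (List.cons_head_tail hrest_ne).symm
      set t := rest.tail with htdef
      have hexgPE : exg (Sum.inl PE) = s2.map (emb3 F G H) := rfl
      rcases eq_or_ne t [] with htnil | htne
      · refine ⟨[(PE, hh)], by simp, ?_⟩
        rw [pairsFl_cons, pairsFl_nil, expandE_cons, expandE_cons, expandE_nil,
          List.append_nil, hexgPE, ← hs2, ← hsl, hrest_eq, htnil]
        rfl
      · have hchr : List.Chain' (rel F (union G H)) rest := hch.suffix (List.dropWhile_suffix _)
        have hjrt : rel F (union G H) (HHe F G hh) (t.head htne) := by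
          have h1 : rest = HHe F G hh :: t.head htne :: t.tail := by
            rw [hrest_eq, List.cons_head_tail]
          rw [h1] at hchr
          exact (List.chain'_cons.1 hchr).1
        have hchr' : List.Chain' (rel F (union G H)) rest :=
          hch.suffix (List.dropWhile_suffix _)
        have hlen_t : t.length ≤ N := by
          have h1 : l.length = s.length + rest.length := by rw [← hsl, List.length_append]
          have h2 : rest.length = t.length + 1 := by rw [hrest_eq, List.length_cons]
          have h3 : 0 < s.length := List.length_pos_iff.2 hs_ne
          omega
        have hgl : t.getLast? = l.getLast? := by
          rw [← hsl, getLast?_append_right' hrest_ne, hrest_eq, ← List.singleton_append,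
            getLast?_append_right' htne]
        have htlast : isHb (t.getLast htne) = true := by
          rw [List.getLast?_eq_getLast (l := t) htne, List.getLast?_eq_getLast (l := l) hne] at hgl
          rw [Option.some_inj.1 hgl]
          exact hlast
        have htsrc : psrc F (union G H) (t.head htne) ∈ H.verts := by
          rw [← hjrt.1]
          exact H.tgt_mem hh
        have htleft : (t.head htne).isLeft = true := by
          by_contra h0
          apply hjrt.2
          rw [Bool.not_eq_true] at h0
          rw [h0]
          rfl
        have hcht : List.Chain' (rel F (union G H)) t := hchr'.suffix (List.tail_suffix rest)
        obtain ⟨lp', hlp'ne, hlp'⟩ := ih t htne hlen_t hcht htlast htsrc htleft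
        refine ⟨(PE, hh) :: lp', by simp, ?_⟩
        rw [pairsFl_cons, expandE_cons, expandE_cons, hlp', hexgPE, ← hs2, ← hsl, hrest_eq]
        rfl

end EGraph

namespace EGraph

open List CycAux

variable {V : Type} [DecidableEq V] {F G H : EGraph V}

set_option linter.unusedSectionVars false

/-- the alternation relation -/
def altq (F G H : EGraph V) : ((reduct F G).E ⊕ H.E) → ((reduct F G).E ⊕ H.E) → Prop :=
  fun a b => a.isLeft ≠ b.isLeft

theorem expandE_split (lq : List ((reduct F G).E ⊕ H.E)) :
    ∀ (k : ℕ), k ≤ (expandE lq).length →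
      (k = 0 ∨ ∃ z, (expandE lq)[k-1]? = some z ∧ isHb z = true) →
      ∃ j, j ≤ lq.length ∧ (expandE lq).take k = expandE (lq.take j) ∧
        (expandE lq).drop k = expandE (lq.drop j) := by
  induction lq with
  | nil =>
      intro k hk _
      refine ⟨0, by simp, ?_, ?_⟩ <;> simp [expandE_nil]
  | cons x t ih =>
      intro k hk hcond
      rcases Nat.eq_zero_or_pos k with rfl | hk0
      · exact ⟨0, by simp, by simp [expandE_nil], by simp [expandE_nil]⟩
      rcases hcond with rfl | ⟨z, hz, hzH⟩
      · exact absurd rfl (Nat.pos_iff_ne_zero.1 hk0)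
      by_cases hcase : k < (exg x).length
      · exfalso
        rw [expandE_cons, List.getElem?_append_left (by omega)] at hz
        rcases x with P | h
        · rw [show exg (Sum.inl P) = P.1.edges.map (emb3 F G H) from rfl,
            List.getElem?_map, Option.map_eq_some_iff] at hz
          obtain ⟨w, _, hw⟩ := hz
          rw [← hw, isH_emb3] at hzH
          cases hzH
        · have h1 : (exg (F := F) (G := G) (Sum.inr h)).length = 1 := rfl
          omega
      · push_neg at hcase
        rcases eq_or_lt_of_le hcase with heq | hlt2
        · refine ⟨1, by simp, ?_, ?_⟩
          · rw [expandE_cons, ← heq, List.take_left,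
              show (x :: t).take 1 = [x] from rfl, expandE_cons, expandE_nil, List.append_nil]
          · rw [expandE_cons, ← heq, List.drop_left, show (x :: t).drop 1 = t from rfl]
        · set k' := k - (exg x).length with hk'def
          have hk'le : k' ≤ (expandE t).length := by
            rw [expandE_cons, List.length_append] at hk
            omega
          have hcond' : k' = 0 ∨ ∃ z, (expandE t)[k'-1]? = some z ∧ isHb z = true := by
            right
            refine ⟨z, ?_, hzH⟩
            rw [expandE_cons, List.getElem?_append_right (by omega)] at hz
            rw [show k' - 1 = k - 1 - (exg x).length from by omega]
            exact hz
          obtain ⟨j, hj, h1, h2⟩ := ih k' hk'le hcond'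
          refine ⟨j + 1, by simpa using hj, ?_, ?_⟩
          · rw [List.take_succ_cons, expandE_cons, expandE_cons,
              List.take_append, List.take_of_length_le hcase, ← hk'def, h1]
          · rw [List.drop_succ_cons, expandE_cons,
              List.drop_append, List.drop_of_length_le hcase, ← hk'def, h2,
              List.nil_append]

theorem block_not_lt {P1 P2 : (reduct F G).E} {t1 t2 : List ((reduct F G).E ⊕ H.E)}
    (halt1 : List.Chain' (altq F G H) (Sum.inl P1 :: t1))
    (heq : expandE (Sum.inl P1 :: t1) = expandE (Sum.inl P2 :: t2)) :
    ¬ (P1.1.edges.length < P2.1.edges.length) := by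
  intro hlt
  set n1 := P1.1.edges.length with hn1
  have hA1 : (exg (H := H) (Sum.inl P1)).length = n1 := by
    show (P1.1.edges.map (emb3 F G H)).length = n1
    rw [List.length_map]
  have hA2 : (exg (H := H) (Sum.inl P2)).length = P2.1.edges.length := by
    show (P2.1.edges.map (emb3 F G H)).length = _
    rw [List.length_map]
  -- right value at n1 is a non-H edge
  have hR : ∃ z, (expandE (Sum.inl P2 :: t2))[n1]? = some z ∧ isHb z = false := by
    rw [expandE_cons, List.getElem?_append_left (by omega),
      show exg (Sum.inl P2) = P2.1.edges.map (emb3 F G H) from rfl, List.getElem?_map,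
      List.getElem?_eq_getElem (by omega : n1 < P2.1.edges.length)]
    exact ⟨_, rfl, isH_emb3 _⟩
  -- t1 is nonempty
  have ht1ne : t1 ≠ [] := by
    rintro rfl
    have h1 : (expandE ([Sum.inl P1] : List ((reduct F G).E ⊕ H.E))).length = n1 := by
      rw [expandE_cons, expandE_nil, List.append_nil, hA1]
    have h2 := congrArg List.length heq
    rw [h1, expandE_cons, List.length_append, hA2] at h2
    omega
  -- head of t1 is an H-edge
  obtain ⟨hh1, hth1⟩ : ∃ hh : H.E, t1.head ht1ne = Sum.inr hh := by
    have halth := (List.chain'_cons'.1 halt1).1 _ (List.head?_eq_head ht1ne)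
    rcases hY : t1.head ht1ne with P | hh
    · exfalso
      apply halth
      rw [hY]
      rfl
    · exact ⟨hh, rfl⟩
  -- left value at n1 is an H-edge
  have hL : (expandE (Sum.inl P1 :: t1))[n1]? = some (HHe F G hh1) := by
    rw [expandE_cons, List.getElem?_append_right (by omega), hA1, Nat.sub_self,
      ← List.head?_eq_getElem?, head?_expandE ht1ne, hth1]
    rfl
  obtain ⟨z, hz, hzH⟩ := hR
  rw [← heq, hL] at hz
  rw [← Option.some_inj.1 hz] at hzH
  cases hzH

theorem expandE_inj : ∀ (l1 l2 : List ((reduct F G).E ⊕ H.E)),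
    List.Chain' (altq F G H) l1 → List.Chain' (altq F G H) l2 →
    expandE l1 = expandE l2 → l1 = l2 := by
  intro l1
  induction l1 with
  | nil =>
      intro l2 _ _ heq
      rw [expandE_nil] at heq
      rw [expandE_eq_nil heq.symm]
  | cons x t1 ih =>
      intro l2 halt1 halt2 heq
      rcases l2 with _ | ⟨y, t2⟩
      · rw [expandE_nil] at heq
        exact absurd (expandE_eq_nil heq) (List.cons_ne_nil x t1)
      have hhead : (exg x).head? = (exg y).head? := by
        have h1 := congrArg List.head? heq
        rwa [head?_expandE (List.cons_ne_nil x t1), head?_expandE (List.cons_ne_nil y t2)] at h1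
      rcases x with P1 | h1 <;> rcases y with P2 | h2
      · -- both reduction blocks
        have hlen : P1.1.edges.length = P2.1.edges.length :=
          Nat.le_antisymm (Nat.not_lt.1 (block_not_lt halt2 heq.symm))
            (Nat.not_lt.1 (block_not_lt halt1 heq))
        rw [expandE_cons, expandE_cons] at heq
        obtain ⟨hAB, hT⟩ := List.append_inj heq (by
          show (P1.1.edges.map (emb3 F G H)).length = (P2.1.edges.map (emb3 F G H)).length
          rw [List.length_map, List.length_map, hlen])
        have hP : P1 = P2 := by
          apply Subtype.ext
          apply altPath_ext
          exact List.map_injective_iff.2 emb3_inj hAB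
        rw [hP, ih t2 (List.chain'_cons'.1 halt1).2 (List.chain'_cons'.1 halt2).2 hT]
      · exfalso
        rw [show exg (Sum.inl P1) = P1.1.edges.map (emb3 F G H) from rfl, List.head?_map,
          List.head?_eq_head P1.1.ne, show exg (Sum.inr h2) = [HHe F G h2] from rfl] at hhead
        exact emb3_ne_HHe _ _ (Option.some_inj.1 hhead)
      · exfalso
        rw [show exg (Sum.inl P2) = P2.1.edges.map (emb3 F G H) from rfl, List.head?_map,
          List.head?_eq_head P2.1.ne, show exg (Sum.inr h1) = [HHe F G h1] from rfl] at hhead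
        exact emb3_ne_HHe _ _ (Option.some_inj.1 hhead.symm)
      · rw [expandE_cons, expandE_cons,
          show exg (Sum.inr h1) = [HHe F G h1] from rfl,
          show exg (Sum.inr h2) = [HHe F G h2] from rfl,
          List.singleton_append, List.singleton_append] at heq
        have h12 : h1 = h2 := by
          have := (List.cons_eq_cons.1 heq).1
          exact Sum.inr.inj (Sum.inr.inj this)
        rw [h12, ih t2 (List.chain'_cons'.1 halt1).2 (List.chain'_cons'.1 halt2).2
          (List.cons_eq_cons.1 heq).2]

theorem chain'_flatten_replicate {α : Type*} {R : α → α → Prop} {q : List α}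
    (hch : List.Chain' R q) (hw : ∀ x ∈ q.getLast?, ∀ y ∈ q.head?, R x y) (n : ℕ) :
    List.Chain' R ((List.replicate n q).flatten) := by
  rcases eq_or_ne q [] with rfl | hq
  · induction n with
    | zero => simp
    | succ n ihn => rw [List.replicate_succ, List.flatten_cons, List.nil_append]; exact ihn
  · induction n with
    | zero => simp
    | succ n ihn =>
        rw [List.replicate_succ, List.flatten_cons, List.chain'_append]
        refine ⟨hch, ihn, ?_⟩
        intro x hx y hy
        rcases Nat.eq_zero_or_pos n with rfl | hn
        · rw [show (List.replicate 0 q).flatten = [] from rfl] at hy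
          cases hy
        · obtain ⟨m, rfl⟩ : ∃ m, n = m + 1 := ⟨n - 1, by omega⟩
          rw [List.replicate_succ, List.flatten_cons, head?_append_left' hq] at hy
          exact hw x hx y hy

theorem exists_anchor {lq : List ((reduct F G).E ⊕ H.E)} (hne : lq ≠ [])
    (hw : ∀ x ∈ lq.getLast?, ∀ y ∈ lq.head?, altq F G H x y) :
    ∃ i, ∃ (hi : i < lq.length), ∃ hh : H.E, lq[i] = Sum.inr hh := by
  have hwl := hw _ (by rw [List.getLast?_eq_getLast hne]; rfl)
    _ (by rw [List.head?_eq_head hne]; rfl)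
  rcases hL : lq.getLast hne with P | hh
  · rcases hHd : lq.head hne with P' | hh
    · exfalso
      apply hwl
      rw [hL, hHd]
      rfl
    · refine ⟨0, List.length_pos_iff.2 hne, hh, ?_⟩
      rw [← hHd]
      exact (List.head_eq_getElem (l := lq) hne).symm
  · refine ⟨lq.length - 1, by have := List.length_pos_iff.2 hne; omega, hh, ?_⟩
    rw [← hL]
    exact (List.getLast_eq_getElem (l := lq) hne).symm

theorem expandE_rotate_fwd (lq : List ((reduct F G).E ⊕ H.E)) (k : ℕ) :
    ∃ m, expandE (lq.rotate k) = (expandE lq).rotate m := by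
  rcases eq_or_ne lq [] with rfl | hne
  · exact ⟨0, by simp [expandE_nil]⟩
  have hlen : 0 < lq.length := List.length_pos_iff.2 hne
  have hlt : k % lq.length < lq.length := Nat.mod_lt _ hlen
  refine ⟨(expandE (lq.take (k % lq.length))).length, ?_⟩
  have hsplit : expandE lq
      = expandE (lq.take (k % lq.length)) ++ expandE (lq.drop (k % lq.length)) := by
    rw [← expandE_append, List.take_append_drop]
  rw [← List.rotate_mod lq k, List.rotate_eq_drop_append_take hlt.le, expandE_append, hsplit,
    List.rotate_eq_drop_append_take (by rw [List.length_append]; exact Nat.le_add_right _ _),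
    List.drop_left, List.take_left]

theorem expandE_rot {l1 l2 : List ((reduct F G).E ⊕ H.E)}
    (halt1 : List.Chain' (altq F G H) l1)
    (hw1 : ∀ x ∈ l1.getLast?, ∀ y ∈ l1.head?, altq F G H x y)
    (halt2 : List.Chain' (altq F G H) l2)
    (hanc2 : ∀ (h2 : l2 ≠ []), ∃ hh : H.E, l2.getLast h2 = Sum.inr hh)
    {k : ℕ} (heq : expandE l2 = (expandE l1).rotate k) : ∃ j, l2 = l1.rotate j := by
  rcases eq_or_ne l1 [] with rfl | h1ne
  · rw [expandE_nil, List.rotate_nil] at heq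
    rw [expandE_eq_nil heq]
    exact ⟨0, by simp⟩
  rcases eq_or_ne l2 [] with rfl | h2ne
  · exfalso
    rw [expandE_nil] at heq
    have : (expandE l1).length = 0 := by
      rw [← List.length_rotate (expandE l1) k, ← heq, List.length_nil]
    exact expandE_ne h1ne (List.length_eq_zero_iff.1 this)
  have hxne : expandE l1 ≠ [] := expandE_ne h1ne
  have hlen : 0 < (expandE l1).length := List.length_pos_iff.2 hxne
  have heq' : expandE l2 = (expandE l1).rotate (k % (expandE l1).length) := by
    rw [List.rotate_mod]
    exact heq
  set k' := k % (expandE l1).length with hk'def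
  have hk'lt : k' < (expandE l1).length := Nat.mod_lt _ hlen
  rcases Nat.eq_zero_or_pos k' with hk0 | hk0
  · rw [hk0, List.rotate_zero] at heq'
    exact ⟨0, by rw [List.rotate_zero]; exact (expandE_inj l1 l2 halt1 halt2 heq'.symm).symm⟩
  -- the rotation point is just after an H-edge
  obtain ⟨hh2, hhh2⟩ := hanc2 h2ne
  have hlast2 : (expandE l2).getLast? = some (HHe F G hh2) := by
    rw [getLast?_expandE h2ne, hhh2]
    rfl
  have hcut : ((expandE l1).rotate k').getLast? = some ((expandE l1)[k'-1]'(by omega)) :=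
    getLast?_rotate hk0 hk'lt.le
  have hxH : ∃ z, (expandE l1)[k'-1]? = some z ∧ isHb z = true := by
    refine ⟨(expandE l1)[k'-1]'(by omega), List.getElem?_eq_getElem _, ?_⟩
    rw [← heq', hlast2] at hcut
    rw [← Option.some_inj.1 hcut]
    rfl
  obtain ⟨j, hj, htake, hdrop⟩ := expandE_split l1 k' hk'lt.le (Or.inr hxH)
  refine ⟨j, ?_⟩
  have hexp : expandE (l1.rotate j) = expandE l2 := by
    rw [List.rotate_eq_drop_append_take hj, expandE_append, ← htake, ← hdrop, heq',
      List.rotate_eq_drop_append_take hk'lt.le]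
  exact (expandE_inj (l1.rotate j) l2 (cyc_rotate halt1 hw1 j).1 halt2 hexp).symm

theorem prim_expandE {lq : List ((reduct F G).E ⊕ H.E)} (hne : lq ≠ [])
    (halt : List.Chain' (altq F G H) lq)
    (hw : ∀ x ∈ lq.getLast?, ∀ y ∈ lq.head?, altq F G H x y)
    (hanc : ∃ hh : H.E, lq.getLast hne = Sum.inr hh)
    (hp : PrimitiveList lq) : PrimitiveList (expandE lq) := by
  obtain ⟨hh, hhh⟩ := hanc
  intro n r hr
  rcases n with _ | m
  · exfalso
    exact absurd (expandE_eq_nil (by simpa using hr)) hne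
  have hrne : r ≠ [] := by
    rintro rfl
    have h0 : expandE lq = [] := by simpa using hr
    exact expandE_ne hne h0
  have hxlast : (expandE lq).getLast? = some (HHe F G hh) := by
    rw [getLast?_expandE hne, hhh]
    rfl
  have hx2 : expandE lq = (List.replicate m r).flatten ++ r := by
    rw [hr, List.replicate_succ', List.flatten_append, List.flatten_cons, List.flatten_nil,
      List.append_nil]
  have hrlast : r.getLast? = some (HHe F G hh) := by
    rw [← getLast?_append_right' (a := (List.replicate m r).flatten) hrne, ← hx2, hxlast]
  have hx3 : expandE lq = r ++ (List.replicate m r).flatten := by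
    rw [hr, List.replicate_succ, List.flatten_cons]
  have hrlen : r.length ≤ (expandE lq).length := by
    rw [hx3, List.length_append]
    omega
  have hrpos : 0 < r.length := List.length_pos_iff.2 hrne
  have hxr : ∃ z, (expandE lq)[r.length - 1]? = some z ∧ isHb z = true := by
    refine ⟨HHe F G hh, ?_, rfl⟩
    rw [hx3, List.getElem?_append_left (by omega),
      List.getElem?_eq_getElem (by omega : r.length - 1 < r.length)]
    rw [List.getLast?_eq_getLast (l := r) hrne, List.getLast_eq_getElem] at hrlast
    exact hrlast
  obtain ⟨j, hj, htake, hdrop⟩ := expandE_split lq r.length hrlen (Or.inr hxr)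
  have hre : r = expandE (lq.take j) := by
    rw [← htake, hx3, List.take_left]
  have hq'ne : lq.take j ≠ [] := by
    intro h0
    rw [h0, expandE_nil] at hre
    exact hrne hre
  have hq'last : (lq.take j).getLast? = some (Sum.inr hh : (reduct F G).E ⊕ H.E) := by
    have h1 : (exg ((lq.take j).getLast hq'ne)).getLast? = some (HHe F G hh) := by
      rw [← getLast?_expandE hq'ne, ← hre, hrlast]
    rcases hY : (lq.take j).getLast hq'ne with P | hh'
    · exfalso
      rw [hY, show exg (Sum.inl P) = P.1.edges.map (emb3 F G H) from rfl, List.getLast?_map,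
        List.getLast?_eq_getLast P.1.ne] at h1
      exact emb3_ne_HHe _ _ (Option.some_inj.1 h1)
    · rw [hY] at h1
      have h2 : hh' = hh := Sum.inr.inj (Sum.inr.inj (Option.some_inj.1 h1))
      rw [List.getLast?_eq_getLast hq'ne, hY, h2]
  have hheadlq : (lq.head hne).isLeft = true := by
    have hwl := hw _ (by rw [List.getLast?_eq_getLast hne]; rfl)
      _ (by rw [List.head?_eq_head hne]; rfl)
    rw [hhh] at hwl
    by_contra h0
    apply hwl
    rw [Bool.not_eq_true] at h0
    rw [h0]
    rfl
  have hq'head : (lq.take j).head? = lq.head? := by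
    have hj0 : 0 < j := by
      rcases Nat.eq_zero_or_pos j with rfl | h
      · rw [List.take_zero] at hq'ne
        exact absurd rfl hq'ne
      · exact h
    rw [List.head?_take, if_neg (by omega)]
  have hq'wrap : ∀ x ∈ (lq.take j).getLast?, ∀ y ∈ (lq.take j).head?, altq F G H x y := by
    intro x hx y hy
    rw [hq'last] at hx
    rw [hq'head, List.head?_eq_head hne] at hy
    simp only [Option.mem_def, Option.some_inj] at hx hy
    subst hx
    subst hy
    show (Sum.inr hh : (reduct F G).E ⊕ H.E).isLeft ≠ _
    rw [hheadlq]
    simp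
  have haltpow : List.Chain' (altq F G H) ((List.replicate (m+1) (lq.take j)).flatten) :=
    chain'_flatten_replicate (halt.take j) hq'wrap (m+1)
  have hpow : lq = (List.replicate (m+1) (lq.take j)).flatten := by
    refine expandE_inj _ _ halt haltpow ?_
    rw [show expandE ((List.replicate (m+1) (lq.take j)).flatten)
        = (List.replicate (m+1) (expandE (lq.take j))).flatten from pow_flatMap _ _ _,
      ← hre, ← hr]
  exact hp (m+1) _ hpow

theorem prim_expandE' {lq : List ((reduct F G).E ⊕ H.E)} (hne : lq ≠ [])
    (halt : List.Chain' (altq F G H) lq)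
    (hw : ∀ x ∈ lq.getLast?, ∀ y ∈ lq.head?, altq F G H x y)
    (hp : PrimitiveList lq) : PrimitiveList (expandE lq) := by
  obtain ⟨i, hi, hh, hhi⟩ := exists_anchor hne hw
  have ha_le : i + 1 ≤ lq.length := by omega
  have hrne : lq.rotate (i+1) ≠ [] := by
    rw [← List.length_pos_iff, List.length_rotate]
    omega
  have hanc : ∃ hh' : H.E, (lq.rotate (i+1)).getLast hrne = Sum.inr hh' := by
    refine ⟨hh, ?_⟩
    have h1 := getLast?_rotate (l := lq) (k := i+1) (by omega) ha_le
    rw [List.getLast?_eq_getLast hrne] at h1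
    have h2 := Option.some_inj.1 h1
    rw [h2]
    exact hhi
  have hcyc := cyc_rotate halt hw (i+1)
  have hprim' : PrimitiveList (expandE (lq.rotate (i+1))) :=
    prim_expandE hrne hcyc.1 hcyc.2 hanc (prim_rotate hp (i+1))
  obtain ⟨m, hm⟩ := expandE_rotate_fwd lq (i+1)
  obtain ⟨m', hm'⟩ := rotate_surj (expandE lq) m
  have hfin : expandE lq = (expandE (lq.rotate (i+1))).rotate m' := by rw [hm, hm']
  rw [hfin]
  exact prim_rotate hprim' m'

end EGraph

namespace EGraph

open List CycAux

variable {V : Type} [DecidableEq V] {F G H : EGraph V}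

set_option linter.unusedSectionVars false

theorem getLast?_rotate_succ {α : Type*} {l : List α} {i : ℕ} (hi : i < l.length) :
    (l.rotate (i+1)).getLast? = some (l[i]) := by
  have h := getLast?_rotate (l := l) (k := i+1) (Nat.succ_pos i) hi
  simpa using h

/-- the alternation data of a one-cycle in `(F ∷ G) □ H` -/
theorem cyc_altq (q : {p : AltPath (reduct F G) H // p.IsOneCycle}) :
    List.Chain' (altq F G H) q.1.edges :=
  q.1.chain.imp fun _ _ hab => hab.2

theorem cyc_altq_wrap (q : {p : AltPath (reduct F G) H // p.IsOneCycle}) :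
    ∀ x ∈ q.1.edges.getLast?, ∀ y ∈ q.1.edges.head?, altq F G H x y :=
  fun x hx y hy => ((isCycle_iff q.1).1 q.2.1 x hx y hy).2

theorem anchor_rotate {lq : List ((reduct F G).E ⊕ H.E)} (hne : lq ≠ [])
    (hch : List.Chain' (altq F G H) lq)
    (hw : ∀ x ∈ lq.getLast?, ∀ y ∈ lq.head?, altq F G H x y) :
    ∃ a, ∃ (h' : lq.rotate a ≠ []),
      (∃ hh : H.E, (lq.rotate a).getLast h' = Sum.inr hh) ∧
      List.Chain' (altq F G H) (lq.rotate a) ∧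
      (∀ x ∈ (lq.rotate a).getLast?, ∀ y ∈ (lq.rotate a).head?, altq F G H x y) := by
  obtain ⟨i, hi, hh, hhi⟩ := exists_anchor hne hw
  have h' : lq.rotate (i+1) ≠ [] := by
    rw [← List.length_pos_iff, List.length_rotate]
    omega
  refine ⟨i+1, h', ⟨hh, ?_⟩, (cyc_rotate hch hw (i+1)).1, (cyc_rotate hch hw (i+1)).2⟩
  have h1 := getLast?_rotate_succ hi
  rw [List.getLast?_eq_getLast h'] at h1
  rw [Option.some_inj.1 h1]
  exact hhi

theorem expandE_has_H (q : {p : AltPath (reduct F G) H // p.IsOneCycle}) :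
    ∃ hh : H.E, HHe F G hh ∈ expandE q.1.edges := by
  obtain ⟨i, hi, hh, hhi⟩ := exists_anchor q.1.ne (cyc_altq_wrap q)
  refine ⟨hh, ?_⟩
  rw [expandE, List.mem_flatMap]
  exact ⟨q.1.edges[i], List.getElem_mem hi, by rw [hhi]; exact List.mem_singleton_self _⟩

section Main

variable (F G H : EGraph V)

/-- embedding `C(F, G)` into `C(F, G ∪ H)` -/
noncomputable def liftA : Circ F G → Circ F (union G H) :=
  Quotient.lift
    (fun p : {p : AltPath F G // p.IsOneCycle} =>
      Quotient.mk (cycSetoid F (union G H))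
        (mkCyc (p.1.edges.map (emb3 F G H))
          (fun h => p.1.ne (List.map_eq_nil_iff.1 h))
          ((List.chain'_map _).2 (p.1.chain.imp fun _ _ hab => rel_emb3.2 hab))
          (by
            intro x hx y hy
            rw [Option.mem_def, List.getLast?_map] at hx
            rw [Option.mem_def, List.head?_map] at hy
            obtain ⟨x', hx', rfl⟩ := Option.map_eq_some_iff.1 hx
            obtain ⟨y', hy', rfl⟩ := Option.map_eq_some_iff.1 hy
            exact rel_emb3.2 ((isCycle_iff p.1).1 p.2.1 x' hx' y' hy'))
          (prim_map emb3_inj p.2.2)))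
    (by
      rintro p q ⟨k, hk⟩
      apply Quotient.sound
      refine ⟨k, ?_⟩
      show q.1.edges.map (emb3 F G H) = (p.1.edges.map (emb3 F G H)).rotate k
      rw [hk, List.map_rotate])

/-- embedding `C(F ∷ G, H)` into `C(F, G ∪ H)` -/
noncomputable def liftB (hGsub : G.verts ⊆ F.verts) :
    Circ (reduct F G) H → Circ F (union G H) :=
  Quotient.lift
    (fun q : {p : AltPath (reduct F G) H // p.IsOneCycle} =>
      Quotient.mk (cycSetoid F (union G H))
        (mkCyc (expandE q.1.edges)
          (expandE_ne q.1.ne)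
          (expandE_chain hGsub q.1.chain)
          (expandE_wrap hGsub q.1.ne ((isCycle_iff q.1).1 q.2.1))
          (prim_expandE' q.1.ne (cyc_altq q) (cyc_altq_wrap q) q.2.2)))
    (by
      rintro p q ⟨k, hk⟩
      obtain ⟨m, hm⟩ := expandE_rotate_fwd p.1.edges k
      apply Quotient.sound
      refine ⟨m, ?_⟩
      show expandE q.1.edges = (expandE p.1.edges).rotate m
      rw [hk, hm])

theorem liftAB_inj (hGsub : G.verts ⊆ F.verts) :
    Function.Injective (Sum.elim (liftA F G H) (liftB F G H hGsub)) := by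
  intro a b hab
  rcases a with a | a <;> rcases b with b | b
  · obtain ⟨p, rfl⟩ := Quotient.exists_rep a
    obtain ⟨q, rfl⟩ := Quotient.exists_rep b
    obtain ⟨k, hk0⟩ := Quotient.exact hab
    have hk : q.1.edges.map (emb3 F G H) = (p.1.edges.map (emb3 F G H)).rotate k := hk0
    have hk' : q.1.edges.map (emb3 F G H) = (p.1.edges.rotate k).map (emb3 F G H) := by
      rw [List.map_rotate]
      exact hk
    exact congrArg Sum.inl (Quotient.sound ⟨k, List.map_injective_iff.2 emb3_inj hk'⟩)
  · exfalso
    obtain ⟨p, rfl⟩ := Quotient.exists_rep a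
    obtain ⟨q, rfl⟩ := Quotient.exists_rep b
    obtain ⟨k, hk0⟩ := Quotient.exact hab
    have hk : expandE q.1.edges = (p.1.edges.map (emb3 F G H)).rotate k := hk0
    obtain ⟨hh, hmem⟩ := expandE_has_H q
    rw [hk, List.mem_rotate] at hmem
    obtain ⟨e, _, he⟩ := List.mem_map.1 hmem
    exact emb3_ne_HHe e hh he
  · exfalso
    obtain ⟨p, rfl⟩ := Quotient.exists_rep a
    obtain ⟨q, rfl⟩ := Quotient.exists_rep b
    obtain ⟨k, hk0⟩ := Quotient.exact hab
    have hk : q.1.edges.map (emb3 F G H) = (expandE p.1.edges).rotate k := hk0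
    obtain ⟨hh, hmem⟩ := expandE_has_H p
    have hmem2 : HHe F G hh ∈ (expandE p.1.edges).rotate k := List.mem_rotate.2 hmem
    rw [← hk] at hmem2
    obtain ⟨e, _, he⟩ := List.mem_map.1 hmem2
    exact emb3_ne_HHe e hh he
  · obtain ⟨p, rfl⟩ := Quotient.exists_rep a
    obtain ⟨q, rfl⟩ := Quotient.exists_rep b
    obtain ⟨k, hk0⟩ := Quotient.exact hab
    have hk : expandE q.1.edges = (expandE p.1.edges).rotate k := hk0
    obtain ⟨aq, h'q, hancq, haltq', hwq'⟩ := anchor_rotate q.1.ne (cyc_altq q) (cyc_altq_wrap q)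
    obtain ⟨m, hm⟩ := expandE_rotate_fwd q.1.edges aq
    have heq2 : expandE (q.1.edges.rotate aq) = (expandE p.1.edges).rotate (k + m) := by
      rw [hm, hk, List.rotate_rotate]
    obtain ⟨j, hj⟩ := expandE_rot (cyc_altq p) (cyc_altq_wrap p) haltq'
      (fun _ => hancq) heq2
    obtain ⟨m'', hm''⟩ := rotate_surj q.1.edges aq
    refine congrArg Sum.inr (Quotient.sound ⟨j + m'', ?_⟩)
    rw [← List.rotate_rotate, ← hj, hm'']

theorem liftAB_surj (hGsub : G.verts ⊆ F.verts)
    (hHsym : ∀ v ∈ H.verts, v ∈ symmDiff F.verts G.verts) :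
    Function.Surjective (Sum.elim (liftA F G H) (liftB F G H hGsub)) := by
  classical
  intro c
  obtain ⟨p, rfl⟩ := Quotient.exists_rep c
  rcases Classical.em (∀ x ∈ p.1.edges, isHb x = false) with hHcase | hHcase
  · -- no H-edges : comes from `C(F, G)`
    obtain ⟨l2, hl2⟩ := unmap p.1.edges hHcase
    have hne2 : l2 ≠ [] := by
      rintro rfl
      exact p.1.ne (by simpa using hl2)
    have hch2 : List.Chain' (rel F G) l2 := by
      have hc := p.1.chain
      rw [hl2] at hc
      exact ((List.chain'_map _).1 hc).imp fun a b hab => rel_emb3.1 hab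
    have hw2 : ∀ x ∈ l2.getLast?, ∀ y ∈ l2.head?, rel F G x y := by
      intro x hx y hy
      have hwp := (isCycle_iff p.1).1 p.2.1
      refine rel_emb3.1 (hwp (emb3 F G H x) ?_ (emb3 F G H y) ?_)
      · rw [hl2, List.getLast?_map, Option.mem_def.1 hx]
        rfl
      · rw [hl2, List.head?_map, Option.mem_def.1 hy]
        rfl
    have hpr2 : PrimitiveList l2 := by
      apply prim_of_map (emb3 F G H)
      rw [← hl2]
      exact p.2.2
    refine ⟨Sum.inl (Quotient.mk (cycSetoid F G) (mkCyc l2 hne2 hch2 hw2 hpr2)), ?_⟩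
    exact Quotient.sound ⟨0, by rw [List.rotate_zero]; exact hl2⟩
  · -- at least one H-edge : comes from `C(F ∷ G, H)`
    push_neg at hHcase
    obtain ⟨x0, hx0mem, hx0⟩ := hHcase
    rw [Bool.ne_false_iff] at hx0
    obtain ⟨i, hi, hx0i⟩ := List.getElem_of_mem hx0mem
    have hcyc := cyc_rotate p.1.chain ((isCycle_iff p.1).1 p.2.1) (i+1)
    have hlne : p.1.edges.rotate (i+1) ≠ [] := by
      rw [← List.length_pos_iff, List.length_rotate]
      exact List.length_pos_iff.2 p.1.ne
    have hlastv : (p.1.edges.rotate (i+1)).getLast hlne = x0 := by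
      have h1 := getLast?_rotate_succ hi
      rw [List.getLast?_eq_getLast hlne] at h1
      rw [Option.some_inj.1 h1, hx0i]
    have hlast : isHb ((p.1.edges.rotate (i+1)).getLast hlne) = true := by
      rw [hlastv]
      exact hx0
    obtain ⟨hhl, hhl_eq⟩ := isH_true_iff.1 hlast
    have hwl := hcyc.2 _ (by rw [List.getLast?_eq_getLast hlne]; rfl)
      _ (by rw [List.head?_eq_head hlne]; rfl)
    have hsrc : psrc F (union G H) ((p.1.edges.rotate (i+1)).head hlne) ∈ H.verts := by
      have h1 := hwl.1
      rw [hhl_eq] at h1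
      rw [← h1]
      exact H.tgt_mem hhl
    have hleft : ((p.1.edges.rotate (i+1)).head hlne).isLeft = true := by
      by_contra h0
      apply hwl.2
      rw [hhl_eq]
      rw [Bool.not_eq_true] at h0
      rw [h0]
      rfl
    obtain ⟨lp, hlpne, hlp⟩ := sc hHsym (p.1.edges.rotate (i+1)).length
      (p.1.edges.rotate (i+1)) hlne le_rfl hcyc.1 hlast hsrc hleft
    have hlqne : pairsFl lp ≠ [] := pairsFl_ne hlpne
    have hch_lq : List.Chain' (rel (reduct F G) H) (pairsFl lp) :=
      expandE_chain_rev (pairsFl_alt lp) (by rw [hlp]; exact hcyc.1)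
    have hlq_last : (pairsFl lp).getLast hlqne = Sum.inr (lp.getLast hlpne).2 := by
      have h1 := getLast?_pairsFl hlpne
      rw [List.getLast?_eq_getLast hlqne] at h1
      exact Option.some_inj.1 h1
    have hlq_head : (pairsFl lp).head hlqne = Sum.inl (lp.head hlpne).1 := by
      have h1 := head?_pairsFl hlpne
      rw [List.head?_eq_head hlqne] at h1
      exact Option.some_inj.1 h1
    have hckl : ((pairsFl lp).getLast hlqne).isLeft ≠ ((pairsFl lp).head hlqne).isLeft := by
      rw [hlq_last, hlq_head]
      simp
    have hw_lq : ∀ x ∈ (pairsFl lp).getLast?, ∀ y ∈ (pairsFl lp).head?,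
        rel (reduct F G) H x y := by
      intro x hx y hy
      rw [Option.mem_def, List.getLast?_eq_getLast hlqne] at hx
      rw [Option.mem_def, List.head?_eq_head hlqne] at hy
      rw [← Option.some_inj.1 hx, ← Option.some_inj.1 hy]
      exact expandE_wrap_rev hlqne hckl (by rw [hlp]; exact hcyc.2)
    have hprim_lq : PrimitiveList (pairsFl lp) := by
      apply prim_of_flatMap exg
      rw [show (pairsFl lp).flatMap exg = expandE (pairsFl lp) from rfl, hlp]
      exact prim_rotate p.2.2 (i+1)
    refine ⟨Sum.inr (Quotient.mk (cycSetoid (reduct F G) H)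
      (mkCyc (pairsFl lp) hlqne hch_lq hw_lq hprim_lq)), ?_⟩
    obtain ⟨m'', hm''⟩ := rotate_surj p.1.edges (i+1)
    refine Quotient.sound ⟨m'', ?_⟩
    show p.1.edges = (expandE (pairsFl lp)).rotate m''
    rw [hlp]
    exact hm''.symm

end Main

end EGraph

open EGraph

/-- If `V_G ∩ V_H = ∅` and `V_G ∪ V_H ⊆ V_F`, the number of alternating 1-circuits
between `F` and `G ∪ H` equals the number of alternating 1-circuits between `F` and `G`
plus the number of alternating 1-circuits between `F ∷ G` and `H`. -/
theorem stmt3 {V : Type} [DecidableEq V] (F G H : EGraph V)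
    [Countable F.E] [Countable G.E] [Countable H.E]
    (hGH : G.verts ∩ H.verts = ∅) (hsub : G.verts ∪ H.verts ⊆ F.verts) :
    Cardinal.mk (Circ F (union G H)) =
      Cardinal.mk (Circ F G) + Cardinal.mk (Circ (reduct F G) H) := by
  have hGsub : G.verts ⊆ F.verts := fun v hv => hsub (Finset.mem_union_left _ hv)
  have hHsub : H.verts ⊆ F.verts := fun v hv => hsub (Finset.mem_union_right _ hv)
  have hHsym : ∀ v ∈ H.verts, v ∈ symmDiff F.verts G.verts := by
    intro v hv
    rw [Finset.mem_symmDiff]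
    left
    refine ⟨hHsub hv, fun hvg => ?_⟩
    have h0 : v ∈ G.verts ∩ H.verts := Finset.mem_inter.2 ⟨hvg, hv⟩
    rw [hGH] at h0
    exact absurd h0 (Finset.notMem_empty v)
  rw [Cardinal.add_def]
  exact (Cardinal.mk_congr (Equiv.ofBijective (Sum.elim (liftA F G H) (liftB F G H hGsub))
    ⟨liftAB_inj F G H hGsub, liftAB_surj F G H hGsub hHsym⟩)).symm
end

section
/- For real numbers x_1, x_2 ∈ (0,1] with x_1 + x_2 ≤ 1 and y_1, …, y_l ∈ (0,1], the following identity holds: −log(1 − (x_1+x_2)^l y_1⋯y_l) = Σ over equivalence classes (modulo cyclic shift) of primitive words w in the alphabet {1,2} arranged as cycles ρ_1 e_{i_1} ρ_2 e_{i_2} … of −log(1 − weight), where the weight of the class of (i_1,…,i_{ml}) is x_{i_1}⋯x_{i_{ml}} (y_1⋯y_l)^m. Equivalently: Σ_{k≥1} ((x_1+x_2)^l y_1⋯y_l)^k / k = Σ_{primitive necklaces ν over choices of x_1, x_2 at l positions per period} Σ_{d≥1} ω(ν)^d / d. -/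
open scoped ENNReal

/-- A word is primitive (a 1-cycle) when it is nonempty and not a proper power of a
shorter word. -/
def PrimitiveW {α : Type} (u : List α) : Prop :=
  u ≠ [] ∧ ∀ (k : ℕ) (r : List α), u = (List.replicate k r).flatten → k = 1

/-- Cyclic-shift equivalence on primitive words over the alphabet of blocks of `l`
choices among `{1,2}`. -/
def neckSetoid (l : ℕ) : Setoid {u : List (Fin l → Fin 2) // PrimitiveW u} where
  r u v := ∃ k, v.1 = u.1.rotate k
  iseqv := by
    constructor
    · exact fun u => ⟨0, (u.1.rotate_zero).symm⟩
    · rintro u v ⟨k, hk⟩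
      refine ⟨u.1.length * (k + 1) - k, ?_⟩
      rw [hk, List.rotate_rotate]
      rcases Nat.eq_zero_or_pos u.1.length with h0 | hpos
      · rw [List.length_eq_zero_iff] at h0
        simp [h0]
      · have hkle : k ≤ u.1.length * (k + 1) := by nlinarith
        rw [Nat.add_sub_cancel' hkle, List.rotate_length_mul]
    · rintro u v t ⟨k, hk⟩ ⟨m, hm⟩
      exact ⟨k + m, by rw [hm, hk, List.rotate_rotate]⟩

/-- Primitive necklaces: equivalence classes of primitive words modulo cyclic shift. -/
def Necklace (l : ℕ) := Quotient (neckSetoid l)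

/-- The weight of a necklace: the product over all its blocks of the chosen `x`'s,
times `(y_1 ⋯ y_l)^m` where `m` is the length of the word. -/
noncomputable def nweight (l : ℕ) (x : Fin 2 → ℝ) (y : Fin l → ℝ) : Necklace l → ℝ :=
  Quotient.lift
    (fun u => (u.1.map (fun a => ∏ i, x (a i))).prod * (∏ j, y j) ^ u.1.length)
    (by
      rintro u v ⟨k, hk⟩
      show (u.1.map (fun a => ∏ i, x (a i))).prod * (∏ j, y j) ^ u.1.length
          = (v.1.map (fun a => ∏ i, x (a i))).prod * (∏ j, y j) ^ v.1.length
      rw [hk, List.map_rotate, List.length_rotate,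
        ((u.1.map (fun a => ∏ i, x (a i))).rotate_perm k).prod_eq])

namespace ContractionAux

variable {α : Type}

def wpow (u : List α) (e : ℕ) : List α := (List.replicate e u).flatten

@[simp] lemma wpow_zero (u : List α) : wpow u 0 = [] := rfl

lemma wpow_succ (u : List α) (e : ℕ) : wpow u (e + 1) = u ++ wpow u e := by
  simp [wpow, List.replicate_succ]

@[simp] lemma wpow_one (u : List α) : wpow u 1 = u := by simp [wpow_succ]

@[simp] lemma length_wpow (u : List α) (e : ℕ) : (wpow u e).length = e * u.length := by
  induction e with
  | zero => simp
  | succ e ih => rw [wpow_succ, List.length_append, ih]; ring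

lemma wpow_succ' (u : List α) (e : ℕ) : wpow u (e + 1) = wpow u e ++ u := by
  induction e with
  | zero => simp [wpow_succ]
  | succ e ih =>
    rw [wpow_succ, ih, ← List.append_assoc, ← wpow_succ, ← ih]

lemma wpow_add (u : List α) (a b : ℕ) : wpow u (a + b) = wpow u a ++ wpow u b := by
  induction a with
  | zero => simp
  | succ a ih =>
    have h : a + 1 + b = (a + b) + 1 := by omega
    rw [h, wpow_succ, ih, wpow_succ, List.append_assoc]

lemma wpow_wpow (u : List α) (e k : ℕ) : wpow (wpow u e) k = wpow u (k * e) := by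
  induction k with
  | zero => simp
  | succ k ih =>
    rw [wpow_succ, ih, ← wpow_add]
    congr 1
    ring

lemma take_append_len (s t : List α) (i : ℕ) : (s ++ t).take (s.length + i) = s ++ t.take i := by
  rw [List.take_append]
  simp

lemma take_wpow (u : List α) : ∀ (e j : ℕ), j ≤ e → (wpow u e).take (j * u.length) = wpow u j := by
  intro e
  induction e with
  | zero => intro j hj; interval_cases j; simp
  | succ e ih =>
    intro j hj
    cases j with
    | zero => simp
    | succ j =>
      have h : (j + 1) * u.length = u.length + j * u.length := by ring
      rw [wpow_succ, h, take_append_len, ih j (by omega), ← wpow_succ]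

lemma rotate_wpow (u : List α) (e : ℕ) (he : 0 < e) : (wpow u e).rotate u.length = wpow u e := by
  obtain ⟨e, rfl⟩ : ∃ e', e = e' + 1 := ⟨e - 1, by omega⟩
  rw [wpow_succ, List.rotate_append_length_eq, ← wpow_succ', wpow_succ]

lemma rotate_mul_self (w : List α) (p : ℕ) (h : w.rotate p = w) (k : ℕ) : w.rotate (p * k) = w := by
  induction k with
  | zero => simp
  | succ k ih => rw [Nat.mul_succ, ← List.rotate_rotate, ih, h]

lemma rotate_gcd (w : List α) (p q : ℕ) (hp : w.rotate p = w) (hq : w.rotate q = w) :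
    w.rotate (Nat.gcd p q) = w := by
  rcases Nat.eq_zero_or_pos w.length with h0 | hn
  · rw [List.length_eq_zero_iff] at h0; subst h0; simp
  · set n := w.length with hn'
    set s : ℕ := ((Nat.gcdA p q) % (n : ℤ)).toNat with hsdef
    set t : ℕ := ((Nat.gcdB p q) % (n : ℤ)).toNat with htdef
    have hnz : (n : ℤ) ≠ 0 := by exact_mod_cast hn.ne'
    have hs : (s : ℤ) = Nat.gcdA p q % (n : ℤ) :=
      Int.toNat_of_nonneg (Int.emod_nonneg _ hnz)
    have ht : (t : ℤ) = Nat.gcdB p q % (n : ℤ) :=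
      Int.toNat_of_nonneg (Int.emod_nonneg _ hnz)
    have hA : Nat.gcdA p q % (n : ℤ) ≡ Nat.gcdA p q [ZMOD (n : ℤ)] :=
      Int.emod_emod_of_dvd _ dvd_rfl
    have hB : Nat.gcdB p q % (n : ℤ) ≡ Nat.gcdB p q [ZMOD (n : ℤ)] :=
      Int.emod_emod_of_dvd _ dvd_rfl
    have h1 : ((p * s + q * t : ℕ) : ℤ) % (n : ℤ) = ((Nat.gcd p q : ℕ) : ℤ) % (n : ℤ) := by
      push_cast
      rw [hs, ht]
      have h2 : (p : ℤ) * (Nat.gcdA p q % (n : ℤ)) + (q : ℤ) * (Nat.gcdB p q % (n : ℤ))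
          ≡ (p : ℤ) * Nat.gcdA p q + (q : ℤ) * Nat.gcdB p q [ZMOD (n : ℤ)] :=
        (hA.mul_left _).add (hB.mul_left _)
      calc ((p : ℤ) * (Nat.gcdA p q % (n : ℤ)) + (q : ℤ) * (Nat.gcdB p q % (n : ℤ))) % (n : ℤ)
          = ((p : ℤ) * Nat.gcdA p q + (q : ℤ) * Nat.gcdB p q) % (n : ℤ) := h2
        _ = ((Nat.gcd p q : ℕ) : ℤ) % (n : ℤ) := by rw [← Nat.gcd_eq_gcd_ab]
    have key : (p * s + q * t) % n = Nat.gcd p q % n := by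
      rw [← Int.natCast_mod, ← Int.natCast_mod] at h1
      exact_mod_cast h1
    have hfull : w.rotate (p * s + q * t) = w := by
      rw [← List.rotate_rotate, rotate_mul_self w p hp s, rotate_mul_self w q hq t]
    calc w.rotate (Nat.gcd p q) = w.rotate (Nat.gcd p q % n) := by
          rw [hn', List.rotate_mod]
      _ = w.rotate ((p * s + q * t) % n) := by rw [key]
      _ = w.rotate (p * s + q * t) := by rw [hn', List.rotate_mod]
      _ = w := hfull

lemma eq_wpow_of_rotate (p : ℕ) (hp : 0 < p) :
    ∀ (n : ℕ) (w : List α), w.length = n → p ∣ n → w.rotate p = w →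
      w = wpow (w.take p) (n / p) := by
  intro n
  induction n using Nat.strong_induction_on with
  | _ n ih =>
    intro w hlen hdvd hrot
    rcases Nat.eq_zero_or_pos n with rfl | hn
    · have hw : w = [] := List.length_eq_zero_iff.mp hlen
      subst hw; simp
    have hpn : p ≤ n := Nat.le_of_dvd hn hdvd
    by_cases hpe : p = n
    · subst hpe
      rw [Nat.div_self hp, wpow_one, ← hlen, List.take_length]
    · have hlt : p < n := lt_of_le_of_ne hpn hpe
      obtain ⟨k, hk⟩ := hdvd
      have hk2 : 2 ≤ k := by nlinarith
      have hpl : p ≤ w.length := by omega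
      set s := w.take p with hs
      set w' := w.drop p with hw'
      have hsl : s.length = p := by rw [hs, List.length_take]; omega
      have hws : w' ++ s = w := by
        rw [← hrot, List.rotate_eq_drop_append_take hpl]
      have hcomm : w' ++ s = s ++ w' := by
        rw [hws]
        conv_lhs => rw [← List.take_append_drop p w]
      have hw'len : w'.length = n - p := by rw [hw', List.length_drop]; omega
      have h2p : 2 * p ≤ n := by rw [hk]; nlinarith
      have hpw' : p ≤ w'.length := by omega
      have htake : w'.take p = s := by
        calc w'.take p = (w' ++ s).take p := (List.take_append_of_le_length hpw').symm
          _ = (s ++ w').take p := by rw [hcomm]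
          _ = s.take p := List.take_append_of_le_length (le_of_eq hsl.symm)
          _ = s := by rw [← hsl, List.take_length]
      have hdrop : w'.drop p ++ s = w' := by
        calc w'.drop p ++ s = (w' ++ s).drop p := (List.drop_append_of_le_length hpw').symm
          _ = (s ++ w').drop p := by rw [hcomm]
          _ = w' := by rw [← hsl, List.drop_left]
      have hrot' : w'.rotate p = w' := by
        rw [List.rotate_eq_drop_append_take hpw', htake, hdrop]
      have hnp : n - p = p * (k - 1) := by
        obtain ⟨k, rfl⟩ : ∃ k', k = k' + 1 := ⟨k - 1, by omega⟩
        rw [hk, Nat.mul_succ, Nat.add_sub_cancel, Nat.succ_sub_one]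
      have hdvd' : p ∣ n - p := ⟨k - 1, hnp⟩
      have hih := ih (n - p) (by omega) w' hw'len hdvd' hrot'
      have hdiv1 : (n - p) / p = k - 1 := by
        rw [hnp, Nat.mul_div_cancel_left _ hp]
      have hdiv2 : n / p = k := by
        rw [hk, Nat.mul_div_cancel_left _ hp]
      rw [hdiv2]
      rw [hdiv1, htake] at hih
      calc w = s ++ w' := (List.take_append_drop p w).symm
        _ = s ++ wpow s (k - 1) := by rw [hih]
        _ = wpow s k := by
            rw [← wpow_succ]
            congr 1
            omega

lemma prim_iff_rotate {α : Type} {w : List α} (hw : w ≠ []) :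
    PrimitiveW w ↔ ∀ p, 0 < p → p < w.length → p ∣ w.length → w.rotate p ≠ w := by
  constructor
  · rintro ⟨-, hprim⟩ p hp hplt hdvd hrot
    have hw2 := eq_wpow_of_rotate p hp w.length w rfl hdvd hrot
    have h1 := hprim (w.length / p) (w.take p) hw2
    have h2 := Nat.div_mul_cancel hdvd
    rw [h1, one_mul] at h2
    omega
  · intro h
    refine ⟨hw, ?_⟩
    intro k r hkr
    by_contra hk1
    rcases Nat.eq_zero_or_pos k with rfl | hkpos
    · exact hw (by simpa [wpow] using hkr)
    have hk2 : 2 ≤ k := by omega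
    have hr : r ≠ [] := by
      rintro rfl
      exact hw (by simpa [wpow] using hkr)
    have hrl : 0 < r.length := List.length_pos_iff.mpr hr
    have hwl : w.length = k * r.length := by rw [hkr]; exact length_wpow r k
    exact h r.length hrl (by nlinarith) ⟨k, by rw [hwl]; ring⟩
      (by rw [hkr]; exact rotate_wpow r k (by omega))

lemma prim_rotate {α : Type} {u : List α} (hu : PrimitiveW u) (k : ℕ) :
    PrimitiveW (u.rotate k) := by
  have hne : u ≠ [] := hu.1
  have hne' : u.rotate k ≠ [] := by simpa [List.rotate_eq_nil_iff] using hne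
  rw [prim_iff_rotate hne']
  intro p hp hplt hdvd hrot
  rw [List.length_rotate] at hplt hdvd
  have h1 : (u.rotate p).rotate k = u.rotate k := by
    rw [List.rotate_rotate, Nat.add_comm, ← List.rotate_rotate, hrot]
  have h2 : u.rotate p = u := List.rotate_injective k h1
  exact (prim_iff_rotate hne).mp hu p hp hplt hdvd h2

lemma prim_rotate_inj {α : Type} {u : List α} (hu : PrimitiveW u) {i j : ℕ}
    (hi : i < u.length) (hj : j < u.length) (h : u.rotate i = u.rotate j) : i = j := by
  wlog hij : i ≤ j generalizing i j
  · exact (this hj hi h.symm (by omega)).symm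
  rcases eq_or_lt_of_le hij with rfl | hlt
  · rfl
  exfalso
  have hppos : 0 < j - i := by omega
  have hrot : (u.rotate i).rotate (j - i) = u.rotate i := by
    rw [List.rotate_rotate, show i + (j - i) = j by omega, ← h]
  have hv := prim_rotate hu i
  have hlen : (u.rotate i).length = u.length := List.length_rotate u i
  have hg : (u.rotate i).rotate (Nat.gcd (j - i) u.length) = u.rotate i :=
    rotate_gcd _ _ _ hrot (by rw [← hlen]; exact List.rotate_length _)
  have hupos : 0 < u.length := by omega
  have hgpos : 0 < Nat.gcd (j - i) u.length := Nat.gcd_pos_of_pos_right _ hupos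
  have hglt : Nat.gcd (j - i) u.length < u.length :=
    lt_of_le_of_lt (Nat.le_of_dvd hppos (Nat.gcd_dvd_left _ _)) (by omega)
  exact (prim_iff_rotate hv.1).mp hv _ hgpos (by rw [hlen]; exact hglt)
    (by rw [hlen]; exact Nat.gcd_dvd_right _ _) hg

lemma exists_prim_decomp {α : Type} : ∀ (n : ℕ) (w : List α), w.length = n → w ≠ [] →
    ∃ (u : List α) (e : ℕ), PrimitiveW u ∧ w = wpow u (e + 1) := by
  intro n
  induction n using Nat.strong_induction_on with
  | _ n ih =>
    intro w hlen hw
    by_cases hprim : PrimitiveW w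
    · exact ⟨w, 0, hprim, by simp⟩
    · rw [PrimitiveW] at hprim
      push_neg at hprim
      obtain ⟨k, r, hkr, hk1⟩ := hprim hw
      have hkr' : w = wpow r k := hkr
      rcases Nat.eq_zero_or_pos k with rfl | hkpos
      · exact absurd (by simpa [wpow] using hkr') hw
      have hr : r ≠ [] := by
        rintro rfl
        exact hw (by simpa [wpow] using hkr')
      have hrpos : 0 < r.length := List.length_pos_iff.mpr hr
      have hk2 : 2 ≤ k := by omega
      have hrlen : r.length < n := by
        have hwl : w.length = k * r.length := by rw [hkr']; exact length_wpow r k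
        nlinarith
      obtain ⟨u, e, hu, hre⟩ := ih r.length hrlen r rfl hr
      refine ⟨u, k * (e + 1) - 1, hu, ?_⟩
      rw [hkr', hre, wpow_wpow]
      congr 1
      have : 1 ≤ k * (e + 1) := by nlinarith
      omega

lemma prim_decomp_unique {α : Type} {u v : List α} (hu : PrimitiveW u) (hv : PrimitiveW v)
    {d e : ℕ} (h : wpow u (d + 1) = wpow v (e + 1)) : u = v ∧ d = e := by
  have hp : 0 < u.length := List.length_pos_iff.mpr hu.1
  have hq : 0 < v.length := List.length_pos_iff.mpr hv.1
  set w := wpow u (d + 1) with hwdef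
  have hlen : w.length = (d + 1) * u.length := length_wpow u (d + 1)
  have hlen' : w.length = (e + 1) * v.length := by rw [h]; exact length_wpow v (e + 1)
  have hwpos : 0 < w.length := by rw [hlen]; positivity
  have hrotu : w.rotate u.length = w := rotate_wpow u (d + 1) (by omega)
  have hrotv : w.rotate v.length = w := by rw [h]; exact rotate_wpow v (e + 1) (by omega)
  set g := Nat.gcd u.length v.length with hgdef
  have hgu : g ∣ u.length := Nat.gcd_dvd_left _ _
  have hgv : g ∣ v.length := Nat.gcd_dvd_right _ _
  have hrotg : w.rotate g = w := rotate_gcd w _ _ hrotu hrotv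
  have hudvd : u.length ∣ w.length := ⟨d + 1, by rw [hlen]; ring⟩
  have hgdvd : g ∣ w.length := dvd_trans hgu hudvd
  have hgpos : 0 < g := Nat.gcd_pos_of_pos_left _ hp
  have hkey := eq_wpow_of_rotate g hgpos w.length w rfl hgdvd hrotg
  obtain ⟨r, hr⟩ : ∃ r, w.take g = r := ⟨_, rfl⟩
  rw [hr] at hkey
  have hrlen : r.length = g := by
    rw [← hr, List.length_take]
    exact min_eq_left (Nat.le_of_dvd hwpos hgdvd)
  have hu_take : u = w.take u.length := by
    rw [hwdef, wpow_succ, List.take_append_of_le_length le_rfl, List.take_length]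
  have hv_take : v = w.take v.length := by
    rw [h, wpow_succ, List.take_append_of_le_length le_rfl, List.take_length]
  have hdivle_u : u.length / g ≤ w.length / g :=
    Nat.div_le_div_right (Nat.le_of_dvd hwpos hudvd)
  have hvdvd : v.length ∣ w.length := ⟨e + 1, by rw [hlen']; ring⟩
  have hdivle_v : v.length / g ≤ w.length / g :=
    Nat.div_le_div_right (Nat.le_of_dvd hwpos hvdvd)
  have htw_u : (wpow r (w.length / g)).take (u.length / g * r.length) = wpow r (u.length / g) :=
    take_wpow r _ _ hdivle_u
  have htw_v : (wpow r (w.length / g)).take (v.length / g * r.length) = wpow r (v.length / g) :=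
    take_wpow r _ _ hdivle_v
  have hmul_u : u.length / g * g = u.length := Nat.div_mul_cancel hgu
  have hmul_v : v.length / g * g = v.length := Nat.div_mul_cancel hgv
  have hu_pow : u = wpow r (u.length / g) := by
    rw [← htw_u, hrlen, hmul_u, ← hkey]
    exact hu_take
  have hv_pow : v = wpow r (v.length / g) := by
    rw [← htw_v, hrlen, hmul_v, ← hkey]
    exact hv_take
  have hu1 : u.length / g = 1 := hu.2 _ r hu_pow
  have hv1 : v.length / g = 1 := hv.2 _ r hv_pow
  have hulg : u.length = g := by rw [← hmul_u, hu1, one_mul]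
  have hvlg : v.length = g := by rw [← hmul_v, hv1, one_mul]
  have huv : u = v := by
    rw [hu_pow, hu1, wpow_one, hv_pow, hv1, wpow_one]
  refine ⟨huv, ?_⟩
  have h2 : (d + 1) * u.length = (e + 1) * v.length := hlen.symm.trans hlen'
  rw [show v.length = u.length by rw [hulg, hvlg]] at h2
  have := Nat.eq_of_mul_eq_mul_right hp h2
  omega

lemma map_prod_wpow {α : Type} (c : α → ℝ≥0∞) (u : List α) (e : ℕ) :
    ((wpow u e).map c).prod = ((u.map c).prod) ^ e := by
  induction e with
  | zero => simp
  | succ e ih =>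
    rw [wpow_succ, List.map_append, List.prod_append, ih, pow_succ]
    ring

lemma ofFn_cast {α : Type} {m n : ℕ} (h : m = n) (f : Fin m → α) :
    List.ofFn (fun i : Fin n => f (Fin.cast h.symm i)) = List.ofFn f := by
  subst h
  rfl

lemma tsum_necklace (l : ℕ) (f : Necklace l → ℝ≥0∞) :
    ∑' ν : Necklace l, f ν
      = ∑' u : {u : List (Fin l → Fin 2) // PrimitiveW u},
          f (Quotient.mk (neckSetoid l) u) / (u.1.length : ℝ≥0∞) := by
  have fiber_sum : ∀ ν : Necklace l,
      (∑' w : {u : {u : List (Fin l → Fin 2) // PrimitiveW u} //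
          Quotient.mk (neckSetoid l) u = ν},
        f (Quotient.mk (neckSetoid l) w.1) / (w.1.1.length : ℝ≥0∞)) = f ν := by
    intro ν
    obtain ⟨u₀, hu₀⟩ : ∃ u₀, Quotient.mk (neckSetoid l) u₀ = ν := Quot.exists_rep ν
    set m := u₀.1.length with hm
    have hmpos : 0 < m := List.length_pos_iff.mpr u₀.2.1
    have hbij : Function.Bijective (fun k : Fin m =>
        (⟨⟨u₀.1.rotate k, prim_rotate u₀.2 k⟩, by
          rw [← hu₀]
          exact (Quotient.sound (⟨(k : ℕ), rfl⟩ :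
            (neckSetoid l).r u₀ ⟨u₀.1.rotate k, prim_rotate u₀.2 k⟩)).symm⟩ :
          {u : {u : List (Fin l → Fin 2) // PrimitiveW u} //
            Quotient.mk (neckSetoid l) u = ν})) := by
      constructor
      · intro a b hab
        have h1 : u₀.1.rotate a = u₀.1.rotate b := congrArg (fun z => z.1.1) hab
        exact Fin.ext (prim_rotate_inj u₀.2 a.isLt b.isLt h1)
      · rintro ⟨⟨v, hvp⟩, hv⟩
        have hequiv : (neckSetoid l).r u₀ ⟨v, hvp⟩ := Quotient.exact (hu₀.trans hv.symm)
        obtain ⟨k, hk⟩ := hequiv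
        refine ⟨⟨k % m, Nat.mod_lt _ hmpos⟩, Subtype.ext (Subtype.ext ?_)⟩
        show u₀.1.rotate (k % m) = v
        rw [hm, List.rotate_mod]
        exact hk.symm
    let e := Equiv.ofBijective _ hbij
    rw [← e.tsum_eq (fun w => f (Quotient.mk (neckSetoid l) w.1) / (w.1.1.length : ℝ≥0∞))]
    have hval : ∀ k : Fin m,
        f (Quotient.mk (neckSetoid l) (e k).1) / ((e k).1.1.length : ℝ≥0∞)
          = f ν / (m : ℝ≥0∞) := by
      intro k
      rw [(e k).2]
      congr 2
      show (u₀.1.rotate k).length = m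
      rw [List.length_rotate, hm]
    rw [tsum_congr hval, tsum_fintype, Finset.sum_const, Finset.card_univ, Fintype.card_fin,
      nsmul_eq_mul, ENNReal.mul_div_cancel (by exact_mod_cast hmpos.ne') (ENNReal.natCast_ne_top m)]
  rw [← (Equiv.sigmaFiberEquiv (fun u : {u : List (Fin l → Fin 2) // PrimitiveW u} =>
      (Quotient.mk (neckSetoid l) u : Necklace l))).tsum_eq
      (fun u => f (Quotient.mk (neckSetoid l) u) / (u.1.length : ℝ≥0∞)),
    ENNReal.tsum_sigma']
  exact (tsum_congr fiber_sum).symm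

end ContractionAux

/-- The key contraction identity: for `x₁, x₂ ∈ (0,1]` with `x₁ + x₂ ≤ 1` and
`y_1, …, y_l ∈ (0,1]`,
`Σ_{k ≥ 1} ((x₁+x₂)^l y₁⋯y_l)^k / k = Σ_{primitive necklaces ν} Σ_{d ≥ 1} ω(ν)^d / d`,
i.e. `-log(1 - (x₁+x₂)^l y₁⋯y_l) = Σ_ν -log(1 - ω(ν))`, where a necklace records, up
to cyclic shift, the choices of `x₁` or `x₂` at the `l` positions of each period. -/
theorem stmt5 (l : ℕ) (hl : 0 < l) (x : Fin 2 → ℝ) (hx : ∀ i, 0 < x i)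
    (hx1 : x 0 + x 1 ≤ 1) (y : Fin l → ℝ) (hy : ∀ j, 0 < y j ∧ y j ≤ 1) :
    (∑' k : ℕ, ENNReal.ofReal (((x 0 + x 1) ^ l * ∏ j, y j) ^ (k + 1) / (k + 1))) =
      ∑' ν : Necklace l, ∑' d : ℕ, ENNReal.ofReal ((nweight l x y ν) ^ (d + 1) / (d + 1)) := by
    classical
  set Y : ℝ := ∏ j, y j with hY
  have hY0 : 0 ≤ Y := Finset.prod_nonneg fun j _ => (hy j).1.le
  set fr : (Fin l → Fin 2) → ℝ := fun a => ∏ i, x (a i) with hfr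
  have hfr0 : ∀ a, 0 ≤ fr a := fun a => Finset.prod_nonneg fun i _ => (hx _).le
  set c : (Fin l → Fin 2) → ℝ≥0∞ := fun a => ENNReal.ofReal (fr a * Y) with hc
  have wt_eq : ∀ w : List (Fin l → Fin 2),
      (w.map c).prod = ENNReal.ofReal ((w.map fr).prod * Y ^ w.length) := by
    intro w
    induction w with
    | nil => simp
    | cons a w ih =>
      rw [List.map_cons, List.prod_cons, ih, List.map_cons, List.prod_cons, List.length_cons,
        hc]
      rw [← ENNReal.ofReal_mul (mul_nonneg (hfr0 a) hY0)]
      congr 1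
      ring
  have hfsum : ∑ a : Fin l → Fin 2, fr a = (x 0 + x 1) ^ l := by
    rw [hfr, ← Fintype.prod_sum (fun (_ : Fin l) (j : Fin 2) => x j)]
    simp [Fin.sum_univ_two]
  have hT : ∑ a : Fin l → Fin 2, c a = ENNReal.ofReal ((x 0 + x 1) ^ l * Y) := by
    rw [hc, ← ENNReal.ofReal_sum_of_nonneg (fun a _ => mul_nonneg (hfr0 a) hY0),
      ← Finset.sum_mul, hfsum]
  have hcast : ∀ k : ℕ, ENNReal.ofReal ((k : ℝ) + 1) = (k : ℝ≥0∞) + 1 := by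
    intro k
    rw [ENNReal.ofReal_add (by positivity) zero_le_one, ENNReal.ofReal_natCast,
      ENNReal.ofReal_one]
  have hterm : ∀ k : ℕ, ENNReal.ofReal (((x 0 + x 1) ^ l * Y) ^ (k + 1) / ((k : ℝ) + 1))
      = (∑ a : Fin l → Fin 2, c a) ^ (k + 1) * ((k : ℝ≥0∞) + 1)⁻¹ := by
    intro k
    have hA : (0 : ℝ) ≤ (x 0 + x 1) ^ l * Y := by
      have := (hx 0).le
      have := (hx 1).le
      positivity
    rw [ENNReal.ofReal_div_of_pos (by positivity), ENNReal.ofReal_pow hA, hcast, hT,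
      div_eq_mul_inv]
  set Φ : List (Fin l → Fin 2) → ℝ≥0∞ := fun w =>
    if w = [] then 0 else (w.map c).prod * ((w.length : ℝ≥0∞))⁻¹ with hΦ
  have step1 : ∀ k : ℕ, ENNReal.ofReal (((x 0 + x 1) ^ l * Y) ^ (k + 1) / ((k : ℝ) + 1))
      = ∑' f : Fin (k + 1) → (Fin l → Fin 2), Φ (List.ofFn f) := by
    intro k
    rw [hterm k, Fintype.sum_pow, Finset.sum_mul, tsum_fintype]
    refine Finset.sum_congr rfl fun f _ => ?_
    have hne : List.ofFn f ≠ [] := by simp [List.ofFn_eq_nil_iff]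
    rw [hΦ]
    simp only [if_neg hne]
    rw [List.map_ofFn, List.prod_ofFn, List.length_ofFn]
    push_cast
    rfl
  have hL1 : (∑' k : ℕ, ENNReal.ofReal (((x 0 + x 1) ^ l * ∏ j, y j) ^ (k + 1) / (↑k + 1)))
      = ∑' w : List (Fin l → Fin 2), Φ w := by
    rw [tsum_congr step1, ← ENNReal.tsum_sigma'
      (fun σ : Σ k : ℕ, (Fin (k + 1) → (Fin l → Fin 2)) => Φ (List.ofFn σ.2))]
    apply Function.Injective.tsum_eq
      (g := fun σ : Σ k : ℕ, (Fin (k + 1) → (Fin l → Fin 2)) => List.ofFn σ.2)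
    · rintro ⟨k, f⟩ ⟨k', f'⟩ hff
      have hlen : k = k' := by
        have h1 := congrArg List.length hff
        simpa [List.length_ofFn] using h1
      subst hlen
      exact congrArg (Sigma.mk k) (List.ofFn_injective hff)
    · intro w hw
      have hwne : w ≠ [] := by
        intro hnil
        rw [hΦ] at hw
        simp [hnil] at hw
      obtain ⟨n, hn⟩ : ∃ n, w.length = n + 1 :=
        ⟨w.length - 1, by have := List.length_pos_iff.mpr hwne; omega⟩
      refine ⟨⟨n, fun i => w.get (Fin.cast hn.symm i)⟩, ?_⟩
      show List.ofFn (fun i : Fin (n + 1) => w.get (Fin.cast hn.symm i)) = w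
      rw [ContractionAux.ofFn_cast hn w.get, List.ofFn_get]
  have hL2 : (∑' w : List (Fin l → Fin 2), Φ w)
      = ∑' p : {u : List (Fin l → Fin 2) // PrimitiveW u} × ℕ,
          Φ (ContractionAux.wpow p.1.1 (p.2 + 1)) := by
    symm
    apply Function.Injective.tsum_eq
      (g := fun p : {u : List (Fin l → Fin 2) // PrimitiveW u} × ℕ =>
        ContractionAux.wpow p.1.1 (p.2 + 1))
    · rintro ⟨⟨u, hu⟩, d⟩ ⟨⟨v, hv⟩, e⟩ hp
      obtain ⟨h1, h2⟩ := ContractionAux.prim_decomp_unique hu hv hp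
      subst h2
      exact Prod.ext (by exact Subtype.ext h1) rfl
    · intro w hw
      have hwne : w ≠ [] := by
        intro hnil
        rw [hΦ] at hw
        simp [hnil] at hw
      obtain ⟨u, e, hu, hwe⟩ := ContractionAux.exists_prim_decomp w.length w rfl hwne
      exact ⟨(⟨u, hu⟩, e), hwe.symm⟩
  have hΦval : ∀ (u : {u : List (Fin l → Fin 2) // PrimitiveW u}) (d : ℕ),
      Φ (ContractionAux.wpow u.1 (d + 1))
        = ((u.1.map c).prod) ^ (d + 1) * ((d : ℝ≥0∞) + 1)⁻¹ * ((u.1.length : ℝ≥0∞))⁻¹ := by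
    intro u d
    have hupos : 0 < u.1.length := List.length_pos_iff.mpr u.2.1
    have hlen : (ContractionAux.wpow u.1 (d + 1)).length = (d + 1) * u.1.length :=
      ContractionAux.length_wpow _ _
    have hne : ContractionAux.wpow u.1 (d + 1) ≠ [] :=
      List.length_pos_iff.mp (by rw [hlen]; exact Nat.mul_pos (Nat.succ_pos d) hupos)
    rw [hΦ]
    simp only [if_neg hne]
    rw [ContractionAux.map_prod_wpow, hlen, Nat.cast_mul,
      ENNReal.mul_inv (Or.inl (by exact_mod_cast Nat.succ_ne_zero d))
        (Or.inl (ENNReal.natCast_ne_top (d + 1)))]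
    push_cast
    ring
  have hnw : ∀ u : {u : List (Fin l → Fin 2) // PrimitiveW u},
      ENNReal.ofReal (nweight l x y (Quotient.mk (neckSetoid l) u)) = (u.1.map c).prod := by
    intro u
    rw [wt_eq]
    rfl
  have hnw0 : ∀ ν : Necklace l, 0 ≤ nweight l x y ν := by
    intro ν
    induction ν using Quotient.inductionOn with
    | _ u =>
      show 0 ≤ (u.1.map (fun a => ∏ i, x (a i))).prod * (∏ j, y j) ^ u.1.length
      apply mul_nonneg
      · apply List.prod_nonneg
        intro b hb
        obtain ⟨a, -, rfl⟩ := List.mem_map.mp hb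
        exact Finset.prod_nonneg fun i _ => (hx _).le
      · exact pow_nonneg (Finset.prod_nonneg fun j _ => (hy j).1.le) _
  have hR1 : (∑' ν : Necklace l, ∑' d : ℕ,
        ENNReal.ofReal ((nweight l x y ν) ^ (d + 1) / (↑d + 1)))
      = ∑' ν : Necklace l, ∑' d : ℕ,
          ENNReal.ofReal (nweight l x y ν) ^ (d + 1) * ((d : ℝ≥0∞) + 1)⁻¹ := by
    refine tsum_congr fun ν => tsum_congr fun d => ?_
    rw [ENNReal.ofReal_div_of_pos (by positivity), ENNReal.ofReal_pow (hnw0 ν), hcast,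
      div_eq_mul_inv]
  rw [hL1, hL2, hR1,
    ContractionAux.tsum_necklace l (fun ν => ∑' d : ℕ,
      ENNReal.ofReal (nweight l x y ν) ^ (d + 1) * ((d : ℝ≥0∞) + 1)⁻¹)]
  rw [ENNReal.tsum_prod']
  refine tsum_congr fun u => ?_
  rw [div_eq_mul_inv, ← ENNReal.tsum_mul_right]
  refine tsum_congr fun d => ?_
  rw [hΦval u d, hnw u]
end

section
/- Let G, H be directed weighted graphs with weights in (0,1], and let Ĥ be the simple graph obtained from H by merging, for each ordered pair of vertices (v,w), all edges from v to w into one edge whose weight is the (possibly infinite) sum of their weights. Then, extending the measurement to weights > 1 by ⟪F,G⟫ = Σ_{π ∈ C(F,G)} Σ_{k≥1} ω(π)^k/k, we have ⟪G, H⟫ = ⟪G, Ĥ⟫. -/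
open scoped ENNReal

open EGraph

namespace ListPrimAux
open List EGraph


variable {α : Type*}

theorem flat_len (k : ℕ) (r : List α) : ((replicate k r).flatten).length = k * r.length := by
  simp [length_flatten]

theorem flat_succ (k : ℕ) (r : List α) :
    (replicate (k+1) r).flatten = r ++ (replicate k r).flatten := by
  simp [replicate_succ]

theorem flat_succ' (k : ℕ) (r : List α) :
    (replicate (k+1) r).flatten = (replicate k r).flatten ++ r := by
  rw [replicate_succ', flatten_append]; simp

theorem flat_add (k j : ℕ) (r : List α) :
    (replicate (k+j) r).flatten = (replicate k r).flatten ++ (replicate j r).flatten := by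
  rw [replicate_add, flatten_append]

theorem flat_mul (k j : ℕ) (r : List α) :
    (replicate (k*j) r).flatten = (replicate k ((replicate j r).flatten)).flatten := by
  induction k with
  | zero => simp
  | succ k ih => rw [Nat.succ_mul, flat_add, ih, flat_succ']
    -- careful: succ_mul : (k+1)*j = k*j + j ; flat_add gives (rep (k*j)).flatten ++ (rep j).flatten
    -- RHS: flat_succ' : (replicate (k+1) R).flatten = (replicate k R).flatten ++ R

theorem take_flat (k : ℕ) (hk : 1 ≤ k) (r : List α) :
    ((replicate k r).flatten).take r.length = r := by
  obtain ⟨k, rfl⟩ := Nat.exists_eq_add_of_le hk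
  rw [Nat.add_comm, flat_succ, take_append_of_le_length le_rfl, take_length]

theorem take_flat_mul (k d : ℕ) (hd : d ≤ k) (r : List α) :
    ((replicate k r).flatten).take (d * r.length) = (replicate d r).flatten := by
  obtain ⟨c, rfl⟩ := Nat.exists_eq_add_of_le hd
  rw [flat_add, take_append_of_le_length (by rw [flat_len]), ← flat_len d r, take_length]

theorem rot_flat_block (k : ℕ) (hk : 1 ≤ k) (r : List α) :
    ((replicate k r).flatten).rotate r.length = (replicate k r).flatten := by
  obtain ⟨k, rfl⟩ := Nat.exists_eq_add_of_le hk
  rw [Nat.add_comm, rotate_eq_drop_append_take (by rw [flat_len]; nlinarith)]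
  conv_lhs => rw [flat_succ, take_append_of_le_length le_rfl, take_length,
    drop_append_of_le_length le_rfl, drop_length, nil_append]
  rw [← flat_succ']

theorem rot_flat_mul (k q : ℕ) (r : List α) :
    ((replicate k r).flatten).rotate (q * r.length) = (replicate k r).flatten := by
  rcases Nat.eq_zero_or_pos k with rfl | hk
  · simp
  induction q with
  | zero => simp
  | succ q ih => rw [Nat.succ_mul, ← rotate_rotate, ih, rot_flat_block k hk]

/-- (u ++ v)^(k+1) = u ++ (v ++ u)^k ++ v -/
theorem pow_append (u v : List α) (k : ℕ) :
    (replicate (k+1) (u ++ v)).flatten = u ++ (replicate k (v ++ u)).flatten ++ v := by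
  induction k with
  | zero => simp
  | succ k ih =>
    rw [flat_succ, ih, flat_succ]
    simp [append_assoc]

theorem rot_flat (k : ℕ) (hk : 1 ≤ k) (s : ℕ) (r : List α) (hs : s ≤ r.length) :
    ((replicate k r).flatten).rotate s = (replicate k (r.rotate s)).flatten := by
  obtain ⟨k, rfl⟩ := Nat.exists_eq_add_of_le hk
  rw [Nat.add_comm]
  rw [rotate_eq_drop_append_take (by rw [flat_len]; nlinarith)]
  rw [rotate_eq_drop_append_take hs]
  conv_lhs => rw [flat_succ, drop_append_of_le_length hs, take_append_of_le_length hs]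
  have := pow_append (r.drop s) (r.take s) k
  rw [take_append_drop] at this
  exact this.symm

theorem rot_flat' (k : ℕ) (hk : 1 ≤ k) (j : ℕ) (r : List α) (hr : r ≠ []) :
    ((replicate k r).flatten).rotate j = (replicate k (r.rotate (j % r.length))).flatten := by
  have hlen : 0 < r.length := length_pos_iff.2 hr
  conv_lhs => rw [(Nat.div_add_mod' j r.length).symm,
    ← rotate_rotate, rot_flat_mul]
  exact rot_flat k hk _ r (Nat.mod_lt _ hlen).le



theorem rot_add {l : List α} {a b : ℕ} (ha : l.rotate a = l) (hb : l.rotate b = l) :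
    l.rotate (a + b) = l := by rw [← rotate_rotate, ha, hb]

theorem rot_sub {l : List α} {a b : ℕ} (ha : l.rotate a = l) (hb : l.rotate b = l) :
    l.rotate (b - a) = l := by
  rcases le_or_gt a b with h | h
  · have : (l.rotate (b - a)).rotate a = l.rotate a := by
      rw [rotate_rotate, Nat.sub_add_cancel h, hb, ha]
    exact rotate_injective a this
  · rw [Nat.sub_eq_zero_of_le h.le, rotate_zero]

theorem rot_sub_mul {l : List α} {a b : ℕ} (ha : l.rotate a = l) (hb : l.rotate b = l)
    (m : ℕ) : l.rotate (b - a * m) = l := by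
  induction m with
  | zero => simpa using hb
  | succ m ih => rw [Nat.mul_succ, ← Nat.sub_sub]; exact rot_sub ha ih

theorem rot_gcd {l : List α} : ∀ (a : ℕ) {b : ℕ}, l.rotate a = l → l.rotate b = l →
    l.rotate (Nat.gcd a b) = l := by
  intro a
  induction a using Nat.strong_induction_on with
  | _ a IH =>
    intro b ha hb
    rcases Nat.eq_zero_or_pos a with rfl | hpos
    · simpa using hb
    · rw [Nat.gcd_rec]
      have hmod : l.rotate (b % a) = l := by
        have hX := Nat.div_add_mod b a
        have : b % a = b - a * (b / a) := by omega
        rw [this]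
        exact rot_sub_mul ha hb _
      exact IH (b % a) (Nat.mod_lt _ hpos) hmod ha

theorem getElem?_flat (c : ℕ) (t : List α) (ht : 0 < t.length) :
    ∀ i, i < c * t.length → ((replicate c t).flatten)[i]? = t[i % t.length]? := by
  induction c with
  | zero => intro i hi; omega
  | succ c ih =>
    intro i hi
    rw [Nat.succ_mul] at hi
    rw [flat_succ]
    rcases lt_or_ge i t.length with h | h
    · rw [getElem?_append_left h, Nat.mod_eq_of_lt h]
    · rw [getElem?_append_right h, ih (i - t.length) (by omega), Nat.mod_eq_sub_mod h]

theorem periodic_getElem? {l : List α} {g : ℕ} (hg : 0 < g) (hrot : l.rotate g = l) :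
    ∀ i, i < l.length → l[i]? = l[i % g]? := by
  intro i
  induction i using Nat.strong_induction_on with
  | _ i IH =>
    intro hi
    rcases lt_or_ge i g with h | h
    · rw [Nat.mod_eq_of_lt h]
    · have h1 : (l.rotate g)[i - g]? = l[(i - g + g) % l.length]? := by
        simpa using getElem?_rotate (n := g) (show i - g < l.length by omega)
      rw [hrot, Nat.sub_add_cancel h, Nat.mod_eq_of_lt hi] at h1
      rw [← h1, IH (i - g) (by omega) (by omega), Nat.mod_eq_sub_mod h]

theorem eq_flat_of_rotate {l : List α} {g : ℕ} (hg : 0 < g) (hdvd : g ∣ l.length)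
    (hrot : l.rotate g = l) :
    l = (replicate (l.length / g) (l.take g)).flatten := by
  rcases Nat.eq_zero_or_pos l.length with h0 | hpos
  · rw [length_eq_zero_iff.1 h0]; simp [h0]
  have hgn : g ≤ l.length := Nat.le_of_dvd hpos hdvd
  have htl : (l.take g).length = g := by rw [length_take]; omega
  have hlen : (l.length / g) * (l.take g).length = l.length := by
    rw [htl]; exact Nat.div_mul_cancel hdvd
  apply ext_getElem?
  intro i
  rcases lt_or_ge i l.length with hi | hi
  · rw [getElem?_flat _ _ (by omega) i (by omega), periodic_getElem? hg hrot i hi, htl]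
    have : i % g < g := Nat.mod_lt _ hg
    rw [getElem?_take, if_pos this]
  · rw [getElem?_eq_none hi, getElem?_eq_none (by rw [flat_len, htl, Nat.div_mul_cancel hdvd]; omega)]



theorem flat_rep_nil (k : ℕ) : ((List.replicate k ([] : List α)).flatten) = [] := by
  induction k <;> simp [*]

theorem not_prim_nil : ¬ PrimitiveList ([] : List α) := fun h => by
  simpa using h 0 [] (by simp)

theorem prim_ne_nil {l : List α} (h : PrimitiveList l) : l ≠ [] := fun e =>
  not_prim_nil (e ▸ h)

theorem exists_prim_root : ∀ (n : ℕ) (l : List α), l.length = n → l ≠ [] →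
    ∃ r k, 1 ≤ k ∧ PrimitiveList r ∧ l = (replicate k r).flatten := by
  intro n
  induction n using Nat.strong_induction_on with
  | _ n IH =>
    rintro l rfl hl
    by_cases hp : PrimitiveList l
    · exact ⟨l, 1, le_rfl, hp, by simp⟩
    · rw [PrimitiveList] at hp; push_neg at hp
      obtain ⟨k, r, hkr, hk1⟩ := hp
      have hk0 : k ≠ 0 := by rintro rfl; simp at hkr; exact hl hkr
      have hr : r ≠ [] := by rintro rfl; rw [flat_rep_nil] at hkr; exact hl hkr
      have hrp : 0 < r.length := length_pos_iff.2 hr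
      have hlt : r.length < l.length := by
        rw [hkr, flat_len]; have hk2 : 2 ≤ k := by omega
        nlinarith
      obtain ⟨s, j, hj1, hsp, hrs⟩ := IH r.length hlt r rfl hr
      refine ⟨s, k * j, ?_, hsp, by rw [hkr, hrs, ← flat_mul]⟩
      have : 0 < k * j := Nat.mul_pos (by omega) (by omega)
      omega


theorem prim_root_unique {r s : List α} {k j : ℕ} (hk : 1 ≤ k) (hj : 1 ≤ j)
    (hr : PrimitiveList r) (hs : PrimitiveList s)
    (h : (replicate k r).flatten = (replicate j s).flatten) : r = s ∧ k = j := by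
  obtain ⟨l, hl⟩ : ∃ l, l = (replicate k r).flatten := ⟨_, rfl⟩
  have hl2 : l = (replicate j s).flatten := hl.trans h
  have hrn : 0 < r.length := length_pos_iff.2 (prim_ne_nil hr)
  have hsn : 0 < s.length := length_pos_iff.2 (prim_ne_nil hs)
  have hna : l.length = k * r.length := by rw [hl, flat_len]
  have hnb : l.length = j * s.length := by rw [hl2, flat_len]
  have hlpos : 0 < l.length := by rw [hna]; nlinarith
  have hrotA : l.rotate r.length = l := by rw [hl]; exact rot_flat_block k hk r
  have hrotB : l.rotate s.length = l := by rw [hl2]; exact rot_flat_block j hj s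
  have hgpos : 0 < Nat.gcd r.length s.length := Nat.gcd_pos_of_pos_left _ hrn
  set g := Nat.gcd r.length s.length with hg
  have hga : g ∣ r.length := Nat.gcd_dvd_left _ _
  have hgb : g ∣ s.length := Nat.gcd_dvd_right _ _
  have hrotG : l.rotate g = l := rot_gcd _ hrotA hrotB
  have han : r.length ∣ l.length := ⟨k, by rw [hna]; ring⟩
  have hgn : g ∣ l.length := hga.trans han
  have hdec : l = (replicate (l.length / g) (l.take g)).flatten :=
    eq_flat_of_rotate hgpos hgn hrotG
  have hgle : g ≤ l.length := Nat.le_of_dvd hlpos hgn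
  have htg : (l.take g).length = g := by rw [length_take]; omega
  have key : ∀ (u : List α) (c : ℕ), 1 ≤ c → PrimitiveList u → l = (replicate c u).flatten →
      g ∣ u.length → u.length = g := by
    intro u c hc hu hlu hgu
    have huc : u = l.take u.length := by rw [hlu, take_flat c hc u]
    have hupos : 0 < u.length := length_pos_iff.2 (prim_ne_nil hu)
    have hule : u.length ≤ l.length := by
      rw [hlu, flat_len]; nlinarith
    have hdle : u.length / g ≤ l.length / g := Nat.div_le_div_right hule
    have hux : u = (replicate (u.length / g) (l.take g)).flatten := by
      calc u = l.take u.length := huc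
        _ = ((replicate (l.length / g) (l.take g)).flatten).take
              ((u.length / g) * (l.take g).length) := by
            rw [htg, Nat.div_mul_cancel hgu, ← hdec]
        _ = (replicate (u.length / g) (l.take g)).flatten := take_flat_mul _ _ hdle _
    have h5 : u.length / g = 1 := hu _ _ hux
    have h6 := Nat.div_mul_cancel hgu
    rw [h5, one_mul] at h6
    omega
  have ha : r.length = g := key r k hk hr hl hga
  have hb : s.length = g := key s j hj hs hl2 hgb
  have hrs : r = s := by
    have h1 : r = l.take r.length := by rw [hl, take_flat k hk r]
    have h2 : s = l.take s.length := by rw [hl2, take_flat j hj s]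
    rw [h1, h2, ha, hb]
  refine ⟨hrs, ?_⟩
  rw [hna, ha] at hnb
  rw [hb] at hnb
  exact Nat.eq_of_mul_eq_mul_right hgpos hnb

theorem prim_rotate {l : List α} (h : PrimitiveList l) (i : ℕ) : PrimitiveList (l.rotate i) := by
  intro k t hkt
  have hln : l ≠ [] := prim_ne_nil h
  have hrn : l.rotate i ≠ [] := by rw [Ne, rotate_eq_nil_iff]; exact hln
  rcases Nat.eq_zero_or_pos k with rfl | hk
  · simp only [replicate_zero, flatten_nil] at hkt; exact absurd hkt hrn
  have ht : t ≠ [] := by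
    rintro rfl; rw [flat_rep_nil] at hkt; exact hrn hkt
  have hback : l = (l.rotate i).rotate (l.length * (i + 1) - i) := by
    rw [rotate_rotate]
    have h1 : i ≤ l.length * (i + 1) := by
      have := length_pos_iff.2 hln; nlinarith
    have h2 : i + (l.length * (i + 1) - i) = l.length * (i + 1) := by omega
    rw [h2, rotate_length_mul]
  rw [hkt, rot_flat' k hk _ t ht] at hback
  exact h _ _ hback

theorem prim_rotate_inj_aux {l : List α} (h : PrimitiveList l) {i j : ℕ} (hij : i ≤ j)
    (hjl : j < l.length) (he : l.rotate i = l.rotate j) : i = j := by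
  have hn : 0 < l.length := length_pos_iff.2 (prim_ne_nil h)
  have h2 : l.rotate j = (l.rotate (j - i)).rotate i := by
    rw [rotate_rotate]; congr 1; omega
  have h3 : l.rotate (j - i) = l := rotate_injective i ((he.trans h2).symm)
  rcases Nat.eq_zero_or_pos (j - i) with h0 | hdpos
  · omega
  exfalso
  have hgpos : 0 < Nat.gcd (j - i) l.length := Nat.gcd_pos_of_pos_left _ hdpos
  have hgn : Nat.gcd (j - i) l.length ∣ l.length := Nat.gcd_dvd_right _ _
  have hdec := eq_flat_of_rotate hgpos hgn (rot_gcd _ h3 (rotate_length l))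
  have h1 : l.length / Nat.gcd (j - i) l.length = 1 := h _ _ hdec
  have h6 := Nat.div_mul_cancel hgn
  rw [h1, one_mul] at h6
  have : Nat.gcd (j - i) l.length ≤ j - i := Nat.le_of_dvd hdpos (Nat.gcd_dvd_left _ _)
  omega

theorem prim_rotate_inj {l : List α} (h : PrimitiveList l) {i j : ℕ} (hi : i < l.length)
    (hj : j < l.length) (he : l.rotate i = l.rotate j) : i = j := by
  rcases le_total i j with hij | hij
  · exact prim_rotate_inj_aux h hij hj he
  · exact (prim_rotate_inj_aux h hij hi he.symm).symm



def CycChain (R : α → α → Prop) (l : List α) : Prop :=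
  l.Chain' R ∧ ∀ h : l ≠ [], R (l.getLast h) (l.head h)


theorem cycChain_of_ne {R : α → α → Prop} {u v : List α} (hu : u ≠ []) (hv : v ≠ []) :
    CycChain R (u ++ v) ↔
      (u.Chain' R ∧ v.Chain' R ∧ R (u.getLast hu) (v.head hv) ∧ R (v.getLast hv) (u.head hu)) := by
  have huv : u ++ v ≠ [] := by simp [hu]
  unfold CycChain
  simp only [Chain']
  rw [isChain_append]
  simp only [getLast?_eq_getLast_of_ne_nil hu, head?_eq_head hv, Option.mem_def,
    Option.some.injEq, forall_eq']
  constructor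
  · rintro ⟨⟨h1, h2, h3⟩, h4⟩
    have h5 := h4 huv
    rw [getLast_append_of_ne_nil _ hv, head_append_of_ne_nil hu] at h5
    exact ⟨h1, h2, h3, h5⟩
  · rintro ⟨h1, h2, h3, h4⟩
    refine ⟨⟨h1, h2, h3⟩, fun h => ?_⟩
    rw [getLast_append_of_ne_nil _ hv, head_append_of_ne_nil hu]
    exact h4

theorem cycChain_append_comm {R : α → α → Prop} {u v : List α} :
    CycChain R (u ++ v) ↔ CycChain R (v ++ u) := by
  rcases eq_or_ne u [] with rfl | hu
  · simp
  rcases eq_or_ne v [] with rfl | hv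
  · simp
  rw [cycChain_of_ne hu hv, cycChain_of_ne hv hu]
  tauto

theorem cycChain_rotate {R : α → α → Prop} (l : List α) (i : ℕ) :
    CycChain R (l.rotate i) ↔ CycChain R l := by
  rw [rotate_eq_drop_append_take_mod, cycChain_append_comm, take_append_drop]

theorem head_flat {r : List α} (hr : r ≠ []) {k : ℕ} (hk : 1 ≤ k) (h) :
    ((replicate k r).flatten).head h = r.head hr := by
  obtain ⟨k, rfl⟩ : ∃ k', k = k' + 1 := ⟨k - 1, by omega⟩
  simp only [flat_succ]
  exact head_append_of_ne_nil hr

theorem getLast_flat {r : List α} (hr : r ≠ []) {k : ℕ} (hk : 1 ≤ k) (h) :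
    ((replicate k r).flatten).getLast h = r.getLast hr := by
  obtain ⟨k, rfl⟩ : ∃ k', k = k' + 1 := ⟨k - 1, by omega⟩
  simp only [flat_succ']
  exact getLast_append_of_ne_nil _ hr

theorem flat_ne_nil {r : List α} (hr : r ≠ []) {k : ℕ} (hk : 1 ≤ k) :
    (replicate k r).flatten ≠ [] := by
  rw [← length_pos_iff, flat_len]
  have := length_pos_iff.2 hr
  nlinarith

theorem cycChain_flat {R : α → α → Prop} {r : List α} (hr : r ≠ []) {k : ℕ} (hk : 1 ≤ k) :
    CycChain R ((replicate k r).flatten) ↔ CycChain R r := by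
  obtain ⟨k, rfl⟩ : ∃ k', k = k' + 1 := ⟨k - 1, by omega⟩
  induction k with
  | zero => simp [CycChain]
  | succ k ih =>
    have hkpos : (1:ℕ) ≤ k + 1 := by omega
    rw [flat_succ (k+1) r, cycChain_of_ne hr (flat_ne_nil hr hkpos)]
    rw [head_flat hr hkpos, getLast_flat hr hkpos]
    constructor
    · rintro ⟨h1, h2, h3, h4⟩
      exact ⟨h1, fun h => h3⟩
    · rintro ⟨h1, h2⟩
      have h4 := h2 hr
      exact ⟨h1, ((ih hkpos).2 ⟨h1, h2⟩).1, h4, h4⟩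


end ListPrimAux

namespace CircAux

open List ListPrimAux EGraph

variable {V : Type} [DecidableEq V]

abbrev PRel (G H : EGraph V) : (G.E ⊕ H.E) → (G.E ⊕ H.E) → Prop :=
  fun e f => ptgt G H e = psrc G H f ∧ e.isLeft ≠ f.isLeft

def WalkT (G H : EGraph V) : Type :=
  {l : List (G.E ⊕ H.E) // l ≠ [] ∧ CycChain (PRel G H) l}

noncomputable def walkSum (G H : EGraph V) : ℝ≥0∞ :=
  ∑' w : WalkT G H, (w.1.map (pw G H)).prod / (w.1.length : ℝ≥0∞)

noncomputable def rootL {α : Type*} (l : List α) (hl : l ≠ []) : List α :=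
  (exists_prim_root l.length l rfl hl).choose

noncomputable def rootK {α : Type*} (l : List α) (hl : l ≠ []) : ℕ :=
  (exists_prim_root l.length l rfl hl).choose_spec.choose

theorem root_spec {α : Type*} (l : List α) (hl : l ≠ []) :
    1 ≤ rootK l hl ∧ PrimitiveList (rootL l hl) ∧
      l = (replicate (rootK l hl) (rootL l hl)).flatten :=
  (exists_prim_root l.length l rfl hl).choose_spec.choose_spec

theorem root_eq {α : Type*} {l r : List α} {k : ℕ} (hl : l ≠ []) (hk : 1 ≤ k)
    (hr : PrimitiveList r) (h : l = (replicate k r).flatten) :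
    rootL l hl = r ∧ rootK l hl = k := by
  have hs := root_spec l hl
  exact prim_root_unique hs.1 hk hs.2.1 hr (hs.2.2.symm.trans h)

variable {G H : EGraph V}

def toCyc (l : List (G.E ⊕ H.E)) (hne : l ≠ []) (hcc : CycChain (PRel G H) l)
    (hp : PrimitiveList l) : {p : AltPath G H // p.IsOneCycle} :=
  ⟨⟨l, hne, hcc.1⟩, ⟨hcc.2 hne, hp⟩⟩

theorem ccQ (q : {p : AltPath G H // p.IsOneCycle}) : CycChain (PRel G H) q.1.edges :=
  ⟨q.1.chain, fun _ => q.2.1⟩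

noncomputable def rootCyc (w : WalkT G H) : {p : AltPath G H // p.IsOneCycle} :=
  toCyc (rootL w.1 w.2.1) (prim_ne_nil (root_spec w.1 w.2.1).2.1)
    (by
      have hs := root_spec w.1 w.2.1
      have hcc := w.2.2
      rw [hs.2.2] at hcc
      exact (cycChain_flat (prim_ne_nil hs.2.1) hs.1).1 hcc)
    (root_spec w.1 w.2.1).2.1

noncomputable def rootCirc (w : WalkT G H) : Circ G H :=
  Quotient.mk (cycSetoid G H) (rootCyc w)

theorem rootCirc_eq (w : WalkT G H) (q : {p : AltPath G H // p.IsOneCycle}) (i k : ℕ)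
    (hw : w.1 = (replicate (k + 1) (q.1.edges.rotate i)).flatten) :
    rootCirc w = Quotient.mk (cycSetoid G H) q := by
  have hprim : PrimitiveList (q.1.edges.rotate i) := prim_rotate q.2.2 i
  have hroot := root_eq w.2.1 (Nat.le_add_left 1 k) hprim hw
  apply Quotient.sound
  refine ⟨q.1.edges.length * (i + 1) - i, ?_⟩
  show q.1.edges = (rootL w.1 w.2.1).rotate _
  rw [hroot.1, rotate_rotate]
  have hm : 0 < q.1.edges.length := length_pos_iff.2 q.1.ne
  have hle : i ≤ q.1.edges.length * (i + 1) := by nlinarith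
  rw [show i + (q.1.edges.length * (i + 1) - i) = q.1.edges.length * (i + 1) by omega,
    rotate_length_mul]

noncomputable def fibWalk (q : {p : AltPath G H // p.IsOneCycle})
    (x : Fin q.1.edges.length × ℕ) : WalkT G H :=
  ⟨(replicate (x.2 + 1) (q.1.edges.rotate x.1)).flatten,
    flat_ne_nil (by rw [Ne, rotate_eq_nil_iff]; exact q.1.ne) (Nat.le_add_left 1 x.2),
    (cycChain_flat (by rw [Ne, rotate_eq_nil_iff]; exact q.1.ne) (Nat.le_add_left 1 x.2)).2
      ((cycChain_rotate _ _).2 (ccQ q))⟩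

noncomputable def fibMap (q : {p : AltPath G H // p.IsOneCycle})
    (x : Fin q.1.edges.length × ℕ) :
    {w : WalkT G H // rootCirc w = Quotient.mk (cycSetoid G H) q} :=
  ⟨fibWalk q x, rootCirc_eq (fibWalk q x) q x.1 x.2 rfl⟩

theorem fibMap_bijective (q : {p : AltPath G H // p.IsOneCycle}) :
    Function.Bijective (fibMap q) := by
  have hm : 0 < q.1.edges.length := length_pos_iff.2 q.1.ne
  constructor
  · rintro ⟨i, k⟩ ⟨i', k'⟩ he
    have hl : (replicate (k + 1) (q.1.edges.rotate i)).flatten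
        = (replicate (k' + 1) (q.1.edges.rotate i')).flatten :=
      congrArg (fun z => z.1.1) he
    have hlen := congrArg List.length hl
    rw [flat_len, flat_len, length_rotate, length_rotate] at hlen
    have hk : k = k' := by
      have := Nat.eq_of_mul_eq_mul_right hm hlen
      omega
    subst hk
    have hrot := (prim_root_unique (Nat.le_add_left 1 k) (Nat.le_add_left 1 k)
      (prim_rotate q.2.2 i) (prim_rotate q.2.2 i') hl).1
    have hi : (i : ℕ) = (i' : ℕ) := prim_rotate_inj q.2.2 i.2 i'.2 hrot
    simp [Prod.ext_iff, Fin.ext_iff, hi]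
  · rintro ⟨w, hw⟩
    obtain ⟨j, hj0⟩ := Quotient.exact hw
    have hj : q.1.edges = (rootL w.1 w.2.1).rotate j := hj0
    have hlen : (rootL w.1 w.2.1).length = q.1.edges.length := by
      rw [hj, length_rotate]
    have hinv : rootL w.1 w.2.1 =
        q.1.edges.rotate (((rootL w.1 w.2.1).length * (j + 1) - j) % q.1.edges.length) := by
      rw [rotate_mod]
      have h1 : (rootL w.1 w.2.1).rotate ((rootL w.1 w.2.1).length * (j + 1)) =
          rootL w.1 w.2.1 := rotate_length_mul _ _
      have hle : j ≤ (rootL w.1 w.2.1).length * (j + 1) := by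
        rw [hlen]; nlinarith
      conv_lhs => rw [← h1]
      rw [show (rootL w.1 w.2.1).length * (j + 1)
          = j + ((rootL w.1 w.2.1).length * (j + 1) - j) by omega, ← rotate_rotate, ← hj]
      congr 1
      omega
    refine ⟨⟨⟨((rootL w.1 w.2.1).length * (j + 1) - j) % q.1.edges.length,
      Nat.mod_lt _ hm⟩, rootK w.1 w.2.1 - 1⟩, ?_⟩
    apply Subtype.ext
    apply Subtype.ext
    show (replicate ((rootK w.1 w.2.1 - 1) + 1) (q.1.edges.rotate _)).flatten = w.1
    rw [Nat.sub_add_cancel (root_spec w.1 w.2.1).1, ← hinv]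
    exact (root_spec w.1 w.2.1).2.2.symm

theorem enn_aux (x c : ℝ≥0∞) (m : ℕ) (hm : m ≠ 0) (hc0 : c ≠ 0) (hct : c ≠ ⊤) :
    (m : ℝ≥0∞) * (x / (c * m)) = x / c := by
  have hm0 : (m : ℝ≥0∞) ≠ 0 := Nat.cast_ne_zero.2 hm
  have hmt : (m : ℝ≥0∞) ≠ ⊤ := ENNReal.natCast_ne_top m
  calc (m : ℝ≥0∞) * (x / (c * m)) = x * c⁻¹ * ((m : ℝ≥0∞) * (m : ℝ≥0∞)⁻¹) := by
        rw [div_eq_mul_inv, ENNReal.mul_inv (Or.inl hc0) (Or.inl hct)]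
        ring
    _ = x * c⁻¹ := by rw [ENNReal.mul_inv_cancel hm0 hmt, mul_one]
    _ = x / c := (div_eq_mul_inv x c).symm

theorem fiber_sum (q : {p : AltPath G H // p.IsOneCycle}) :
    ∑' w : {w : WalkT G H // rootCirc w = Quotient.mk (cycSetoid G H) q},
      (w.1.1.map (pw G H)).prod / (w.1.1.length : ℝ≥0∞)
    = mvalExt (cweight (Quotient.mk (cycSetoid G H) q)) := by
  have hm : 0 < q.1.edges.length := length_pos_iff.2 q.1.ne
  rw [← (Equiv.ofBijective _ (fibMap_bijective q)).tsum_eq]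
  have hval : ∀ x : Fin q.1.edges.length × ℕ,
      ((fibMap q x).1.1.map (pw G H)).prod / ((fibMap q x).1.1.length : ℝ≥0∞)
      = ((q.1.edges.map (pw G H)).prod) ^ (x.2 + 1)
        / (((x.2 + 1) * q.1.edges.length : ℕ) : ℝ≥0∞) := by
    intro x
    show (((replicate (x.2 + 1) (q.1.edges.rotate x.1)).flatten).map (pw G H)).prod
        / ((((replicate (x.2 + 1) (q.1.edges.rotate x.1)).flatten)).length : ℝ≥0∞) = _
    rw [map_flatten, map_replicate, prod_flatten, map_replicate, prod_replicate,
      map_rotate, ((q.1.edges.map (pw G H)).rotate_perm x.1).prod_eq,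
      flat_len, length_rotate]
  simp only [Equiv.ofBijective_apply]
  refine (tsum_congr hval).trans ?_
  rw [ENNReal.tsum_prod', tsum_fintype]
  show (∑ _b : Fin q.1.edges.length, ∑' k : ℕ,
      (q.1.edges.map (pw G H)).prod ^ (k + 1) / (((k + 1) * q.1.edges.length : ℕ) : ℝ≥0∞)) = _
  rw [Finset.sum_const, Finset.card_univ, Fintype.card_fin, nsmul_eq_mul,
    ← ENNReal.tsum_mul_left]
  have hW : cweight (Quotient.mk (cycSetoid G H) q) = (q.1.edges.map (pw G H)).prod := rfl
  rw [hW, mvalExt]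
  apply tsum_congr
  intro k
  have hcast : (((k + 1) * q.1.edges.length : ℕ) : ℝ≥0∞)
      = ((k : ℝ≥0∞) + 1) * (q.1.edges.length : ℝ≥0∞) := by push_cast; ring
  rw [hcast]
  exact enn_aux _ _ _ (by omega) (by simp) (by simp [ENNReal.add_eq_top])

theorem measExt_eq_walkSum (G H : EGraph V) : measExt G H = walkSum G H := by
  have h1 : walkSum G H = ∑' c : Circ G H, ∑' w : {w : WalkT G H // rootCirc w = c},
      (w.1.1.map (pw G H)).prod / (w.1.1.length : ℝ≥0∞) := by
    rw [walkSum, ← (Equiv.sigmaFiberEquiv (rootCirc (G := G) (H := H))).tsum_eq,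
      ENNReal.tsum_sigma']
    rfl
  rw [measExt, h1]
  refine tsum_congr fun c => ?_
  induction c using Quotient.inductionOn with
  | h q => exact (fiber_sum q).symm

end CircAux

namespace CollAux

open List ListPrimAux EGraph CircAux

section Lifts

variable {α β : Type*} (f : α → β)

theorem nilFiber_eq (x : {l : List α // l.map f = []}) : x = ⟨[], rfl⟩ := by
  obtain ⟨l, hl⟩ := x
  have := map_eq_nil_iff.1 hl
  subst this
  rfl

def consFiberEquiv (b : β) (L : List β) :
    {l : List α // l.map f = b :: L} ≃ ({a : α // f a = b} × {l : List α // l.map f = L}) where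
  toFun x :=
    ⟨⟨x.1.head (by intro h; have h2 := x.2; rw [h] at h2; simp at h2), by
        have hne : x.1.map f ≠ [] := by rw [x.2]; simp
        have h3 : (x.1.map f).head hne = b := by
          have h2 := x.2
          simp only [h2, head_cons]
        rw [head_map] at h3
        exact h3⟩,
      ⟨x.1.tail, by rw [map_tail, x.2, tail_cons]⟩⟩
  invFun p := ⟨p.1.1 :: p.2.1, by simp [p.1.2, p.2.2]⟩
  left_inv x := Subtype.ext (cons_head_tail _)
  right_inv p := rfl

theorem tsum_lift (wt : α → ℝ≥0∞) (wt' : β → ℝ≥0∞)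
    (hw : ∀ b, ∑' a : {a : α // f a = b}, wt a.1 = wt' b) :
    ∀ L : List β, ∑' l : {l : List α // l.map f = L}, (l.1.map wt).prod = (L.map wt').prod := by
  intro L
  induction L with
  | nil =>
    rw [tsum_eq_single (⟨[], rfl⟩ : {l : List α // l.map f = []})
      (fun b hb => absurd (nilFiber_eq f b) hb)]
    simp
  | cons b L ih =>
    rw [← (consFiberEquiv f b L).symm.tsum_eq]
    have hval : ∀ p : {a : α // f a = b} × {l : List α // l.map f = L},
        ((((consFiberEquiv f b L).symm p).1).map wt).prod
          = wt p.1.1 * ((p.2.1.map wt).prod) := fun p => by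
      show ((p.1.1 :: p.2.1).map wt).prod = _
      simp
    refine (tsum_congr hval).trans ?_
    rw [ENNReal.tsum_prod']
    calc (∑' a : {a : α // f a = b}, ∑' l : {l : List α // l.map f = L},
            wt a.1 * ((l.1.map wt).prod))
        = ∑' a : {a : α // f a = b}, wt a.1 * ∑' l : {l : List α // l.map f = L},
            ((l.1.map wt).prod) := tsum_congr fun a => ENNReal.tsum_mul_left
      _ = (∑' a : {a : α // f a = b}, wt a.1) * ∑' l : {l : List α // l.map f = L},
            ((l.1.map wt).prod) := ENNReal.tsum_mul_right
      _ = (List.map wt' (b :: L)).prod := by rw [hw b, ih]; simp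

end Lifts

variable {V : Type} [DecidableEq V] {G H : EGraph V}

def collMap (G H : EGraph V) : G.E ⊕ H.E → G.E ⊕ (collapse H).E :=
  Sum.map id (fun e => ⟨(H.src e, H.tgt e), e, rfl, rfl⟩)

theorem psrc_coll (e : G.E ⊕ H.E) : psrc G (collapse H) (collMap G H e) = psrc G H e := by
  cases e <;> rfl

theorem ptgt_coll (e : G.E ⊕ H.E) : ptgt G (collapse H) (collMap G H e) = ptgt G H e := by
  cases e <;> rfl

theorem isLeft_coll (e : G.E ⊕ H.E) : (collMap G H e).isLeft = e.isLeft := by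
  cases e <;> rfl

theorem prel_coll (e f : G.E ⊕ H.E) :
    PRel G (collapse H) (collMap G H e) (collMap G H f) ↔ PRel G H e f := by
  unfold PRel
  rw [psrc_coll, ptgt_coll, isLeft_coll, isLeft_coll]

theorem cc_coll (l : List (G.E ⊕ H.E)) :
    CycChain (PRel G (collapse H)) (l.map (collMap G H)) ↔ CycChain (PRel G H) l := by
  unfold CycChain
  simp only [Chain']
  rw [isChain_map]
  constructor
  · rintro ⟨h1, h2⟩
    refine ⟨h1.imp fun a b hab => (prel_coll a b).1 hab, fun h => ?_⟩
    have h3 := h2 (by simpa using h)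
    rw [getLast_map, head_map] at h3
    exact (prel_coll _ _).1 h3
  · rintro ⟨h1, h2⟩
    refine ⟨h1.imp fun a b hab => (prel_coll a b).2 hab, fun h => ?_⟩
    rw [getLast_map, head_map]
    exact (prel_coll _ _).2 (h2 (by simpa using h))

def edgeInv (v u : V) (hex : ∃ e : H.E, H.src e = ((v, u) : V × V).1 ∧ H.tgt e = ((v, u) : V × V).2) :
    {e : G.E ⊕ H.E // collMap G H e = Sum.inr ⟨(v, u), hex⟩} →
      {e : H.E // H.src e = v ∧ H.tgt e = u}
  | ⟨Sum.inl _, h⟩ => absurd h (by intro h'; cases h')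
  | ⟨Sum.inr e, h⟩ => ⟨e, by
      have h3 := congrArg Subtype.val (Sum.inr.inj h)
      exact ⟨congrArg Prod.fst h3, congrArg Prod.snd h3⟩⟩

def edgeFiberEquiv (v u : V)
    (hex : ∃ e : H.E, H.src e = ((v, u) : V × V).1 ∧ H.tgt e = ((v, u) : V × V).2) :
    {e : G.E ⊕ H.E // collMap G H e = Sum.inr ⟨(v, u), hex⟩}
      ≃ {e : H.E // H.src e = v ∧ H.tgt e = u} where
  toFun := edgeInv v u hex
  invFun y := ⟨Sum.inr y.1, by
    simp only [collMap, Sum.map_inr, Sum.inr.injEq]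
    obtain ⟨e, h1, h2⟩ := y; subst h1; subst h2; rfl⟩
  left_inv := by
    rintro ⟨e | e, he⟩
    · exact absurd he (by intro h'; cases h')
    · rfl
  right_inv y := rfl

theorem edge_sum (e' : G.E ⊕ (collapse H).E) :
    ∑' e : {e : G.E ⊕ H.E // collMap G H e = e'}, pw G H e.1 = pw G (collapse H) e' := by
  rcases e' with g | ⟨⟨v, u⟩, hex⟩
  · have huniq : ∀ x : {e : G.E ⊕ H.E // collMap G H e = Sum.inl g}, x = ⟨Sum.inl g, rfl⟩ := by
      rintro ⟨e | e, he⟩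
      · simp only [collMap, Sum.map_inl, id_eq, Sum.inl.injEq] at he
        cases he
        rfl
      · simp only [collMap, Sum.map_inr] at he
        exact absurd he (by intro h'; cases h')
    rw [tsum_eq_single (⟨Sum.inl g, rfl⟩ : {e : G.E ⊕ H.E // collMap G H e = Sum.inl g})
      (fun b hb => absurd (huniq b) hb)]
    rfl
  · rw [← (edgeFiberEquiv v u hex).symm.tsum_eq]
    exact tsum_congr fun y => rfl

def collWalk (G H : EGraph V) (w : WalkT G H) : WalkT G (collapse H) :=
  ⟨w.1.map (collMap G H), by simp [w.2.1], (cc_coll w.1).2 w.2.2⟩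

def liftEquiv (w' : WalkT G (collapse H)) :
    {w : WalkT G H // collWalk G H w = w'}
      ≃ {l : List (G.E ⊕ H.E) // l.map (collMap G H) = w'.1} where
  toFun w := ⟨w.1.1, congrArg Subtype.val w.2⟩
  invFun l := ⟨⟨l.1, by
      intro h
      have h2 := l.2
      rw [h] at h2
      exact w'.2.1 h2.symm,
    (cc_coll l.1).1 (by rw [l.2]; exact w'.2.2)⟩, Subtype.ext l.2⟩
  left_inv w := Subtype.ext (Subtype.ext rfl)
  right_inv l := rfl

theorem walkSum_coll (G H : EGraph V) : walkSum G H = walkSum G (collapse H) := by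
  rw [walkSum, ← (Equiv.sigmaFiberEquiv (collWalk G H)).tsum_eq, ENNReal.tsum_sigma']
  rw [show walkSum G (collapse H) = ∑' w' : WalkT G (collapse H),
    (w'.1.map (pw G (collapse H))).prod / (w'.1.length : ℝ≥0∞) from rfl]
  refine tsum_congr fun w' => ?_
  have hlen : ∀ w : {w : WalkT G H // collWalk G H w = w'},
      ((w.1.1.length : ℕ) : ℝ≥0∞) = (w'.1.length : ℝ≥0∞) := by
    intro w
    have h2 : w.1.1.map (collMap G H) = w'.1 := congrArg Subtype.val w.2
    have h3 := congrArg List.length h2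
    rw [length_map] at h3
    rw [h3]
  show (∑' w : {w : WalkT G H // collWalk G H w = w'},
      (w.1.1.map (pw G H)).prod / (w.1.1.length : ℝ≥0∞)) = _
  calc (∑' w : {w : WalkT G H // collWalk G H w = w'},
          (w.1.1.map (pw G H)).prod / (w.1.1.length : ℝ≥0∞))
      = ∑' w : {w : WalkT G H // collWalk G H w = w'},
          (w.1.1.map (pw G H)).prod * ((w'.1.length : ℝ≥0∞))⁻¹ :=
        tsum_congr fun w => by rw [div_eq_mul_inv, hlen w]
    _ = (∑' w : {w : WalkT G H // collWalk G H w = w'},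
          (w.1.1.map (pw G H)).prod) * ((w'.1.length : ℝ≥0∞))⁻¹ := ENNReal.tsum_mul_right
    _ = (∑' l : {l : List (G.E ⊕ H.E) // l.map (collMap G H) = w'.1},
          (l.1.map (pw G H)).prod) * ((w'.1.length : ℝ≥0∞))⁻¹ := by
        rw [← (liftEquiv w').symm.tsum_eq]
        exact congrArg (· * _) (tsum_congr fun l => rfl)
    _ = (w'.1.map (pw G (collapse H))).prod * ((w'.1.length : ℝ≥0∞))⁻¹ := by
        rw [tsum_lift (collMap G H) (pw G H) (pw G (collapse H)) edge_sum w'.1]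
    _ = (w'.1.map (pw G (collapse H))).prod / (w'.1.length : ℝ≥0∞) :=
        (div_eq_mul_inv _ _).symm

end CollAux

/-- The measurement is invariant under collapsing parallel edges: for weighted graphs
`G`, `H` with weights in `(0,1]`, and `Ĥ` the simple collapse of `H` (edge weights the
sums of the weights of parallel edges), extending the measurement by
`⟪F,G⟫ = Σ_{π ∈ C(F,G)} Σ_{k ≥ 1} ω(π)^k / k`, one has `⟪G, H⟫ = ⟪G, Ĥ⟫`. -/
theorem stmt6 {V : Type} [DecidableEq V] (G H : EGraph V)
    [Countable G.E] [Countable H.E]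
    (hwG : ∀ e, 0 < G.w e ∧ G.w e ≤ 1)
    (hwH : ∀ e, 0 < H.w e ∧ H.w e ≤ 1) :
    measExt G H = measExt G (collapse H) := by
  rw [CircAux.measExt_eq_walkSum, CircAux.measExt_eq_walkSum, CollAux.walkSum_coll]
end
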